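/- arXiv:2601.04193 — 5 statements merged into one kernel-verified Lean document; each statement's English description precedes it below -/
import Mathlib

section
/- Let G be a rooted tree and let d denote the shortest-path distance on its underlying undirected graph. For any two probability distributions f0, f1 on the vertex set V, the Wasserstein-1 distance satisfies W1(f0, f1) = Σ_{x∈V} |F1_x − F0_x|, where F0_x and F1_x denote the tails of f0 and f1 past x. -/
open scoped BigOperators
open Set

/-- A probability distribution on a finite set. -/
def IsProbDist {S : Type*} [Fintype S] (f : S → ℝ) : Prop :=
  (∀ s, 0 ≤ f s) ∧ ∑ s, f s = 1

/-- A coupling of two distributions on a finite set. -/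
def IsCoupling {V : Type*} [Fintype V] (f0 f1 : V → ℝ) (π : V → V → ℝ) : Prop :=
  (∀ x y, 0 ≤ π x y) ∧ (∀ x, ∑ y, π x y = f0 x) ∧ (∀ y, ∑ x, π x y = f1 y)

/-- Wasserstein-1 distance w.r.t. the shortest-path distance of a graph. -/
noncomputable def W1 {V : Type*} [Fintype V] (T : SimpleGraph V) (f0 f1 : V → ℝ) : ℝ :=
  sInf {c : ℝ | ∃ π : V → V → ℝ, IsCoupling f0 f1 π ∧
    c = ∑ x, ∑ y, (T.dist x y : ℝ) * π x y}

/-- The tail of `f` past `x` in a tree rooted at `r`: the sum of `f y` over the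
vertices `y` such that the unique path from `r` to `y` passes through `x`
(equivalently, `dist r x + dist x y = dist r y`). -/
noncomputable def tailSum {V : Type*} [Fintype V] (T : SimpleGraph V) (r : V)
    (f : V → ℝ) (x : V) : ℝ :=
  ∑ y, if T.dist r x + T.dist x y = T.dist r y then f y else 0

/-- The energy functional `I_q`. -/
noncomputable def Iq {E : Type*} [Fintype E] (q : ℝ) (v g : ℝ → E → ℝ) : ℝ :=
  (∫ t in (0:ℝ)..1, ∑ k, g t k * |v t k| ^ q) ^ (1 / q)

/-- A finite directed graph on vertex type `V` with edge type `E`. -/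
structure DiGraph (V E : Type*) where
  tail : E → V
  head : E → V
  ne : ∀ k, tail k ≠ head k

namespace DiGraph

variable {V E : Type*}

/-- The signed incidence matrix. -/
def incidence [DecidableEq V] (G : DiGraph V E) (x : V) (k : E) : ℝ :=
  if G.head k = x then 1 else if G.tail k = x then -1 else 0

/-- The underlying undirected simple graph. -/
def toSimpleGraph (G : DiGraph V E) : SimpleGraph V where
  Adj x y := x ≠ y ∧ ∃ k, (G.tail k = x ∧ G.head k = y) ∨ (G.tail k = y ∧ G.head k = x)
  symm := ⟨by rintro x y ⟨hne, k, h⟩; exact ⟨hne.symm, k, h.symm⟩⟩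
  loopless := ⟨by rintro x ⟨hne, -⟩; exact hne rfl⟩

/-- `G` is a rooted tree with root `r`: the underlying graph is a tree, and every
edge is oriented away from the root. -/
def IsRootedTree (G : DiGraph V E) (r : V) : Prop :=
  G.toSimpleGraph.IsTree ∧
  ∀ k, G.toSimpleGraph.dist r (G.head k) = G.toSimpleGraph.dist r (G.tail k) + 1

end DiGraph

/-- A solution `(f, v, g)` of the discrete transport equation on `[0,1]`. -/
structure TransportSolution {V E : Type*} [Fintype V] [Fintype E] [DecidableEq V]
    (G : DiGraph V E) where
  f : ℝ → V → ℝ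
  v : ℝ → E → ℝ
  g : ℝ → E → ℝ
  f_prob : ∀ t ∈ Icc (0:ℝ) 1, IsProbDist (f t)
  g_prob : ∀ t ∈ Icc (0:ℝ) 1, IsProbDist (g t)
  v_cont : ContinuousOn (fun t => v t) (Icc (0:ℝ) 1)
  g_cont : ContinuousOn (fun t => g t) (Icc (0:ℝ) 1)
  transport : ∀ x : V, ∀ t ∈ Icc (0:ℝ) 1,
    HasDerivWithinAt (fun s => f s x) (∑ k, G.incidence x k * v t k * g t k) (Icc (0:ℝ) 1) t

set_option linter.unusedSectionVars false
set_option linter.unusedVariables false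
set_option linter.unnecessarySeqFocus false
set_option maxHeartbeats 1000000

namespace TreeW1

variable {V : Type*} [Fintype V] [DecidableEq V] {T : SimpleGraph V}

def Anc (T : SimpleGraph V) (r z x : V) : Prop :=
  T.dist r z + T.dist z x = T.dist r x

noncomputable instance (T : SimpleGraph V) (r z x : V) : Decidable (Anc T r z x) :=
  Nat.decEq _ _

/-- The set of ancestors of `x`. -/
noncomputable def ancFinset (T : SimpleGraph V) (r x : V) : Finset V :=
  Finset.univ.filter (fun z => Anc T r z x)

lemma mem_ancFinset {T : SimpleGraph V} {r x z : V} :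
    z ∈ ancFinset T r x ↔ Anc T r z x := by simp [ancFinset]

lemma tailSum_anc (r : V) (f : V → ℝ) (x : V) :
    tailSum T r f x = ∑ y, if Anc T r x y then f y else 0 := rfl

-- from a.lean

/-- A walk whose length equals the distance is a path. -/
lemma isPath_of_length_eq_dist : ∀ {u v : V} (W : T.Walk u v),
    W.length = T.dist u v → W.IsPath := by
  intro u v W
  induction W with
  | nil => intro _; exact SimpleGraph.Walk.IsPath.nil
  | @cons u w v h W' ih =>
    intro hlen
    simp only [SimpleGraph.Walk.length_cons] at hlen
    obtain ⟨P, hP⟩ := (SimpleGraph.Walk.reachable W').exists_walk_length_eq_dist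
    have h2 : T.dist u v ≤ T.dist w v + 1 := by
      have := T.dist_le (SimpleGraph.Walk.cons h P)
      simpa [hP] using this
    have h1 : T.dist w v ≤ W'.length := T.dist_le W'
    have hW' : W'.length = T.dist w v := by omega
    have hpath := ih hW'
    refine SimpleGraph.Walk.IsPath.cons hpath ?_
    intro hmem
    have hle := T.dist_le (W'.dropUntil u hmem)
    have := SimpleGraph.Walk.length_dropUntil_le W' hmem
    omega

/-- In a tree, every path realizes the distance. -/
lemma length_eq_dist_of_isPath (hT : T.IsTree) {u v : V} (P : T.Walk u v)
    (hP : P.IsPath) : P.length = T.dist u v := by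
  obtain ⟨W, hW⟩ := (hT.isConnected.preconnected u v).exists_walk_length_eq_dist
  have hb : W.bypass.IsPath := W.bypass_isPath
  have hble : W.bypass.length ≤ W.length := W.length_bypass_le
  have hd : T.dist u v ≤ W.bypass.length := T.dist_le _
  have hbl : W.bypass.length = T.dist u v := by omega
  have : (⟨P, hP⟩ : T.Path u v) = ⟨W.bypass, hb⟩ := hT.IsAcyclic.path_unique _ _
  have : P = W.bypass := congrArg Subtype.val this
  rw [this, hbl]

lemma anc_of_mem_support (hT : T.IsTree) {u v z : V} (W : T.Walk u v)
    (hW : W.length = T.dist u v) (hz : z ∈ W.support) :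
    T.dist u z + T.dist z v = T.dist u v := by
  have hsplit := W.take_spec hz
  have hlen : (W.takeUntil z hz).length + (W.dropUntil z hz).length = W.length := by
    rw [← SimpleGraph.Walk.length_append, hsplit]
  have h1 := T.dist_le (W.takeUntil z hz)
  have h2 := T.dist_le (W.dropUntil z hz)
  have h3 := hT.isConnected.dist_triangle (u := u) (v := z) (w := v)
  omega

lemma mem_support_of_anc (hT : T.IsTree) {u v z : V}
    (h : T.dist u z + T.dist z v = T.dist u v) (P : T.Walk u v) (hP : P.IsPath) :
    z ∈ P.support := by
  obtain ⟨W1, hW1⟩ := (hT.isConnected.preconnected u z).exists_walk_length_eq_dist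
  obtain ⟨W2, hW2⟩ := (hT.isConnected.preconnected z v).exists_walk_length_eq_dist
  have hlen : (W1.append W2).length = T.dist u v := by
    rw [SimpleGraph.Walk.length_append, hW1, hW2, h]
  have hpath := isPath_of_length_eq_dist _ hlen
  have : (⟨P, hP⟩ : T.Path u v) = ⟨W1.append W2, hpath⟩ := hT.IsAcyclic.path_unique _ _
  have hPe : P = W1.append W2 := congrArg Subtype.val this
  rw [hPe, SimpleGraph.Walk.mem_support_append_iff]
  exact Or.inl W1.end_mem_support



-- from b.lean
lemma exists_path (hT : T.IsTree) (u v : V) :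
    ∃ P : T.Walk u v, P.IsPath ∧ P.length = T.dist u v := by
  obtain ⟨W, hW⟩ := (hT.isConnected.preconnected u v).exists_walk_length_eq_dist
  exact ⟨W.bypass, W.bypass_isPath, length_eq_dist_of_isPath hT _ W.bypass_isPath⟩

lemma concat_isPath (hT : T.IsTree) {z u v : V} (P : T.Walk z u) (hP : P.IsPath)
    (hadj : T.Adj u v) (hv : v ∉ P.support) : (P.concat hadj).IsPath := by
  rw [← SimpleGraph.Walk.isPath_reverse_iff, SimpleGraph.Walk.reverse_concat]
  refine SimpleGraph.Walk.IsPath.cons hP.reverse ?_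
  simpa using hv

lemma adj_dist_ne (hT : T.IsTree) {u v : V} (hadj : T.Adj u v) (z : V) :
    T.dist z u ≠ T.dist z v := by
  intro he
  obtain ⟨P, hP, hPl⟩ := exists_path hT z u
  by_cases hm : v ∈ P.support
  · have h1 := anc_of_mem_support hT P hPl hm
    have : T.dist v u = 0 := by omega
    exact hadj.ne' ((hT.isConnected.dist_eq_zero_iff).mp this)
  · have hQ : (P.concat hadj).IsPath := concat_isPath hT P hP hadj hm
    have hQl := length_eq_dist_of_isPath hT _ hQ
    rw [SimpleGraph.Walk.length_concat, hPl] at hQl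
    omega

lemma dist_adj (hT : T.IsTree) {u v : V} (hadj : T.Adj u v) : T.dist u v = 1 :=
  SimpleGraph.dist_eq_one_iff_adj.mpr hadj

lemma adj_dist_cases (hT : T.IsTree) (r : V) {u v : V} (hadj : T.Adj u v) :
    T.dist r v = T.dist r u + 1 ∨ T.dist r u = T.dist r v + 1 := by
  have h1 : T.dist r v ≤ T.dist r u + T.dist u v := hT.isConnected.dist_triangle
  have h2 : T.dist r u ≤ T.dist r v + T.dist v u := hT.isConnected.dist_triangle
  have h3 := dist_adj hT hadj
  have h4 := dist_adj hT hadj.symm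
  have h5 := adj_dist_ne hT hadj r
  omega

lemma anc_refl (T : SimpleGraph V) (r x : V) : Anc T r x x := by
  simp [Anc, SimpleGraph.dist_self]

lemma anc_trans (hT : T.IsTree) {r a b c : V} (h1 : Anc T r a b) (h2 : Anc T r b c) :
    Anc T r a c := by
  unfold Anc at *
  have t1 : T.dist a c ≤ T.dist a b + T.dist b c := hT.isConnected.dist_triangle
  have t2 : T.dist r c ≤ T.dist r a + T.dist a c := hT.isConnected.dist_triangle
  omega

lemma anc_adj (hT : T.IsTree) {r u v : V} (hadj : T.Adj u v)
    (hd : T.dist r v = T.dist r u + 1) : Anc T r u v := by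
  unfold Anc; rw [dist_adj hT hadj]; omega

/-- Ancestors of a child `v` of `u`: those of `u`, plus `v` itself. -/
lemma anc_child_iff (hT : T.IsTree) {r u v : V} (hadj : T.Adj u v)
    (hd : T.dist r v = T.dist r u + 1) (z : V) :
    Anc T r z v ↔ (Anc T r z u ∨ z = v) := by
  constructor
  · intro h
    by_cases hzv : z = v
    · exact Or.inr hzv
    obtain ⟨P, hP, hPl⟩ := exists_path hT r u
    have hvP : v ∉ P.support := by
      intro hm
      have := anc_of_mem_support hT P hPl hm
      have := dist_adj hT hadj.symm
      omega
    have hQ : (P.concat hadj).IsPath := concat_isPath hT P hP hadj hvP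
    have hQl : (P.concat hadj).length = T.dist r v := by
      rw [SimpleGraph.Walk.length_concat, hPl, hd]
    have hzQ : z ∈ (P.concat hadj).support := mem_support_of_anc hT h _ hQ
    rw [SimpleGraph.Walk.support_concat, List.mem_append] at hzQ
    rcases hzQ with hzP | hzv'
    · exact Or.inl (anc_of_mem_support hT P hPl hzP)
    · simp at hzv'; exact absurd hzv' hzv
  · rintro (h | rfl)
    · exact anc_trans hT h (anc_adj hT hadj hd)
    · exact anc_refl T r z

lemma exists_neighbor (hT : T.IsTree) {u v : V} (hne : u ≠ v) :
    ∃ w, T.Adj w v ∧ T.dist u w + 1 = T.dist u v := by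
  obtain ⟨W, hW⟩ := (hT.isConnected.preconnected u v).exists_walk_length_eq_dist
  have hpos : 0 < T.dist u v := hT.isConnected.pos_dist_of_ne hne
  rcases hrev : W.reverse with _ | ⟨hadj, W''⟩
  · exfalso
    have : W.length = 0 := by
      have := congrArg SimpleGraph.Walk.length hrev
      simpa using this
    omega
  · rename_i w
    refine ⟨w, hadj.symm, ?_⟩
    have hlen : W''.length + 1 = W.length := by
      have := congrArg SimpleGraph.Walk.length hrev
      simpa using this.symm
    have h1 : T.dist w u ≤ W''.length := T.dist_le W''
    have h2 : T.dist u v ≤ T.dist u w + T.dist w v := hT.isConnected.dist_triangle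
    have h3 : T.dist w v = 1 := dist_adj hT hadj.symm
    have h4 : T.dist u w = T.dist w u := SimpleGraph.dist_comm
    omega



-- from c.lean
/-- The set of ancestors of `x`. -/
lemma anc_eq_of_dist_le (hT : T.IsTree) {r z x : V} (h : Anc T r z x)
    (hd : T.dist r x ≤ T.dist r z) : z = x := by
  unfold Anc at h
  have : T.dist z x = 0 := by omega
  exact (hT.isConnected.dist_eq_zero_iff).mp this

lemma exists_parent (hT : T.IsTree) {r x : V} (hx : x ≠ r) :
    ∃ p, T.Adj p x ∧ T.dist r p + 1 = T.dist r x := by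
  obtain ⟨p, h1, h2⟩ := exists_neighbor hT (Ne.symm hx)
  exact ⟨p, h1, h2⟩

lemma anc_root (hT : T.IsTree) {r z : V} (h : Anc T r z r) : z = r := by
  unfold Anc at h
  rw [SimpleGraph.dist_self] at h
  have h2 : T.dist r z = 0 := by omega
  exact ((hT.isConnected.dist_eq_zero_iff).mp h2).symm

lemma card_ancFinset (hT : T.IsTree) (r : V) : ∀ (n : ℕ) (x : V), T.dist r x = n →
    (ancFinset T r x).card = T.dist r x + 1 := by
  intro n
  induction n with
  | zero =>
    intro x hx
    obtain rfl : r = x := (hT.isConnected.dist_eq_zero_iff).mp hx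
    have : ancFinset T r r = {r} := by
      ext z
      simp only [mem_ancFinset, Finset.mem_singleton]
      constructor
      · exact anc_root hT
      · rintro rfl; exact anc_refl T z z
    rw [this, SimpleGraph.dist_self]; simp
  | succ n ih =>
    intro x hx
    have hxr : x ≠ r := by
      intro h; subst h; rw [SimpleGraph.dist_self] at hx; omega
    obtain ⟨p, hadj, hdp⟩ := exists_parent hT hxr
    have hdp' : T.dist r p = n := by omega
    have hset : ancFinset T r x = insert x (ancFinset T r p) := by
      ext z
      simp only [mem_ancFinset, Finset.mem_insert]
      rw [anc_child_iff hT hadj (by omega)]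
      tauto
    have hnotmem : x ∉ ancFinset T r p := by
      rw [mem_ancFinset]
      intro h
      have := anc_eq_of_dist_le hT h (by omega)
      subst this; omega
    rw [hset, Finset.card_insert_of_notMem hnotmem, ih p hdp', hx, hdp']

lemma anc_total (hT : T.IsTree) (r : V) : ∀ (n : ℕ) (y : V), T.dist r y = n →
    ∀ z z', Anc T r z y → Anc T r z' y → (Anc T r z z' ∨ Anc T r z' z) := by
  intro n
  induction n with
  | zero =>
    intro y hy z z' hz hz'
    obtain rfl : r = y := (hT.isConnected.dist_eq_zero_iff).mp hy
    rw [anc_root hT hz, anc_root hT hz']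
    exact Or.inl (anc_refl T r r)
  | succ n ih =>
    intro y hy z z' hz hz'
    have hyr : y ≠ r := by
      intro h; subst h; rw [SimpleGraph.dist_self] at hy; omega
    obtain ⟨p, hadj, hdp⟩ := exists_parent hT hyr
    by_cases h1 : z = y
    · subst h1; exact Or.inr hz'
    by_cases h2 : z' = y
    · subst h2; exact Or.inl hz
    rw [anc_child_iff hT hadj (by omega)] at hz hz'
    exact ih p (by omega) z z' (hz.resolve_right h1) (hz'.resolve_right h2)

/-- Meet (deepest common ancestor) lemma. -/
lemma meet (hT : T.IsTree) (r : V) : ∀ (n : ℕ) (x y : V), T.dist x y = n →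
    ∃ m, Anc T r m x ∧ Anc T r m y ∧
      (ancFinset T r x ∩ ancFinset T r y = ancFinset T r m) ∧
      T.dist m x + T.dist m y = n := by
  intro n
  induction n using Nat.strong_induction_on with
  | _ n IH =>
  intro x y hxy
  by_cases hxAy : Anc T r x y
  · refine ⟨x, anc_refl T r x, hxAy, ?_, ?_⟩
    · apply Finset.inter_eq_left.mpr
      intro z hz
      rw [mem_ancFinset] at *
      exact anc_trans hT hz hxAy
    · rw [SimpleGraph.dist_self]; omega
  by_cases hyAx : Anc T r y x
  · refine ⟨y, hyAx, anc_refl T r y, ?_, ?_⟩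
    · apply Finset.inter_eq_right.mpr
      intro z hz
      rw [mem_ancFinset] at *
      exact anc_trans hT hz hyAx
    · rw [SimpleGraph.dist_self, SimpleGraph.dist_comm]; omega
  have hne : x ≠ y := by
    intro h; subst h; exact hxAy (anc_refl T r x)
  have hn0 : n ≠ 0 := by
    intro h; subst h
    exact hne ((hT.isConnected.dist_eq_zero_iff).mp hxy)
  obtain ⟨y₁, hadj, hd1⟩ := exists_neighbor hT hne
  have hxy₁ : T.dist x y₁ = n - 1 := by omega
  rcases adj_dist_cases hT r hadj with hca | hcb
  · -- y₁ is the parent of y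
    obtain ⟨m, hmx, hmy₁, hint, hsum⟩ := IH (n-1) (by omega) x y₁ hxy₁
    have hy₁y : Anc T r y₁ y := anc_adj hT hadj hca
    have hmy : Anc T r m y := anc_trans hT hmy₁ hy₁y
    have hdmy : T.dist m y = T.dist m y₁ + 1 := by
      have t1 : T.dist m y ≤ T.dist m y₁ + T.dist y₁ y := hT.isConnected.dist_triangle
      have t2 : T.dist r y ≤ T.dist r m + T.dist m y := hT.isConnected.dist_triangle
      have t3 := dist_adj hT hadj
      unfold Anc at hmy₁
      omega
    refine ⟨m, hmx, hmy, ?_, by omega⟩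
    ext z
    simp only [Finset.mem_inter, mem_ancFinset] at *
    constructor
    · rintro ⟨hzx, hzy⟩
      rw [anc_child_iff hT hadj hca] at hzy
      rcases hzy with hzy₁ | rfl
      · have : z ∈ ancFinset T r x ∩ ancFinset T r y₁ := by
          simp only [Finset.mem_inter, mem_ancFinset]; exact ⟨hzx, hzy₁⟩
        rw [hint, mem_ancFinset] at this; exact this
      · exact absurd hzx hyAx
    · intro hzm
      have : z ∈ ancFinset T r x ∩ ancFinset T r y₁ := by
        rw [hint, mem_ancFinset]; exact hzm
      simp only [Finset.mem_inter, mem_ancFinset] at this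
      exact ⟨this.1, anc_trans hT this.2 hy₁y⟩
  · -- y₁ is a child of y : impossible branch
    exfalso
    obtain ⟨m, hmx, hmy₁, hint, hsum⟩ := IH (n-1) (by omega) x y₁ hxy₁
    by_cases hmy₁eq : m = y₁
    · subst hmy₁eq
      have hyy₁ : Anc T r y m := anc_adj hT hadj.symm hcb
      exact hyAx (anc_trans hT hyy₁ hmx)
    · have hmy : Anc T r m y := by
        have := (anc_child_iff hT hadj.symm hcb m).mp hmy₁
        tauto
      have hdmy : T.dist m y₁ = T.dist m y + 1 := by
        unfold Anc at hmy hmy₁; omega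
      have t1 : T.dist x y ≤ T.dist x m + T.dist m y := hT.isConnected.dist_triangle
      have t2 : T.dist x m = T.dist m x := SimpleGraph.dist_comm
      omega



-- from d.lean
lemma dist_eq_sum_abs (hT : T.IsTree) (r x y : V) :
    (T.dist x y : ℝ) = ∑ z, |(if Anc T r z y then (1:ℝ) else 0)
      - (if Anc T r z x then (1:ℝ) else 0)| := by
  obtain ⟨m, hmx, hmy, hint, hsum⟩ := meet hT r (T.dist x y) x y rfl
  have hpt : ∀ z, |(if Anc T r z y then (1:ℝ) else 0) - (if Anc T r z x then (1:ℝ) else 0)|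
      = (if Anc T r z x then (1:ℝ) else 0) + (if Anc T r z y then (1:ℝ) else 0)
        - 2 * (if Anc T r z x ∧ Anc T r z y then (1:ℝ) else 0) := by
    intro z
    by_cases h1 : Anc T r z x <;> by_cases h2 : Anc T r z y <;>
      simp [h1, h2] <;> norm_num
  rw [Finset.sum_congr rfl (fun z _ => hpt z)]
  rw [Finset.sum_sub_distrib, Finset.sum_add_distrib, ← Finset.mul_sum]
  have e1 : ∑ z, (if Anc T r z x then (1:ℝ) else 0) = ((ancFinset T r x).card : ℝ) := by
    rw [Finset.sum_boole]; congr 1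
  have e2 : ∑ z, (if Anc T r z y then (1:ℝ) else 0) = ((ancFinset T r y).card : ℝ) := by
    rw [Finset.sum_boole]; congr 1
  have e3 : ∑ z, (if Anc T r z x ∧ Anc T r z y then (1:ℝ) else 0)
      = ((ancFinset T r m).card : ℝ) := by
    rw [Finset.sum_boole]
    congr 1
    rw [← hint]
    congr 1
    ext z
    simp [ancFinset, Finset.mem_filter, Finset.mem_inter]
  rw [e1, e2, e3]
  have c1 := card_ancFinset hT r (T.dist r x) x rfl
  have c2 := card_ancFinset hT r (T.dist r y) y rfl
  have c3 := card_ancFinset hT r (T.dist r m) m rfl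
  unfold Anc at hmx hmy
  have key : (ancFinset T r x).card + (ancFinset T r y).card
      = T.dist x y + 2 * (ancFinset T r m).card := by omega
  have := congrArg (fun n : ℕ => (n : ℝ)) key
  push_cast at this
  linarith

/-- Existence and uniqueness of the child of `x` towards a strict descendant `y`. -/
lemma exists_unique_child (hT : T.IsTree) {r x y : V} (hxy : Anc T r x y) (hne : y ≠ x) :
    ∃! c, (T.dist x c = 1 ∧ T.dist r c = T.dist r x + 1) ∧ Anc T r c y := by
  obtain ⟨c, hadj, hd⟩ := exists_neighbor hT hne
  have hdxy : 0 < T.dist x y := by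
    rw [SimpleGraph.dist_comm] at hd ⊢; omega
  have hxc : T.dist x c = 1 := dist_adj hT hadj.symm
  have hcy : T.dist c y = T.dist x y - 1 := by
    rw [SimpleGraph.dist_comm (u := c)]
    rw [SimpleGraph.dist_comm (u := x)]
    omega
  unfold Anc at hxy
  have hrc : T.dist r c = T.dist r x + 1 := by
    rcases adj_dist_cases hT r hadj.symm with h | h
    · exact h
    · exfalso
      have t1 : T.dist r y ≤ T.dist r c + T.dist c y := hT.isConnected.dist_triangle
      omega
  have hAnccy : Anc T r c y := by unfold Anc; omega
  refine ⟨c, ⟨⟨hxc, hrc⟩, hAnccy⟩, ?_⟩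
  rintro c' ⟨⟨hxc', hrc'⟩, hAc'y⟩
  rcases anc_total hT r (T.dist r y) y rfl c' c hAc'y hAnccy with h | h
  · exact anc_eq_of_dist_le hT h (by omega)
  · exact (anc_eq_of_dist_le hT h (by omega)).symm

lemma child_anc_imp (hT : T.IsTree) {r x y c : V}
    (h1 : T.dist x c = 1) (h2 : T.dist r c = T.dist r x + 1) (hcy : Anc T r c y) :
    Anc T r x y ∧ y ≠ x := by
  have hxc : Anc T r x c := by unfold Anc; omega
  refine ⟨anc_trans hT hxc hcy, ?_⟩
  rintro rfl
  unfold Anc at hcy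
  omega

/-- Splitting a sum over the strict subtree below `x` by the children of `x`. -/
lemma sum_subtree_children (hT : T.IsTree) (r : V) (f : V → ℝ) (x : V) :
    ∑ y, (if Anc T r x y ∧ y ≠ x then f y else 0)
      = ∑ c, (if T.dist x c = 1 ∧ T.dist r c = T.dist r x + 1 then
          (∑ y, if Anc T r c y then f y else 0) else 0) := by
  have step1 : ∀ c, (if T.dist x c = 1 ∧ T.dist r c = T.dist r x + 1 then
      (∑ y, if Anc T r c y then f y else 0) else 0)
      = ∑ y, (if (T.dist x c = 1 ∧ T.dist r c = T.dist r x + 1) ∧ Anc T r c y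
          then f y else 0) := by
    intro c
    by_cases h : T.dist x c = 1 ∧ T.dist r c = T.dist r x + 1
    · simp only [h, if_true, true_and]
    · rw [if_neg h]
      exact (Finset.sum_eq_zero (fun y _ => by rw [if_neg (fun hc => h hc.1)])).symm
  rw [Finset.sum_congr rfl (fun c _ => step1 c), Finset.sum_comm]
  apply Finset.sum_congr rfl
  intro y _
  by_cases h : Anc T r x y ∧ y ≠ x
  · rw [if_pos h]
    obtain ⟨c₀, hc₀, huniq⟩ := exists_unique_child hT h.1 h.2
    have hs : ∑ c, (if (T.dist x c = 1 ∧ T.dist r c = T.dist r x + 1) ∧ Anc T r c y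
        then f y else 0)
        = if (T.dist x c₀ = 1 ∧ T.dist r c₀ = T.dist r x + 1) ∧ Anc T r c₀ y
          then f y else 0 :=
      Finset.sum_eq_single_of_mem c₀ (Finset.mem_univ c₀)
        (fun c _ hcne => by rw [if_neg]; intro hc; exact hcne (huniq c hc))
    rw [hs, if_pos hc₀]
  · rw [if_neg h]
    symm
    apply Finset.sum_eq_zero
    intro c _
    rw [if_neg]
    rintro ⟨⟨h1, h2⟩, h3⟩
    exact h (child_anc_imp hT h1 h2 h3)



-- from e.lean
lemma tailSum_root (r : V) (f : V → ℝ) : tailSum T r f r = ∑ y, f y := by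
  rw [tailSum_anc]
  apply Finset.sum_congr rfl
  intro y _
  rw [if_pos]
  unfold Anc
  rw [SimpleGraph.dist_self]
  omega

lemma tailSum_split (r : V) (f : V → ℝ) (x : V) :
    tailSum T r f x = f x + ∑ y, (if Anc T r x y ∧ y ≠ x then f y else 0) := by
  rw [tailSum_anc]
  have : ∀ y : V, (if Anc T r x y then f y else 0)
      = (if y = x then f y else 0) + (if Anc T r x y ∧ y ≠ x then f y else 0) := by
    intro y
    by_cases h1 : y = x
    · subst h1; simp [anc_refl T r y]
    · by_cases h2 : Anc T r x y <;> simp [h1, h2]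
  rw [Finset.sum_congr rfl (fun y _ => this y), Finset.sum_add_distrib,
    Finset.sum_ite_eq' Finset.univ x f]
  simp

lemma tailSum_subtree_eq (hT : T.IsTree) (r : V) (f g : V → ℝ) (x : V)
    (hch : ∀ c, T.dist x c = 1 → T.dist r c = T.dist r x + 1 →
      tailSum T r f c = tailSum T r g c) :
    ∑ y, (if Anc T r x y ∧ y ≠ x then f y else 0)
      = ∑ y, (if Anc T r x y ∧ y ≠ x then g y else 0) := by
  rw [sum_subtree_children hT r f x, sum_subtree_children hT r g x]
  apply Finset.sum_congr rfl
  intro c _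
  by_cases h : T.dist x c = 1 ∧ T.dist r c = T.dist r x + 1
  · rw [if_pos h, if_pos h, ← tailSum_anc, ← tailSum_anc]
    exact hch c h.1 h.2
  · rw [if_neg h, if_neg h]

lemma deeper (hT : T.IsTree) {r x y : V} (h : Anc T r x y) (hne : y ≠ x) :
    T.dist r x < T.dist r y := by
  unfold Anc at h
  have hd : T.dist x y ≠ 0 := by
    intro h0
    exact hne ((hT.isConnected.dist_eq_zero_iff.mp h0)).symm
  omega

/-- If all tails agree, the functions agree. -/
lemma eq_of_tailSum_eq (hT : T.IsTree) (r : V) (f g : V → ℝ)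
    (h : ∀ z, tailSum T r f z = tailSum T r g z) (x : V) : f x = g x := by
  have core : ∀ x : V, (∀ y, Anc T r x y → y ≠ x → f y = g y) → f x = g x := by
    intro x hy
    have h1 := tailSum_split (T := T) r f x
    have h2 := tailSum_split (T := T) r g x
    have h3 : ∑ y, (if Anc T r x y ∧ y ≠ x then f y else 0)
        = ∑ y, (if Anc T r x y ∧ y ≠ x then g y else 0) := by
      apply Finset.sum_congr rfl
      intro y _
      by_cases hc : Anc T r x y ∧ y ≠ x
      · rw [if_pos hc, if_pos hc, hy y hc.1 hc.2]
      · rw [if_neg hc, if_neg hc]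
    have h4 := h x
    rw [h1, h2, h3] at h4
    linarith
  suffices H : ∀ (k : ℕ) (x : V),
      (Finset.univ.filter (fun y => T.dist r x < T.dist r y)).card ≤ k → f x = g x by
    exact H _ x le_rfl
  intro k
  induction k with
  | zero =>
    intro x hx
    apply core
    intro y hAnc hne
    exfalso
    have hy : y ∈ Finset.univ.filter (fun w => T.dist r x < T.dist r w) := by
      simp [deeper hT hAnc hne]
    have := Finset.card_pos.mpr ⟨y, hy⟩
    omega
  | succ k ih =>
    intro x hx
    apply core
    intro y hAnc hne
    apply ih
    have hsub : Finset.univ.filter (fun w => T.dist r y < T.dist r w)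
        ⊂ Finset.univ.filter (fun w => T.dist r x < T.dist r w) := by
      constructor
      · intro w hw
        simp only [Finset.mem_filter, Finset.mem_univ, true_and] at *
        have := deeper hT hAnc hne
        omega
      · intro hcontra
        have hy : y ∈ Finset.univ.filter (fun w => T.dist r x < T.dist r w) := by
          simp [deeper hT hAnc hne]
        have := hcontra hy
        simp at this
    have := Finset.card_lt_card hsub
    omega



-- from f.lean
lemma coupling_transpose {f0 f1 : V → ℝ} {π : V → V → ℝ} (h : IsCoupling f0 f1 π) :
    IsCoupling f1 f0 (fun x y => π y x) ∧
    ∑ x, ∑ y, (T.dist x y : ℝ) * (π y x) = ∑ x, ∑ y, (T.dist x y : ℝ) * π x y := by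
  obtain ⟨hpos, hrow, hcol⟩ := h
  refine ⟨⟨fun x y => hpos y x, hcol, hrow⟩, ?_⟩
  rw [Finset.sum_comm]
  apply Finset.sum_congr rfl; intro x _
  apply Finset.sum_congr rfl; intro y _
  rw [SimpleGraph.dist_comm]

lemma coupling_product {f0 f1 : V → ℝ} (h0 : IsProbDist f0) (h1 : IsProbDist f1) :
    IsCoupling f0 f1 (fun x y => f0 x * f1 y) := by
  refine ⟨fun x y => mul_nonneg (h0.1 x) (h1.1 y), fun x => ?_, fun y => ?_⟩
  · rw [← Finset.mul_sum, h1.2, mul_one]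
  · rw [← Finset.sum_mul, h0.2, one_mul]

lemma cost_nonneg {π : V → V → ℝ} (hpos : ∀ x y, 0 ≤ π x y) :
    0 ≤ ∑ x, ∑ y, (T.dist x y : ℝ) * π x y := by
  apply Finset.sum_nonneg; intro x _
  apply Finset.sum_nonneg; intro y _
  exact mul_nonneg (Nat.cast_nonneg _) (hpos x y)

/-- Gluing a one-edge mass move onto an existing coupling. -/
lemma glue (hT : T.IsTree) {f0 f1 : V → ℝ} (h0 : ∀ y, 0 ≤ f0 y) {p x : V}
    (hadj : T.Adj p x) {δ : ℝ} (hδ : 0 < δ) {π' : V → V → ℝ}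
    (hπ' : IsCoupling
      (fun z => f0 z + (if z = p then δ else 0) - (if z = x then δ else 0)) f1 π') :
    ∃ π, IsCoupling f0 f1 π ∧
      ∑ z, ∑ w, (T.dist z w : ℝ) * π z w
        ≤ (∑ z, ∑ w, (T.dist z w : ℝ) * π' z w) + δ := by
  obtain ⟨hpos, hrow, hcol⟩ := hπ'
  set f0' : V → ℝ := fun z => f0 z + (if z = p then δ else 0) - (if z = x then δ else 0)
    with hf0'
  have hpx : p ≠ x := hadj.ne
  have hsp : 0 < f0 p + δ := by
    have := h0 p; linarith
  have hsne : f0 p + δ ≠ 0 := ne_of_gt hsp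
  have hq' : f0 p / (f0 p + δ) - 1 = -(δ / (f0 p + δ)) := by
    field_simp
    ring
  set c : ℝ := δ / (f0 p + δ) with hc
  have hq : f0 p / (f0 p + δ) - 1 = -c := hq'
  have hc0 : 0 ≤ c := div_nonneg hδ.le hsp.le
  have hc1 : c ≤ 1 := by
    rw [hc, div_le_one hsp]; linarith [h0 p]
  have hq0 : 0 ≤ f0 p / (f0 p + δ) := div_nonneg (h0 p) hsp.le
  set π : V → V → ℝ := fun z w => π' z w + (if z = x then c * π' p w else 0)
      + (if z = p then (f0 p / (f0 p + δ) - 1) * π' p w else 0) with hπdef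
  have hrowp : ∑ w, π' p w = f0 p + δ := by
    rw [hrow p]; simp [hf0', hpx]
  have hrowx : ∑ w, π' x w = f0 x - δ := by
    rw [hrow x]; simp [hf0', Ne.symm hpx]
  refine ⟨π, ⟨?_, ?_, ?_⟩, ?_⟩
  · -- nonneg
    intro z w
    by_cases hzx : z = x
    · subst hzx
      simp only [hπdef, if_pos rfl, if_neg (Ne.symm hpx)]
      have := hpos z w; have := hpos p w
      have : 0 ≤ c * π' p w := mul_nonneg hc0 (hpos p w)
      have := hpos z w
      positivity
    · by_cases hzp : z = p
      · simp only [hπdef, if_neg hzx, if_pos hzp, hq]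
        have h4 : π' z w = π' p w := by rw [hzp]
        have h5 : π' z w + 0 + -c * π' p w = (1 - c) * π' p w := by rw [h4]; ring
        rw [h5]
        exact mul_nonneg (by linarith) (hpos p w)
      · simp only [hπdef, if_neg hzx, if_neg hzp, add_zero]
        exact hpos z w
  · -- rows
    intro z
    simp only [hπdef]
    rw [Finset.sum_add_distrib, Finset.sum_add_distrib]
    have e1 : ∑ w : V, (if z = x then c * π' p w else 0)
        = if z = x then δ else 0 := by
      by_cases hzx : z = x
      · rw [if_pos hzx, Finset.sum_congr rfl (fun w _ => if_pos hzx), ← Finset.mul_sum,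
          hrowp, hc, div_mul_cancel₀ _ hsne]
      · rw [if_neg hzx]
        exact Finset.sum_eq_zero (fun w _ => if_neg hzx)
    have e2 : ∑ w : V, (if z = p then (f0 p / (f0 p + δ) - 1) * π' p w else 0)
        = if z = p then -δ else 0 := by
      by_cases hzp : z = p
      · rw [if_pos hzp, Finset.sum_congr rfl (fun w _ => if_pos hzp), ← Finset.mul_sum,
          hrowp, hq, hc]
        field_simp
      · rw [if_neg hzp]
        exact Finset.sum_eq_zero (fun w _ => if_neg hzp)
    rw [e1, e2, hrow z]
    simp only [hf0']
    split_ifs with h1 h2 <;> try ring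
  · -- cols
    intro w
    simp only [hπdef]
    rw [Finset.sum_add_distrib, Finset.sum_add_distrib]
    rw [Finset.sum_ite_eq' Finset.univ x (fun _ => c * π' p w),
      Finset.sum_ite_eq' Finset.univ p (fun _ => (f0 p / (f0 p + δ) - 1) * π' p w)]
    simp only [Finset.mem_univ, if_pos, hq]
    rw [hcol w]
    ring
  · -- cost
    simp only [hπdef]
    have expand : ∀ z w, (T.dist z w : ℝ) * (π' z w + (if z = x then c * π' p w else 0)
        + (if z = p then (f0 p / (f0 p + δ) - 1) * π' p w else 0))
        = (T.dist z w : ℝ) * π' z w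
          + (if z = x then (T.dist z w : ℝ) * (c * π' p w) else 0)
          + (if z = p then (T.dist z w : ℝ) * ((f0 p / (f0 p + δ) - 1) * π' p w) else 0) := by
      intro z w
      by_cases hzx : z = x <;> by_cases hzp : z = p
      · exact absurd (hzx.symm.trans hzp) (Ne.symm hpx)
      · rw [if_pos hzx, if_neg hzp, if_pos hzx, if_neg hzp]; ring
      · rw [if_neg hzx, if_pos hzp, if_neg hzx, if_pos hzp]; ring
      · rw [if_neg hzx, if_neg hzp, if_neg hzx, if_neg hzp]; ring
    have sumeq : ∀ z, ∑ w, (T.dist z w : ℝ) * (π' z w + (if z = x then c * π' p w else 0)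
        + (if z = p then (f0 p / (f0 p + δ) - 1) * π' p w else 0))
        = (∑ w, (T.dist z w : ℝ) * π' z w)
          + (if z = x then ∑ w, (T.dist x w : ℝ) * (c * π' p w) else 0)
          + (if z = p then ∑ w, (T.dist p w : ℝ) * ((f0 p / (f0 p + δ) - 1) * π' p w) else 0) := by
      intro z
      rw [Finset.sum_congr rfl (fun w _ => expand z w), Finset.sum_add_distrib,
        Finset.sum_add_distrib]
      congr 1
      · congr 1
        by_cases hzx : z = x
        · subst hzx; simp
        · simp [hzx]
      · by_cases hzp : z = p
        · subst hzp; simp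
        · simp [hzp]
    rw [Finset.sum_congr rfl (fun z _ => sumeq z), Finset.sum_add_distrib,
      Finset.sum_add_distrib,
      Finset.sum_ite_eq' Finset.univ x (fun _ => ∑ w, (T.dist x w : ℝ) * (c * π' p w)),
      Finset.sum_ite_eq' Finset.univ p
        (fun _ => ∑ w, (T.dist p w : ℝ) * ((f0 p / (f0 p + δ) - 1) * π' p w))]
    simp only [Finset.mem_univ, if_pos, hq]
    have key : ∑ w, (T.dist x w : ℝ) * (c * π' p w)
        + ∑ w, (T.dist p w : ℝ) * (-c * π' p w) ≤ δ := by
      rw [← Finset.sum_add_distrib]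
      have hterm : ∀ w, (T.dist x w : ℝ) * (c * π' p w) + (T.dist p w : ℝ) * (-c * π' p w)
          ≤ c * π' p w := by
        intro w
        have htri : T.dist x w ≤ T.dist x p + T.dist p w := hT.isConnected.dist_triangle
        have hd1 : T.dist x p = 1 := dist_adj hT hadj.symm
        have hcast : (T.dist x w : ℝ) ≤ (T.dist p w : ℝ) + 1 := by
          rw [hd1] at htri
          exact_mod_cast by omega
        have hnn : 0 ≤ c * π' p w := mul_nonneg hc0 (hpos p w)
        nlinarith [hpos p w]
      calc ∑ w, ((T.dist x w : ℝ) * (c * π' p w) + (T.dist p w : ℝ) * (-c * π' p w))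
          ≤ ∑ w, c * π' p w := Finset.sum_le_sum (fun w _ => hterm w)
        _ = c * (f0 p + δ) := by rw [← Finset.mul_sum, hrowp]
        _ = δ := by rw [hc]; field_simp
    have : ∑ w, (T.dist p w : ℝ) * ((-c) * π' p w)
        = ∑ w, (T.dist p w : ℝ) * (-c * π' p w) := rfl
    linarith [key]


-- from g.lean
lemma lower_bound (hT : T.IsTree) (r : V) {f0 f1 : V → ℝ} {π : V → V → ℝ}
    (hπ : IsCoupling f0 f1 π) :
    ∑ z, |tailSum T r f1 z - tailSum T r f0 z|
      ≤ ∑ x, ∑ y, (T.dist x y : ℝ) * π x y := by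
  obtain ⟨hpos, hrow, hcol⟩ := hπ
  have step1 : ∑ x, ∑ y, (T.dist x y : ℝ) * π x y
      = ∑ z, ∑ x, ∑ y, |(if Anc T r z y then (1:ℝ) else 0)
          - (if Anc T r z x then (1:ℝ) else 0)| * π x y := by
    calc ∑ x, ∑ y, (T.dist x y : ℝ) * π x y
        = ∑ x, ∑ y, ∑ z, |(if Anc T r z y then (1:ℝ) else 0)
            - (if Anc T r z x then (1:ℝ) else 0)| * π x y := by
          apply Finset.sum_congr rfl; intro x _
          apply Finset.sum_congr rfl; intro y _
          rw [dist_eq_sum_abs hT r x y, Finset.sum_mul]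
      _ = ∑ x, ∑ z, ∑ y, |(if Anc T r z y then (1:ℝ) else 0)
            - (if Anc T r z x then (1:ℝ) else 0)| * π x y := by
          apply Finset.sum_congr rfl; intro x _
          exact Finset.sum_comm
      _ = ∑ z, ∑ x, ∑ y, |(if Anc T r z y then (1:ℝ) else 0)
            - (if Anc T r z x then (1:ℝ) else 0)| * π x y := Finset.sum_comm
  rw [step1]
  apply Finset.sum_le_sum
  intro z _
  have inner : tailSum T r f1 z - tailSum T r f0 z
      = ∑ x, ∑ y, ((if Anc T r z y then (1:ℝ) else 0)
          - (if Anc T r z x then (1:ℝ) else 0)) * π x y := by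
    have e1 : ∑ x, ∑ y, (if Anc T r z y then (1:ℝ) else 0) * π x y
        = tailSum T r f1 z := by
      rw [Finset.sum_comm, tailSum_anc]
      apply Finset.sum_congr rfl; intro y _
      rw [← Finset.mul_sum, hcol y]
      by_cases h : Anc T r z y
      · rw [if_pos h, if_pos h, one_mul]
      · rw [if_neg h, if_neg h, zero_mul]
    have e2 : ∑ x, ∑ y, (if Anc T r z x then (1:ℝ) else 0) * π x y
        = tailSum T r f0 z := by
      rw [tailSum_anc]
      apply Finset.sum_congr rfl; intro x _
      rw [← Finset.mul_sum, hrow x]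
      by_cases h : Anc T r z x
      · rw [if_pos h, if_pos h, one_mul]
      · rw [if_neg h, if_neg h, zero_mul]
    calc tailSum T r f1 z - tailSum T r f0 z
        = ∑ x, ∑ y, (if Anc T r z y then (1:ℝ) else 0) * π x y
          - ∑ x, ∑ y, (if Anc T r z x then (1:ℝ) else 0) * π x y := by rw [e1, e2]
      _ = ∑ x, ∑ y, ((if Anc T r z y then (1:ℝ) else 0)
          - (if Anc T r z x then (1:ℝ) else 0)) * π x y := by
          rw [← Finset.sum_sub_distrib]
          apply Finset.sum_congr rfl; intro x _
          rw [← Finset.sum_sub_distrib]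
          apply Finset.sum_congr rfl; intro y _
          ring
  rw [inner]
  calc |∑ x, ∑ y, ((if Anc T r z y then (1:ℝ) else 0)
        - (if Anc T r z x then (1:ℝ) else 0)) * π x y|
      ≤ ∑ x, |∑ y, ((if Anc T r z y then (1:ℝ) else 0)
        - (if Anc T r z x then (1:ℝ) else 0)) * π x y| := Finset.abs_sum_le_sum_abs _ _
    _ ≤ ∑ x, ∑ y, |((if Anc T r z y then (1:ℝ) else 0)
        - (if Anc T r z x then (1:ℝ) else 0)) * π x y| :=
        Finset.sum_le_sum (fun x _ => Finset.abs_sum_le_sum_abs _ _)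
    _ = ∑ x, ∑ y, |(if Anc T r z y then (1:ℝ) else 0)
        - (if Anc T r z x then (1:ℝ) else 0)| * π x y := by
        apply Finset.sum_congr rfl; intro x _
        apply Finset.sum_congr rfl; intro y _
        rw [abs_mul, abs_of_nonneg (hpos x y)]



-- from h.lean
lemma tailSum_modify (r p x : V) (f : V → ℝ) (δ : ℝ) (z : V) :
    tailSum T r (fun w => f w + (if w = p then δ else 0) - (if w = x then δ else 0)) z
    = tailSum T r f z + (if Anc T r z p then δ else 0) - (if Anc T r z x then δ else 0) := by
  simp only [tailSum_anc]
  have key : ∀ (q : V), ∑ y, (if Anc T r z y then (if y = q then δ else 0) else 0)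
      = if Anc T r z q then δ else 0 := by
    intro q
    have hpt : ∀ y, (if Anc T r z y then (if y = q then δ else 0) else 0)
        = if y = q then (if Anc T r z q then δ else 0) else 0 := by
      intro y
      by_cases h1 : y = q <;> by_cases h2 : Anc T r z y <;> subst_eqs <;> simp [*]
    rw [Finset.sum_congr rfl (fun y _ => hpt y),
      Finset.sum_ite_eq' Finset.univ q (fun _ => if Anc T r z q then δ else 0)]
    simp
  have expand : ∀ y, (if Anc T r z y then
        (f y + (if y = p then δ else 0) - (if y = x then δ else 0)) else 0)
      = (if Anc T r z y then f y else 0)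
        + (if Anc T r z y then (if y = p then δ else 0) else 0)
        - (if Anc T r z y then (if y = x then δ else 0) else 0) := by
    intro y; by_cases h : Anc T r z y <;> simp [h]
  rw [Finset.sum_congr rfl (fun y _ => expand y), Finset.sum_sub_distrib,
    Finset.sum_add_distrib, key p, key x]

/-- The inductive step: push the surplus at a deepest discrepancy vertex to its parent. -/
lemma step (hT : T.IsTree) (r : V) (f0 f1 : V → ℝ) (h0 : IsProbDist f0)
    (h1 : IsProbDist f1) (x p : V) (hadj : T.Adj p x)
    (hdp : T.dist r p + 1 = T.dist r x)
    (hlt : tailSum T r f1 x < tailSum T r f0 x)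
    (hch : ∀ c, T.dist x c = 1 → T.dist r c = T.dist r x + 1 →
      tailSum T r f0 c = tailSum T r f1 c)
    (hrec : ∀ g0 : V → ℝ, IsProbDist g0 →
      (∀ z, z ≠ x → tailSum T r g0 z = tailSum T r f0 z) →
      tailSum T r g0 x = tailSum T r f1 x →
      ∃ π', IsCoupling g0 f1 π' ∧
        ∑ z, ∑ w, (T.dist z w : ℝ) * π' z w
          ≤ ∑ z, |tailSum T r f1 z - tailSum T r g0 z|) :
    ∃ π, IsCoupling f0 f1 π ∧
      ∑ z, ∑ w, (T.dist z w : ℝ) * π z w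
        ≤ ∑ z, |tailSum T r f1 z - tailSum T r f0 z| := by
  set δ : ℝ := tailSum T r f0 x - tailSum T r f1 x with hδdef
  have hδ : 0 < δ := by rw [hδdef]; linarith
  have hpx : p ≠ x := hadj.ne
  set g0 : V → ℝ := fun z => f0 z + (if z = p then δ else 0) - (if z = x then δ else 0)
    with hg0
  -- `f0 x - δ = f1 x ≥ 0`
  have hs0 := tailSum_split (T := T) r f0 x
  have hs1 := tailSum_split (T := T) r f1 x
  have hsub := tailSum_subtree_eq hT r f0 f1 x hch
  have hf0x : f0 x - δ = f1 x := by rw [hδdef]; linarith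
  have hxp : ¬ Anc T r x p := by
    intro h
    have h' : T.dist r x + T.dist x p = T.dist r p := h
    omega
  have hAxx : Anc T r x x := by unfold Anc; rw [SimpleGraph.dist_self]; omega
  -- g0 is a probability distribution
  have hprob : IsProbDist g0 := by
    constructor
    · intro z
      simp only [hg0]
      by_cases hzx : z = x
      · rw [if_pos hzx, if_neg (fun h : z = p => hpx (h.symm.trans hzx)), hzx]
        have := h1.1 x
        linarith
      · by_cases hzp : z = p
        · rw [if_neg hzx, if_pos hzp]
          have := h0.1 z
          linarith
        · rw [if_neg hzx, if_neg hzp]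
          have := h0.1 z
          linarith
    · simp only [hg0]
      rw [Finset.sum_sub_distrib, Finset.sum_add_distrib,
        Finset.sum_ite_eq' Finset.univ p (fun _ => δ),
        Finset.sum_ite_eq' Finset.univ x (fun _ => δ)]
      simp [h0.2]
  -- tails of g0
  have collapse : ∀ z, tailSum T r g0 z
      = if z = x then tailSum T r f1 x else tailSum T r f0 z := by
    intro z
    rw [hg0, tailSum_modify]
    by_cases hzx : z = x
    · rw [hzx, if_pos hAxx, if_neg hxp, if_pos rfl, hδdef]
      ring
    · rw [if_neg hzx]
      have hiff := anc_child_iff (r := r) hT hadj (by omega) z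
      by_cases hzp : Anc T r z p
      · rw [if_pos hzp, if_pos (hiff.mpr (Or.inl hzp))]; ring
      · have hnot : ¬ Anc T r z x := by
          intro h
          rcases hiff.mp h with h' | h'
          · exact hzp h'
          · exact hzx h'
        rw [if_neg hzp, if_neg hnot]
        ring
  obtain ⟨π', hcoup', hcost'⟩ := hrec g0 hprob
    (fun z hz => by rw [collapse z, if_neg hz])
    (by rw [collapse x, if_pos rfl])
  have hB' : ∑ z, |tailSum T r f1 z - tailSum T r g0 z|
      = (∑ z, |tailSum T r f1 z - tailSum T r f0 z|) - δ := by
    have pt : ∀ z, |tailSum T r f1 z - tailSum T r g0 z|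
        = |tailSum T r f1 z - tailSum T r f0 z| - (if z = x then δ else 0) := by
      intro z
      rw [collapse z]
      by_cases hzx : z = x
      · subst hzx
        rw [if_pos rfl, if_pos rfl]
        have habs : |tailSum T r f1 z - tailSum T r f0 z| = δ := by
          rw [abs_of_neg (show tailSum T r f1 z - tailSum T r f0 z < 0 by linarith)]
          linarith
        rw [habs]
        simp
      · rw [if_neg hzx, if_neg hzx, sub_zero]
    rw [Finset.sum_congr rfl (fun z _ => pt z), Finset.sum_sub_distrib,
      Finset.sum_ite_eq' Finset.univ x (fun _ => δ)]
    simp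
  rw [hg0] at hcoup'
  obtain ⟨π, hπ, hcost⟩ := glue hT h0.1 hadj hδ hcoup'
  refine ⟨π, hπ, ?_⟩
  rw [hB'] at hcost'
  linarith

/-- Base case: equal tails give a zero-cost (diagonal) coupling. -/
lemma UB0 (hT : T.IsTree) (r : V) (f0 f1 : V → ℝ) (h0 : IsProbDist f0)
    (h1 : IsProbDist f1) (heq : ∀ z, tailSum T r f0 z = tailSum T r f1 z) :
    ∃ π, IsCoupling f0 f1 π ∧
      ∑ z, ∑ w, (T.dist z w : ℝ) * π z w
        ≤ ∑ z, |tailSum T r f1 z - tailSum T r f0 z| := by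
  have hff : ∀ z, f0 z = f1 z := eq_of_tailSum_eq hT r f0 f1 heq
  refine ⟨fun z w => if z = w then f0 z else 0, ⟨?_, ?_, ?_⟩, ?_⟩
  · intro z w
    show 0 ≤ if z = w then f0 z else 0
    by_cases h : z = w
    · rw [if_pos h]; exact h0.1 z
    · rw [if_neg h]
  · intro z
    show (∑ w, if z = w then f0 z else 0) = f0 z
    rw [Finset.sum_eq_single z (fun w _ hne => if_neg (fun h : z = w => hne h.symm))
      (fun h => absurd (Finset.mem_univ z) h)]
    rw [if_pos rfl]
  · intro w
    show (∑ z, if z = w then f0 z else 0) = f1 w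
    rw [Finset.sum_eq_single w (fun z _ hne => if_neg hne)
      (fun h => absurd (Finset.mem_univ w) h)]
    rw [if_pos rfl]
    exact hff w
  · show (∑ z, ∑ w, (T.dist z w : ℝ) * (if z = w then f0 z else 0))
        ≤ ∑ z, |tailSum T r f1 z - tailSum T r f0 z|
    have hzero : ∑ z, ∑ w, (T.dist z w : ℝ) * (if z = w then f0 z else 0) = 0 := by
      apply Finset.sum_eq_zero
      intro z _
      apply Finset.sum_eq_zero
      intro w _
      by_cases h : z = w
      · subst h; rw [SimpleGraph.dist_self]; simp
      · rw [if_neg h, mul_zero]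
    rw [hzero]
    exact Finset.sum_nonneg (fun z _ => abs_nonneg _)

open scoped Classical in
/-- Main upper bound, by induction on the number of discrepancy vertices. -/
lemma UB (hT : T.IsTree) (r : V) : ∀ (n : ℕ) (f0 f1 : V → ℝ),
    IsProbDist f0 → IsProbDist f1 →
    (Finset.univ.filter (fun z => tailSum T r f0 z ≠ tailSum T r f1 z)).card ≤ n →
    ∃ π, IsCoupling f0 f1 π ∧
      ∑ z, ∑ w, (T.dist z w : ℝ) * π z w
        ≤ ∑ z, |tailSum T r f1 z - tailSum T r f0 z| := by
  intro n
  induction n with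
  | zero =>
    intro f0 f1 h0 h1 hcard
    apply UB0 hT r f0 f1 h0 h1
    intro z
    by_contra hne
    have : z ∈ Finset.univ.filter (fun z => tailSum T r f0 z ≠ tailSum T r f1 z) := by
      simp [hne]
    have := Finset.card_pos.mpr ⟨z, this⟩
    omega
  | succ n ih =>
    intro f0 f1 h0 h1 hcard
    set S := Finset.univ.filter (fun z => tailSum T r f0 z ≠ tailSum T r f1 z) with hS
    by_cases hall : ∀ z, tailSum T r f0 z = tailSum T r f1 z
    · exact UB0 hT r f0 f1 h0 h1 hall
    push_neg at hall
    obtain ⟨z₀, hz₀⟩ := hall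
    have hSne : S.Nonempty := ⟨z₀, by simp [hS, hz₀]⟩
    obtain ⟨x, hxS, hmax⟩ := Finset.exists_max_image S (fun z => T.dist r z) hSne
    have hxne : tailSum T r f0 x ≠ tailSum T r f1 x := by
      rw [hS] at hxS; simpa using hxS
    have hmaxd : ∀ z, T.dist r x < T.dist r z →
        tailSum T r f0 z = tailSum T r f1 z := by
      intro z hz
      by_contra hne
      have hzS : z ∈ S := by simp [hS, hne]
      have := hmax z hzS
      omega
    have hxr : x ≠ r := by
      intro h; subst h
      rw [tailSum_root, tailSum_root, h0.2, h1.2] at hxne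
      exact hxne rfl
    obtain ⟨p, hadj, hdp⟩ := exists_parent hT hxr
    have hch : ∀ c, T.dist x c = 1 → T.dist r c = T.dist r x + 1 →
        tailSum T r f0 c = tailSum T r f1 c :=
      fun c _ h2 => hmaxd c (by omega)
    have hcards : S.card ≤ n + 1 := hcard
    rcases hxne.lt_or_gt with hlt | hgt
    · -- tailSum f0 x < tailSum f1 x : symmetric case
      have hch' : ∀ c, T.dist x c = 1 → T.dist r c = T.dist r x + 1 →
          tailSum T r f1 c = tailSum T r f0 c := fun c a b => (hch c a b).symm
      have key := step hT r f1 f0 h1 h0 x p hadj hdp hlt hch' ?_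
      · obtain ⟨π, hπ, hcost⟩ := key
        obtain ⟨hπT, hcostT⟩ := coupling_transpose hπ
        refine ⟨fun z w => π w z, hπT, ?_⟩
        rw [hcostT]
        calc ∑ z, ∑ w, (T.dist z w : ℝ) * π z w
            ≤ ∑ z, |tailSum T r f0 z - tailSum T r f1 z| := hcost
          _ = ∑ z, |tailSum T r f1 z - tailSum T r f0 z| := by
              apply Finset.sum_congr rfl; intro z _; rw [abs_sub_comm]
      · intro g1 hg1 hz hx
        have hcard' : (Finset.univ.filter
            (fun z => tailSum T r f0 z ≠ tailSum T r g1 z)).card ≤ n := by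
          have hsub : (Finset.univ.filter
              (fun z => tailSum T r f0 z ≠ tailSum T r g1 z)) ⊆ S.erase x := by
            intro z hzmem
            simp only [Finset.mem_filter, Finset.mem_univ, true_and] at hzmem
            have hzx : z ≠ x := by
              intro h; subst h
              rw [hx] at hzmem
              exact hzmem rfl
            rw [Finset.mem_erase]
            refine ⟨hzx, ?_⟩
            rw [hS, Finset.mem_filter]
            refine ⟨Finset.mem_univ z, ?_⟩
            rw [← hz z hzx]
            exact hzmem
          have := Finset.card_le_card hsub
          have := Finset.card_erase_of_mem hxS
          omega
        obtain ⟨π'', hπ'', hcost''⟩ := ih f0 g1 h0 hg1 hcard'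
        obtain ⟨hπT, hcostT⟩ := coupling_transpose hπ''
        refine ⟨fun z w => π'' w z, hπT, ?_⟩
        rw [hcostT]
        calc ∑ z, ∑ w, (T.dist z w : ℝ) * π'' z w
            ≤ ∑ z, |tailSum T r g1 z - tailSum T r f0 z| := hcost''
          _ = ∑ z, |tailSum T r f0 z - tailSum T r g1 z| := by
              apply Finset.sum_congr rfl; intro z _; rw [abs_sub_comm]
    · -- tailSum f1 x < tailSum f0 x
      apply step hT r f0 f1 h0 h1 x p hadj hdp hgt hch
      intro g0 hg0 hz hx
      have hcard' : (Finset.univ.filter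
          (fun z => tailSum T r g0 z ≠ tailSum T r f1 z)).card ≤ n := by
        have hsub : (Finset.univ.filter
            (fun z => tailSum T r g0 z ≠ tailSum T r f1 z)) ⊆ S.erase x := by
          intro z hzmem
          simp only [Finset.mem_filter, Finset.mem_univ, true_and] at hzmem
          have hzx : z ≠ x := by
            intro h; subst h
            rw [hx] at hzmem
            exact hzmem rfl
          rw [Finset.mem_erase]
          refine ⟨hzx, ?_⟩
          rw [hS, Finset.mem_filter]
          refine ⟨Finset.mem_univ z, ?_⟩
          rw [← hz z hzx]
          exact hzmem
        have := Finset.card_le_card hsub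
        have := Finset.card_erase_of_mem hxS
        omega
      exact ih g0 f1 hg0 h1 hcard'



end TreeW1

/-- On a rooted tree, `W1(f0,f1) = Σ_x |F1_x − F0_x|`. -/
theorem statement0 {V E : Type*} [Fintype V] [Fintype E] [DecidableEq V]
    (G : DiGraph V E) (r : V) (hG : G.IsRootedTree r)
    (f0 f1 : V → ℝ) (h0 : IsProbDist f0) (h1 : IsProbDist f1) :
    W1 G.toSimpleGraph f0 f1 =
      ∑ x, |tailSum G.toSimpleGraph r f1 x - tailSum G.toSimpleGraph r f0 x| := by
  classical
  obtain ⟨hT, -⟩ := hG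
  apply le_antisymm
  · obtain ⟨π, hπ, hcost⟩ := TreeW1.UB hT r
      ((Finset.univ.filter (fun z => tailSum G.toSimpleGraph r f0 z
        ≠ tailSum G.toSimpleGraph r f1 z)).card) f0 f1 h0 h1 le_rfl
    have hbdd : BddBelow {c : ℝ | ∃ π : V → V → ℝ, IsCoupling f0 f1 π ∧
        c = ∑ x, ∑ y, (G.toSimpleGraph.dist x y : ℝ) * π x y} := by
      refine ⟨0, ?_⟩
      rintro c ⟨π', hπ', rfl⟩
      exact TreeW1.cost_nonneg hπ'.1
    have hmem : (∑ x, ∑ y, (G.toSimpleGraph.dist x y : ℝ) * π x y) ∈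
        {c : ℝ | ∃ π : V → V → ℝ, IsCoupling f0 f1 π ∧
          c = ∑ x, ∑ y, (G.toSimpleGraph.dist x y : ℝ) * π x y} := ⟨π, hπ, rfl⟩
    exact le_trans (csInf_le hbdd hmem) hcost
  · apply le_csInf
    · exact ⟨_, ⟨fun x y => f0 x * f1 y, TreeW1.coupling_product h0 h1, rfl⟩⟩
    · rintro c ⟨π, hπ, rfl⟩
      exact TreeW1.lower_bound hT r hπ
end

section
/- Let G be a rooted tree and let f : [0,1] → (V → ℝ) be a continuously differentiable path of probability distributions on V, with tails F(t)_x = Σ_{y∈U(x)} f(t)_y. Then for every t ∈ (0,1) the metric speed of f with respect to W1 exists and equals lim_{h→0} W1(f(t+h), f(t))/|h| = Σ_{x∈V} |∂_t F(t)_x|. -/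
open scoped BigOperators
open Set

set_option linter.unusedSectionVars false
set_option linter.unusedVariables false
set_option maxHeartbeats 1000000

section TreeLemmas
variable {V : Type*} [Fintype V] [DecidableEq V] {T : SimpleGraph V} {r : V}

lemma onpath_iff_mem_support (hT : T.IsTree) {c x : V} {q : T.Walk r c}
    (hq : q.IsPath) (hlen : q.length = T.dist r c) :
    (T.dist r x + T.dist x c = T.dist r c) ↔ x ∈ q.support := by
  constructor
  · intro hx
    obtain ⟨p1, hp1l⟩ := hT.isConnected.exists_walk_length_eq_dist r x
    obtain ⟨p2, hp2l⟩ := hT.isConnected.exists_walk_length_eq_dist x c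
    have hw : (p1.append p2).length = T.dist r c := by
      rw [SimpleGraph.Walk.length_append, hp1l, hp2l, hx]
    have hwp : (p1.append p2).IsPath := (p1.append p2).isPath_of_length_eq_dist hw
    have := hT.IsAcyclic.path_unique ⟨p1.append p2, hwp⟩ ⟨q, hq⟩
    have hsupp : x ∈ (p1.append p2).support :=
      SimpleGraph.Walk.subset_support_append_left _ _ (p1.end_mem_support)
    have : (p1.append p2) = q := congrArg Subtype.val this
    rwa [this] at hsupp
  · intro hx
    have hsp := q.take_spec hx
    have hlen2 : (q.takeUntil x hx).length + (q.dropUntil x hx).length = T.dist r c := by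
      rw [← hlen, ← SimpleGraph.Walk.length_append, hsp]
    have h1 : T.dist r x ≤ (q.takeUntil x hx).length := SimpleGraph.dist_le _
    have h2 : T.dist x c ≤ (q.dropUntil x hx).length := SimpleGraph.dist_le _
    have h3 : T.dist r c ≤ T.dist r x + T.dist x c := hT.isConnected.dist_triangle
    omega

lemma onpath_child_iff (hT : T.IsTree) {p b : V} (hadj : T.Adj p b)
    (hd : T.dist r b = T.dist r p + 1) (x : V) :
    (T.dist r x + T.dist x b = T.dist r b) ↔
      ((T.dist r x + T.dist x p = T.dist r p) ∨ x = b) := by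
  obtain ⟨pp, hppp, hppl⟩ := hT.isConnected.exists_path_of_dist r p
  have hql : (pp.concat hadj).length = T.dist r b := by
    rw [SimpleGraph.Walk.length_concat, hppl, hd]
  have hqp : (pp.concat hadj).IsPath := (pp.concat hadj).isPath_of_length_eq_dist hql
  rw [onpath_iff_mem_support hT hqp hql, onpath_iff_mem_support hT hppp hppl,
    SimpleGraph.Walk.support_concat]
  simp [List.concat_eq_append]

lemma phi_parent_child (hT : T.IsTree) {p b : V} (hadj : T.Adj p b)
    (hd : T.dist r b = T.dist r p + 1) :
    ∑ x : V, |(if T.dist r x + T.dist x p = T.dist r p then (1:ℝ) else 0)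
      - (if T.dist r x + T.dist x b = T.dist r b then (1:ℝ) else 0)| = 1 := by
  have : ∀ x : V, |(if T.dist r x + T.dist x p = T.dist r p then (1:ℝ) else 0)
      - (if T.dist r x + T.dist x b = T.dist r b then (1:ℝ) else 0)|
      = if x = b then 1 else 0 := by
    intro x
    by_cases hx : x = b
    · subst hx
      rw [if_neg (by omega), if_pos (by simp [SimpleGraph.dist_self]), if_pos rfl]
      norm_num
    · rw [if_neg hx]
      by_cases h1 : T.dist r x + T.dist x p = T.dist r p
      · rw [if_pos h1, if_pos ((onpath_child_iff hT hadj hd x).2 (Or.inl h1))]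
        norm_num
      · rw [if_neg h1, if_neg (fun hc => by
          rcases (onpath_child_iff hT hadj hd x).1 hc with h | h
          exacts [h1 h, hx h])]
        norm_num
  rw [Finset.sum_congr rfl fun x _ => this x]
  simp

lemma phi_adj (hT : T.IsTree)
    (hstep : ∀ u v, T.Adj u v → T.dist r v = T.dist r u + 1 ∨ T.dist r u = T.dist r v + 1)
    {u v : V} (hadj : T.Adj u v) :
    ∑ x : V, |(if T.dist r x + T.dist x u = T.dist r u then (1:ℝ) else 0)
      - (if T.dist r x + T.dist x v = T.dist r v then (1:ℝ) else 0)| ≤ 1 := by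
  rcases hstep u v hadj with h | h
  · exact le_of_eq (phi_parent_child hT hadj h)
  · exact le_of_eq ((Finset.sum_congr rfl fun x _ => abs_sub_comm _ _).trans
      (phi_parent_child hT hadj.symm h))

lemma phi_le_length (hT : T.IsTree)
    (hstep : ∀ u v, T.Adj u v → T.dist r v = T.dist r u + 1 ∨ T.dist r u = T.dist r v + 1)
    {a b : V} (w : T.Walk a b) :
    ∑ x : V, |(if T.dist r x + T.dist x a = T.dist r a then (1:ℝ) else 0)
      - (if T.dist r x + T.dist x b = T.dist r b then (1:ℝ) else 0)| ≤ w.length := by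
  induction w with
  | nil => simp
  | @cons c d e hadj w ih =>
      have h1 := phi_adj hT hstep hadj (r := r)
      have h2 : ∑ x : V, |(if T.dist r x + T.dist x c = T.dist r c then (1:ℝ) else 0)
          - (if T.dist r x + T.dist x e = T.dist r e then (1:ℝ) else 0)|
          ≤ ∑ x : V, (|(if T.dist r x + T.dist x c = T.dist r c then (1:ℝ) else 0)
              - (if T.dist r x + T.dist x d = T.dist r d then (1:ℝ) else 0)|
            + |(if T.dist r x + T.dist x d = T.dist r d then (1:ℝ) else 0)
              - (if T.dist r x + T.dist x e = T.dist r e then (1:ℝ) else 0)|) :=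
        Finset.sum_le_sum fun x _ => abs_sub_le _ _ _
      rw [Finset.sum_add_distrib] at h2
      rw [SimpleGraph.Walk.length_cons]
      push_cast
      linarith

lemma phi_le_dist (hT : T.IsTree)
    (hstep : ∀ u v, T.Adj u v → T.dist r v = T.dist r u + 1 ∨ T.dist r u = T.dist r v + 1)
    (a b : V) :
    ∑ x : V, |(if T.dist r x + T.dist x a = T.dist r a then (1:ℝ) else 0)
      - (if T.dist r x + T.dist x b = T.dist r b then (1:ℝ) else 0)| ≤ T.dist a b := by
  obtain ⟨w, hw⟩ := hT.isConnected.exists_walk_length_eq_dist a b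
  have := phi_le_length hT hstep w
  rwa [hw] at this

lemma W1_lower_bound (hT : T.IsTree)
    (hstep : ∀ u v, T.Adj u v → T.dist r v = T.dist r u + 1 ∨ T.dist r u = T.dist r v + 1)
    {f0 f1 : V → ℝ} {π : V → V → ℝ} (hπ : IsCoupling f0 f1 π) :
    ∑ x, |tailSum T r f0 x - tailSum T r f1 x| ≤ ∑ a, ∑ b, (T.dist a b : ℝ) * π a b := by
  have h0 : ∀ x, tailSum T r f0 x
      = ∑ a, ∑ b, π a b * (if T.dist r x + T.dist x a = T.dist r a then (1:ℝ) else 0) := by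
    intro x
    unfold tailSum
    refine Finset.sum_congr rfl fun a _ => ?_
    rw [← Finset.sum_mul, hπ.2.1 a]
    by_cases h : T.dist r x + T.dist x a = T.dist r a <;> simp [h]
  have h1 : ∀ x, tailSum T r f1 x
      = ∑ a, ∑ b, π a b * (if T.dist r x + T.dist x b = T.dist r b then (1:ℝ) else 0) := by
    intro x
    unfold tailSum
    rw [Finset.sum_comm]
    refine Finset.sum_congr rfl fun b _ => ?_
    rw [← Finset.sum_mul, hπ.2.2 b]
    by_cases h : T.dist r x + T.dist x b = T.dist r b <;> simp [h]
  have key : ∀ x, |tailSum T r f0 x - tailSum T r f1 x|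
      ≤ ∑ a, ∑ b, π a b * |(if T.dist r x + T.dist x a = T.dist r a then (1:ℝ) else 0)
        - (if T.dist r x + T.dist x b = T.dist r b then (1:ℝ) else 0)| := by
    intro x
    rw [h0 x, h1 x, ← Finset.sum_sub_distrib]
    refine (Finset.abs_sum_le_sum_abs _ _).trans (Finset.sum_le_sum fun a _ => ?_)
    rw [← Finset.sum_sub_distrib]
    refine (Finset.abs_sum_le_sum_abs _ _).trans (Finset.sum_le_sum fun b _ => ?_)
    rw [← mul_sub, abs_mul, abs_of_nonneg (hπ.1 a b)]
  calc ∑ x, |tailSum T r f0 x - tailSum T r f1 x|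
      ≤ ∑ x, ∑ a, ∑ b, π a b * |(if T.dist r x + T.dist x a = T.dist r a then (1:ℝ) else 0)
        - (if T.dist r x + T.dist x b = T.dist r b then (1:ℝ) else 0)| :=
        Finset.sum_le_sum fun x _ => key x
    _ = ∑ a, ∑ b, π a b * ∑ x, |(if T.dist r x + T.dist x a = T.dist r a then (1:ℝ) else 0)
        - (if T.dist r x + T.dist x b = T.dist r b then (1:ℝ) else 0)| := by
        rw [Finset.sum_comm]
        refine Finset.sum_congr rfl fun a _ => ?_
        rw [Finset.sum_comm]
        refine Finset.sum_congr rfl fun b _ => ?_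
        rw [Finset.mul_sum]
    _ ≤ ∑ a, ∑ b, π a b * (T.dist a b : ℝ) := by
        refine Finset.sum_le_sum fun a _ => Finset.sum_le_sum fun b _ => ?_
        exact mul_le_mul_of_nonneg_left (phi_le_dist hT hstep a b) (hπ.1 a b)
    _ = ∑ a, ∑ b, (T.dist a b : ℝ) * π a b := by
        refine Finset.sum_congr rfl fun a _ => Finset.sum_congr rfl fun b _ => mul_comm _ _

lemma sum_double_ite {V : Type*} [Fintype V] [DecidableEq V]
    (P : V → Prop) [DecidablePred P] (c : V) (m : ℝ) :
    ∑ y, (if P y then (if y = c then m else 0) else 0) = if P c then m else 0 := by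
  have h : ∀ y, (if P y then (if y = c then m else 0) else 0)
      = if y = c then (if P y then m else 0) else 0 := by
    intro y; by_cases h1 : P y <;> by_cases h2 : y = c <;> simp [h1, h2]
  rw [Finset.sum_congr rfl fun y _ => h y,
    Finset.sum_ite_eq' Finset.univ c (fun y => if P y then m else 0)]
  simp

lemma core_step (hT : T.IsTree)
    {f0 f1 : V → ℝ} (hf0 : ∀ x, 0 ≤ f0 x) (hf1 : ∀ x, 0 ≤ f1 x)
    {x0 p : V} (hx0 : f1 x0 < f0 x0)
    (hmax : ∀ x, f0 x ≠ f1 x → T.dist r x ≤ T.dist r x0)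
    (hadj : T.Adj p x0) (hdp : T.dist r x0 = T.dist r p + 1) :
    ∃ f0' : V → ℝ,
      (∀ x, 0 ≤ f0' x) ∧ (∑ x, f0' x = ∑ x, f0 x) ∧
      (∑ x ∈ Finset.univ.filter (fun x => f0' x ≠ f1 x), (T.dist r x + 1)
        < ∑ x ∈ Finset.univ.filter (fun x => f0 x ≠ f1 x), (T.dist r x + 1)) ∧
      ∀ π' : V → V → ℝ, IsCoupling f0' f1 π' →
        (∑ a, ∑ b, (T.dist a b : ℝ) * π' a b ≤ ∑ x, |tailSum T r f0' x - tailSum T r f1 x|) →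
        ∃ π : V → V → ℝ, IsCoupling f0 f1 π ∧
          ∑ a, ∑ b, (T.dist a b : ℝ) * π a b
            ≤ ∑ x, |tailSum T r f0 x - tailSum T r f1 x| := by
  set m : ℝ := f0 x0 - f1 x0 with hm_def
  have hm : 0 < m := by simp [hm_def]; linarith
  have hpx : p ≠ x0 := hadj.ne
  have hxp : x0 ≠ p := hadj.ne.symm
  refine ⟨fun y => f0 y + (if y = p then m else 0) - (if y = x0 then m else 0), ?_, ?_, ?_, ?_⟩
  · intro x
    dsimp only
    by_cases h1 : x = p
    · rw [if_pos h1, if_neg (by rw [h1]; exact hpx)]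
      have := hf0 x; linarith
    · by_cases h2 : x = x0
      · rw [if_neg h1, if_pos h2, h2]
        have h3 := hf1 x0; rw [hm_def]; linarith
      · rw [if_neg h1, if_neg h2]; have := hf0 x; linarith
  · rw [Finset.sum_sub_distrib, Finset.sum_add_distrib]
    rw [Finset.sum_ite_eq' Finset.univ p (fun _ => m), Finset.sum_ite_eq' Finset.univ x0 (fun _ => m)]
    simp
  · -- the weighted count of disagreements decreases
    have hx0D : x0 ∈ Finset.univ.filter (fun x => f0 x ≠ f1 x) := by
      simp only [Finset.mem_filter, Finset.mem_univ, true_and]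
      exact ne_of_gt hx0
    have hsub : Finset.univ.filter
          (fun x => (f0 x + (if x = p then m else 0) - (if x = x0 then m else 0)) ≠ f1 x)
        ⊆ insert p ((Finset.univ.filter (fun x => f0 x ≠ f1 x)).erase x0) := by
      intro x hx
      simp only [Finset.mem_filter, Finset.mem_univ, true_and] at hx
      by_cases h1 : x = p
      · exact Finset.mem_insert.2 (Or.inl h1)
      · have h2 : x ≠ x0 := by
          rintro rfl
          rw [if_neg h1, if_pos rfl] at hx
          apply hx
          rw [hm_def]; ring
        refine Finset.mem_insert.2 (Or.inr (Finset.mem_erase.2 ⟨h2, ?_⟩))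
        simp only [Finset.mem_filter, Finset.mem_univ, true_and]
        rwa [if_neg h1, if_neg h2, add_zero, sub_zero] at hx
    have h1 := Finset.sum_le_sum_of_subset (f := fun x => T.dist r x + 1) hsub
    have h2 : ∑ x ∈ insert p ((Finset.univ.filter (fun x => f0 x ≠ f1 x)).erase x0),
          (T.dist r x + 1)
        ≤ (T.dist r p + 1) + ∑ x ∈ (Finset.univ.filter (fun x => f0 x ≠ f1 x)).erase x0,
          (T.dist r x + 1) := by
      by_cases hp : p ∈ (Finset.univ.filter (fun x => f0 x ≠ f1 x)).erase x0
      · rw [Finset.insert_eq_self.2 hp]; omega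
      · rw [Finset.sum_insert hp]
    have h3 := Finset.add_sum_erase (Finset.univ.filter (fun x => f0 x ≠ f1 x))
      (fun x => T.dist r x + 1) hx0D
    simp only at h1 h2 h3 ⊢
    omega
  · -- build the coupling for (f0, f1) from one for (f0', f1)
    intro π' hπ' hcost'
    obtain ⟨hπ'nn, hπ'row, hπ'col⟩ := hπ'
    have hf0'x0 : f0 x0 + (if x0 = p then m else 0) - (if x0 = x0 then m else 0) = f1 x0 := by
      rw [if_neg hxp, if_pos rfl, hm_def]; ring
    have hf0'p : f0 p + (if p = p then m else 0) - (if p = x0 then m else 0) = f0 p + m := by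
      rw [if_pos rfl, if_neg hpx]; ring
    have hrowp : ∑ y, π' p y = f0 p + m := by rw [hπ'row p]; exact hf0'p
    have hden : (0:ℝ) < f0 p + m := by have := hf0 p; linarith
    set lam : ℝ := m / (f0 p + m) with hlam
    have hlam0 : 0 ≤ lam := le_of_lt (div_pos hm hden)
    have hlam1 : lam ≤ 1 := by rw [hlam, div_le_one hden]; have := hf0 p; linarith
    have hlamm : lam * (f0 p + m) = m := div_mul_cancel₀ m hden.ne'
    -- tail sum computations
    have hts : ∀ x, tailSum T r
          (fun y => f0 y + (if y = p then m else 0) - (if y = x0 then m else 0)) x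
        = tailSum T r f0 x
          + (if T.dist r x + T.dist x p = T.dist r p then m else 0)
          - (if T.dist r x + T.dist x x0 = T.dist r x0 then m else 0) := by
      intro x
      unfold tailSum
      beta_reduce
      have hpt : ∀ y, (if T.dist r x + T.dist x y = T.dist r y
            then (f0 y + (if y = p then m else 0) - (if y = x0 then m else 0)) else 0)
          = (if T.dist r x + T.dist x y = T.dist r y then f0 y else 0)
            + (if T.dist r x + T.dist x y = T.dist r y then (if y = p then m else 0) else 0)
            - (if T.dist r x + T.dist x y = T.dist r y then (if y = x0 then m else 0) else 0) := by
        intro y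
        by_cases hc : T.dist r x + T.dist x y = T.dist r y <;> simp [hc]
      rw [Finset.sum_congr rfl fun y _ => hpt y, Finset.sum_sub_distrib, Finset.sum_add_distrib,
        sum_double_ite (fun y => T.dist r x + T.dist x y = T.dist r y) p m,
        sum_double_ite (fun y => T.dist r x + T.dist x y = T.dist r y) x0 m]
    have htkey : tailSum T r f0 x0 - tailSum T r f1 x0 = m := by
      unfold tailSum
      rw [← Finset.sum_sub_distrib]
      have hpt : ∀ y, (if T.dist r x0 + T.dist x0 y = T.dist r y then f0 y else 0)
          - (if T.dist r x0 + T.dist x0 y = T.dist r y then f1 y else 0)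
          = if T.dist r x0 + T.dist x0 y = T.dist r y then f0 y - f1 y else 0 := by
        intro y; by_cases hc : T.dist r x0 + T.dist x0 y = T.dist r y <;> simp [hc]
      rw [Finset.sum_congr rfl fun y _ => hpt y]
      rw [Finset.sum_eq_single_of_mem x0 (Finset.mem_univ x0)]
      · rw [if_pos (by rw [SimpleGraph.dist_self, add_zero]), hm_def]
      · intro y _ hy
        by_cases hc : T.dist r x0 + T.dist x0 y = T.dist r y
        · rw [if_pos hc]
          have hpos : 0 < T.dist x0 y :=
            hT.isConnected.pos_dist_of_ne (fun h => hy h.symm)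
          have : ¬ (f0 y ≠ f1 y) := by
            intro hne
            have := hmax y hne
            omega
          push_neg at this
          rw [this]; ring
        · rw [if_neg hc]
    have htsx0 : tailSum T r
          (fun y => f0 y + (if y = p then m else 0) - (if y = x0 then m else 0)) x0
        = tailSum T r f1 x0 := by
      rw [hts x0, if_neg (by omega), if_pos (by rw [SimpleGraph.dist_self, add_zero])]
      linarith [htkey]
    have hts_other : ∀ x, x ≠ x0 → tailSum T r
          (fun y => f0 y + (if y = p then m else 0) - (if y = x0 then m else 0)) x
        = tailSum T r f0 x := by
      intro x hx
      rw [hts x]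
      have hiff : (T.dist r x + T.dist x x0 = T.dist r x0)
          ↔ (T.dist r x + T.dist x p = T.dist r p) := by
        rw [onpath_child_iff hT hadj hdp x]; exact or_iff_left hx
      by_cases hc : T.dist r x + T.dist x p = T.dist r p
      · rw [if_pos hc, if_pos (hiff.2 hc)]; ring
      · rw [if_neg hc, if_neg (fun h => hc (hiff.1 h))]; ring
    have hBB : ∑ x, |tailSum T r f0 x - tailSum T r f1 x|
        = m + ∑ x, |tailSum T r
            (fun y => f0 y + (if y = p then m else 0) - (if y = x0 then m else 0)) x
          - tailSum T r f1 x| := by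
      have h1 := Finset.add_sum_erase Finset.univ
        (fun x => |tailSum T r f0 x - tailSum T r f1 x|) (Finset.mem_univ x0)
      have h2 := Finset.add_sum_erase Finset.univ
        (fun x => |tailSum T r
            (fun y => f0 y + (if y = p then m else 0) - (if y = x0 then m else 0)) x
          - tailSum T r f1 x|) (Finset.mem_univ x0)
      have e1 : |tailSum T r f0 x0 - tailSum T r f1 x0| = m := by
        rw [htkey]; exact abs_of_pos hm
      have e2 : |tailSum T r
            (fun y => f0 y + (if y = p then m else 0) - (if y = x0 then m else 0)) x0
          - tailSum T r f1 x0| = 0 := by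
        rw [htsx0]; simp
      have e3 : ∑ x ∈ Finset.univ.erase x0, |tailSum T r
            (fun y => f0 y + (if y = p then m else 0) - (if y = x0 then m else 0)) x
          - tailSum T r f1 x|
          = ∑ x ∈ Finset.univ.erase x0, |tailSum T r f0 x - tailSum T r f1 x| :=
        Finset.sum_congr rfl fun x hx => by
          rw [hts_other x (Finset.ne_of_mem_erase hx)]
      rw [e1] at h1
      rw [e2, e3, zero_add] at h2
      linarith
    -- the new coupling
    refine ⟨fun a y => π' a y + (if a = x0 then lam * π' p y else 0)
      - (if a = p then lam * π' p y else 0), ⟨?_, ?_, ?_⟩, ?_⟩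
    · intro a y
      dsimp only
      by_cases h1 : a = x0
      · rw [if_pos h1, if_neg (by rw [h1]; exact hxp)]
        have h3 := mul_nonneg hlam0 (hπ'nn p y)
        have h4 := hπ'nn a y
        linarith
      · by_cases h2 : a = p
        · rw [if_neg h1, if_pos h2, h2]
          have h3 := hπ'nn p y
          nlinarith
        · rw [if_neg h1, if_neg h2]
          have := hπ'nn a y
          linarith
    · intro a
      dsimp only
      rw [Finset.sum_sub_distrib, Finset.sum_add_distrib, hπ'row a]
      beta_reduce
      have hS1 : ∑ y, (if a = x0 then lam * π' p y else 0)
          = if a = x0 then m else 0 := by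
        by_cases h : a = x0
        · simp only [if_pos h]; rw [← Finset.mul_sum, hrowp, hlamm]
        · simp [h]
      have hS2 : ∑ y, (if a = p then lam * π' p y else 0)
          = if a = p then m else 0 := by
        by_cases h : a = p
        · simp only [if_pos h]; rw [← Finset.mul_sum, hrowp, hlamm]
        · simp [h]
      rw [hS1, hS2]
      split_ifs <;> ring
    · intro y
      dsimp only
      rw [Finset.sum_sub_distrib, Finset.sum_add_distrib, hπ'col y,
        Finset.sum_ite_eq' Finset.univ x0 (fun _ => lam * π' p y),
        Finset.sum_ite_eq' Finset.univ p (fun _ => lam * π' p y)]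
      simp
    · -- cost bound
      have hexp : ∀ a b, (T.dist a b : ℝ) * (π' a b + (if a = x0 then lam * π' p b else 0)
            - (if a = p then lam * π' p b else 0))
          = (T.dist a b : ℝ) * π' a b
            + (if a = x0 then (T.dist a b : ℝ) * (lam * π' p b) else 0)
            - (if a = p then (T.dist a b : ℝ) * (lam * π' p b) else 0) := by
        intro a b
        by_cases h1 : a = x0
        · have h2 : a ≠ p := by rw [h1]; exact hxp
          rw [if_pos h1, if_pos h1, if_neg h2, if_neg h2]; ring
        · by_cases h2 : a = p
          · rw [if_neg h1, if_neg h1, if_pos h2, if_pos h2]; ring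
          · rw [if_neg h1, if_neg h1, if_neg h2, if_neg h2]; ring
      have hrw : ∑ a, ∑ b, (T.dist a b : ℝ) * (π' a b
            + (if a = x0 then lam * π' p b else 0) - (if a = p then lam * π' p b else 0))
          = (∑ a, ∑ b, (T.dist a b : ℝ) * π' a b)
            + (∑ b, (T.dist x0 b : ℝ) * (lam * π' p b))
            - (∑ b, (T.dist p b : ℝ) * (lam * π' p b)) := by
        rw [Finset.sum_congr rfl fun a _ => Finset.sum_congr rfl fun b _ => hexp a b]
        have hmid : ∀ a, ∑ b, (if a = x0 then (T.dist a b : ℝ) * (lam * π' p b) else 0)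
            = if a = x0 then ∑ b, (T.dist a b : ℝ) * (lam * π' p b) else 0 := by
          intro a; by_cases h : a = x0 <;> simp [h]
        have hmid2 : ∀ a, ∑ b, (if a = p then (T.dist a b : ℝ) * (lam * π' p b) else 0)
            = if a = p then ∑ b, (T.dist a b : ℝ) * (lam * π' p b) else 0 := by
          intro a; by_cases h : a = p <;> simp [h]
        have : ∀ a, ∑ b, ((T.dist a b : ℝ) * π' a b
              + (if a = x0 then (T.dist a b : ℝ) * (lam * π' p b) else 0)
              - (if a = p then (T.dist a b : ℝ) * (lam * π' p b) else 0))
            = (∑ b, (T.dist a b : ℝ) * π' a b)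
              + (if a = x0 then ∑ b, (T.dist a b : ℝ) * (lam * π' p b) else 0)
              - (if a = p then ∑ b, (T.dist a b : ℝ) * (lam * π' p b) else 0) := by
          intro a
          rw [Finset.sum_sub_distrib, Finset.sum_add_distrib, hmid a, hmid2 a]
        rw [Finset.sum_congr rfl fun a _ => this a]
        rw [Finset.sum_sub_distrib, Finset.sum_add_distrib,
          Finset.sum_ite_eq' Finset.univ x0
            (fun a => ∑ b, (T.dist a b : ℝ) * (lam * π' p b)),
          Finset.sum_ite_eq' Finset.univ p
            (fun a => ∑ b, (T.dist a b : ℝ) * (lam * π' p b))]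
        simp
      have htri : ∀ b, (T.dist x0 b : ℝ) ≤ (T.dist p b : ℝ) + 1 := by
        intro b
        have h := hT.isConnected.dist_triangle (u := x0) (v := p) (w := b)
        have hd1 : T.dist x0 p = 1 := SimpleGraph.dist_eq_one_iff_adj.2 hadj.symm
        rw [hd1] at h
        exact_mod_cast by omega
      have hS : ∑ b, (T.dist x0 b : ℝ) * (lam * π' p b)
          ≤ (∑ b, (T.dist p b : ℝ) * (lam * π' p b)) + m := by
        have hle : ∑ b, (T.dist x0 b : ℝ) * (lam * π' p b)
            ≤ ∑ b, ((T.dist p b : ℝ) * (lam * π' p b) + lam * π' p b) := by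
          refine Finset.sum_le_sum fun b _ => ?_
          have h2 : 0 ≤ lam * π' p b := mul_nonneg hlam0 (hπ'nn p b)
          nlinarith [htri b]
        rw [Finset.sum_add_distrib, ← Finset.mul_sum, hrowp, hlamm] at hle
        exact hle
      rw [hrw, hBB]
      linarith

lemma exists_parent (hconn : T.Connected) {x0 : V} (h : x0 ≠ r) :
    ∃ p, T.Adj p x0 ∧ T.dist r x0 = T.dist r p + 1 := by
  obtain ⟨w, hw⟩ := hconn.exists_walk_length_eq_dist x0 r
  cases w with
  | nil => exact absurd rfl h
  | @cons _ q _ hadj w' =>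
      refine ⟨q, hadj.symm, ?_⟩
      have h1 : T.dist q r ≤ w'.length := SimpleGraph.dist_le w'
      have h2 : T.dist x0 r ≤ 1 + T.dist q r := by
        have := hconn.dist_triangle (u := x0) (v := q) (w := r)
        have hd1 : T.dist x0 q = 1 := SimpleGraph.dist_eq_one_iff_adj.2 hadj
        omega
      have h3 : T.dist x0 r = w'.length + 1 := by
        rw [← hw, SimpleGraph.Walk.length_cons]
      have hc1 : T.dist r x0 = T.dist x0 r := SimpleGraph.dist_comm
      have hc2 : T.dist r q = T.dist q r := SimpleGraph.dist_comm
      omega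

lemma diag_coupling {f0 f1 : V → ℝ} (hf0 : ∀ x, 0 ≤ f0 x) (hall : ∀ x, f0 x = f1 x) :
    ∃ π, IsCoupling f0 f1 π ∧
      ∑ a, ∑ b, (T.dist a b : ℝ) * π a b
        ≤ ∑ x, |tailSum T r f0 x - tailSum T r f1 x| := by
  refine ⟨fun a b => if a = b then f0 a else 0, ⟨?_, ?_, ?_⟩, ?_⟩
  · intro a b; dsimp only; split
    · exact hf0 a
    · exact le_refl 0
  · intro a; simp
  · intro b; dsimp only
    rw [Finset.sum_ite_eq' Finset.univ b f0]
    simp [hall b]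
  · have hz : ∀ a b, (T.dist a b : ℝ) * (if a = b then f0 a else 0) = 0 := by
      intro a b
      by_cases h : a = b
      · subst h; simp [SimpleGraph.dist_self]
      · simp [h]
    calc ∑ a, ∑ b, (T.dist a b : ℝ) * (if a = b then f0 a else 0)
        = ∑ a : V, ∑ b : V, (0:ℝ) :=
          Finset.sum_congr rfl fun a _ => Finset.sum_congr rfl fun b _ => hz a b
      _ = 0 := by simp
      _ ≤ ∑ x, |tailSum T r f0 x - tailSum T r f1 x| :=
          Finset.sum_nonneg fun x _ => abs_nonneg _

lemma exists_good_coupling (hT : T.IsTree) :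
    ∀ (n : ℕ) (f0 f1 : V → ℝ), (∀ x, 0 ≤ f0 x) → (∀ x, 0 ≤ f1 x) →
      (∑ x, f0 x = ∑ x, f1 x) →
      (∑ x ∈ Finset.univ.filter (fun x => f0 x ≠ f1 x), (T.dist r x + 1)) ≤ n →
      ∃ π, IsCoupling f0 f1 π ∧
        ∑ a, ∑ b, (T.dist a b : ℝ) * π a b
          ≤ ∑ x, |tailSum T r f0 x - tailSum T r f1 x| := by
  intro n
  induction n with
  | zero =>
      intro f0 f1 hf0 hf1 hsum hN
      have hall : ∀ x, f0 x = f1 x := by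
        intro x
        by_contra hne
        have hx : x ∈ Finset.univ.filter (fun x => f0 x ≠ f1 x) := by
          simp only [Finset.mem_filter, Finset.mem_univ, true_and]; exact hne
        have h2 : T.dist r x + 1
            ≤ ∑ x ∈ Finset.univ.filter (fun x => f0 x ≠ f1 x), (T.dist r x + 1) :=
          Finset.single_le_sum (f := fun x => T.dist r x + 1) (fun i _ => Nat.zero_le _) hx
        omega
      exact diag_coupling hf0 hall
  | succ n ih =>
      intro f0 f1 hf0 hf1 hsum hN
      by_cases hall : ∀ x, f0 x = f1 x
      · exact diag_coupling hf0 hall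
      push_neg at hall
      obtain ⟨z, hz⟩ := hall
      have hne : (Finset.univ.filter (fun x => f0 x ≠ f1 x)).Nonempty :=
        ⟨z, by simp only [Finset.mem_filter, Finset.mem_univ, true_and]; exact hz⟩
      obtain ⟨x0, hx0mem, hx0max⟩ := Finset.exists_max_image _ (fun x => T.dist r x) hne
      simp only [Finset.mem_filter, Finset.mem_univ, true_and] at hx0mem
      have hmax : ∀ x, f0 x ≠ f1 x → T.dist r x ≤ T.dist r x0 := fun x hx =>
        hx0max x (by simp only [Finset.mem_filter, Finset.mem_univ, true_and]; exact hx)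
      have hx0r : x0 ≠ r := by
        intro hrfl
        have hzero : ∀ x, x ≠ r → f0 x = f1 x := by
          intro x hx
          by_contra hne2
          have h1 := hmax x hne2
          rw [hrfl] at h1
          have h0 : T.dist r r = 0 := SimpleGraph.dist_self
          have h2 : T.dist r x = 0 := by omega
          exact hx ((hT.isConnected.dist_eq_zero_iff).1 h2).symm
        have hfr : f0 r = f1 r := by
          have h := hsum
          rw [← Finset.add_sum_erase _ f0 (Finset.mem_univ r),
            ← Finset.add_sum_erase _ f1 (Finset.mem_univ r)] at h
          have he : ∑ x ∈ Finset.univ.erase r, f0 x = ∑ x ∈ Finset.univ.erase r, f1 x :=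
            Finset.sum_congr rfl fun x hx => hzero x (Finset.ne_of_mem_erase hx)
          linarith
        exact hx0mem (by rw [hrfl]; exact hfr)
      obtain ⟨p, hadj, hdp⟩ := exists_parent hT.isConnected hx0r
      rcases lt_or_gt_of_ne hx0mem with hlt | hgt
      · -- f0 x0 < f1 x0 : swap roles
        have hmax' : ∀ x, f1 x ≠ f0 x → T.dist r x ≤ T.dist r x0 := fun x hx =>
          hmax x (Ne.symm hx)
        obtain ⟨f1', hnn', hsum', hN', hbuild⟩ := core_step hT hf1 hf0 hlt hmax' hadj hdp
        have hfilter : Finset.univ.filter (fun x => f1 x ≠ f0 x)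
            = Finset.univ.filter (fun x => f0 x ≠ f1 x) := by
          apply Finset.filter_congr
          intro x _
          simp [ne_comm]
        have hN'' : ∑ x ∈ Finset.univ.filter (fun x => f1' x ≠ f0 x), (T.dist r x + 1) ≤ n := by
          rw [hfilter] at hN'; omega
        obtain ⟨σ, hσ, hσc⟩ := ih f1' f0 hnn' hf0 (by rw [hsum', hsum]) hN''
        obtain ⟨σ2, hσ2, hσ2c⟩ := hbuild σ hσ hσc
        refine ⟨fun a b => σ2 b a,
          ⟨fun a b => hσ2.1 b a, fun a => hσ2.2.2 a, fun b => hσ2.2.1 b⟩, ?_⟩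
        have hsw : ∑ a, ∑ b, (T.dist a b : ℝ) * σ2 b a
            = ∑ a, ∑ b, (T.dist a b : ℝ) * σ2 a b := by
          rw [Finset.sum_comm]
          exact Finset.sum_congr rfl fun a _ => Finset.sum_congr rfl fun b _ => by
            rw [SimpleGraph.dist_comm]
        rw [hsw]
        refine hσ2c.trans (le_of_eq ?_)
        exact Finset.sum_congr rfl fun x _ => abs_sub_comm _ _
      · obtain ⟨f0', hnn', hsum', hN', hbuild⟩ := core_step hT hf0 hf1 hgt hmax hadj hdp
        obtain ⟨σ, hσ, hσc⟩ := ih f0' f1 hnn' hf1 (by rw [hsum', hsum]) (by omega)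
        exact hbuild σ hσ hσc

lemma W1_tree_eq (hT : T.IsTree)
    (hstep : ∀ u v, T.Adj u v → T.dist r v = T.dist r u + 1 ∨ T.dist r u = T.dist r v + 1)
    {f0 f1 : V → ℝ} (hf0 : ∀ x, 0 ≤ f0 x) (hf1 : ∀ x, 0 ≤ f1 x)
    (hsum : ∑ x, f0 x = ∑ x, f1 x) :
    W1 T f0 f1 = ∑ x, |tailSum T r f0 x - tailSum T r f1 x| := by
  obtain ⟨π₀, hπ₀, hπ₀c⟩ := exists_good_coupling hT _ f0 f1 hf0 hf1 hsum le_rfl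
  have hlb : ∀ c ∈ {c : ℝ | ∃ π : V → V → ℝ, IsCoupling f0 f1 π ∧
        c = ∑ x, ∑ y, (T.dist x y : ℝ) * π x y},
      ∑ x, |tailSum T r f0 x - tailSum T r f1 x| ≤ c := by
    rintro c ⟨π, hπ, rfl⟩
    exact W1_lower_bound hT hstep hπ
  unfold W1
  apply le_antisymm
  · exact (csInf_le ⟨_, fun c hc => hlb c hc⟩ ⟨π₀, hπ₀, rfl⟩).trans hπ₀c
  · exact le_csInf ⟨_, π₀, hπ₀, rfl⟩ hlb

end TreeLemmas

/-- metric speed of a C¹ path of distributions on a rooted tree. -/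
theorem statement2 {V E : Type*} [Fintype V] [Fintype E] [DecidableEq V]
    (G : DiGraph V E) (r : V) (hG : G.IsRootedTree r)
    (f f' : ℝ → V → ℝ)
    (hf_prob : ∀ t ∈ Icc (0:ℝ) 1, IsProbDist (f t))
    (hderiv : ∀ x : V, ∀ t ∈ Icc (0:ℝ) 1,
      HasDerivWithinAt (fun s => f s x) (f' t x) (Icc (0:ℝ) 1) t)
    (hf'cont : ContinuousOn (fun t => f' t) (Icc (0:ℝ) 1))
    (t : ℝ) (ht : t ∈ Ioo (0:ℝ) 1) :
    Filter.Tendsto (fun h : ℝ => W1 G.toSimpleGraph (f (t + h)) (f t) / |h|)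
      (nhdsWithin (0:ℝ) {(0:ℝ)}ᶜ)
      (nhds (∑ x, |tailSum G.toSimpleGraph r (f' t) x|)) := by
  set T := G.toSimpleGraph with hT_def
  have hT : T.IsTree := hG.1
  have hstep : ∀ u v, T.Adj u v →
      T.dist r v = T.dist r u + 1 ∨ T.dist r u = T.dist r v + 1 := by
    rintro u v ⟨hne, k, hk⟩
    rcases hk with ⟨h1, h2⟩ | ⟨h1, h2⟩
    · left; rw [← h1, ← h2]; exact hG.2 k
    · right; rw [← h1, ← h2]; exact hG.2 k
  have htIcc : t ∈ Icc (0:ℝ) 1 := ⟨le_of_lt ht.1, le_of_lt ht.2⟩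
  have hIccNhds : Icc (0:ℝ) 1 ∈ nhds t := Icc_mem_nhds ht.1 ht.2
  -- derivative of the tail sums
  have hFx : ∀ x : V, HasDerivAt (fun s => tailSum T r (f s) x)
      (tailSum T r (f' t) x) t := by
    intro x
    unfold tailSum
    apply HasDerivAt.fun_sum
    intro y _
    by_cases hc : T.dist r x + T.dist x y = T.dist r y
    · simp only [if_pos hc]
      exact ((hderiv y t htIcc).hasDerivAt hIccNhds)
    · simp only [if_neg hc]
      exact hasDerivAt_const t 0
  -- slope limit for each x
  have hslope : ∀ x : V, Filter.Tendsto
      (fun h : ℝ => (tailSum T r (f (t + h)) x - tailSum T r (f t) x) / h)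
      (nhdsWithin (0:ℝ) {(0:ℝ)}ᶜ) (nhds (tailSum T r (f' t) x)) := by
    intro x
    have h1 := hasDerivAt_iff_tendsto_slope.1 (hFx x)
    have hmap : Filter.Tendsto (fun h : ℝ => t + h)
        (nhdsWithin (0:ℝ) {(0:ℝ)}ᶜ) (nhdsWithin t {t}ᶜ) := by
      rw [tendsto_nhdsWithin_iff]
      constructor
      · have hcont : Filter.Tendsto (fun h : ℝ => t + h) (nhds 0) (nhds t) := by
          have h0 : Continuous (fun h : ℝ => t + h) := continuous_const.add continuous_id
          have := h0.tendsto 0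
          simpa using this
        exact hcont.mono_left nhdsWithin_le_nhds
      · filter_upwards [self_mem_nhdsWithin] with h hh
        simp only [Set.mem_compl_iff, Set.mem_singleton_iff] at hh ⊢
        intro hcon
        exact hh (by linarith)
    have h2 := h1.comp hmap
    have h3 : (fun h : ℝ => slope (fun s => tailSum T r (f s) x) t (t + h))
        = fun h : ℝ => (tailSum T r (f (t + h)) x - tailSum T r (f t) x) / h := by
      funext h
      rw [slope_def_field]
      congr 1
      ring
    rw [← h3]
    exact h2
  -- convergence of the sum of absolute slopes
  have hsum_tendsto : Filter.Tendsto
      (fun h : ℝ => ∑ x, |(tailSum T r (f (t + h)) x - tailSum T r (f t) x) / h|)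
      (nhdsWithin (0:ℝ) {(0:ℝ)}ᶜ) (nhds (∑ x, |tailSum T r (f' t) x|)) := by
    apply tendsto_finset_sum
    intro x _
    exact (hslope x).abs
  -- eventual equality with the W1 quotient
  have hev : ∀ᶠ h in nhdsWithin (0:ℝ) {(0:ℝ)}ᶜ,
      W1 T (f (t + h)) (f t) / |h|
        = ∑ x, |(tailSum T r (f (t + h)) x - tailSum T r (f t) x) / h| := by
    have hsmall : ∀ᶠ h in nhds (0:ℝ), |h| < min t (1 - t) := by
      have hpos : 0 < min t (1 - t) := lt_min ht.1 (by linarith [ht.2])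
      have := Metric.ball_mem_nhds (0:ℝ) hpos
      filter_upwards [this] with h hh
      simpa [Real.dist_eq] using hh
    filter_upwards [eventually_nhdsWithin_of_eventually_nhds hsmall,
      self_mem_nhdsWithin] with h hh hne
    simp only [Set.mem_compl_iff, Set.mem_singleton_iff] at hne
    have habs := abs_lt.1 (lt_of_lt_of_le hh (min_le_left _ _))
    have habs2 := abs_lt.1 (lt_of_lt_of_le hh (min_le_right _ _))
    have hmem : t + h ∈ Icc (0:ℝ) 1 := ⟨by linarith, by linarith⟩
    have hp0 := hf_prob (t + h) hmem
    have hp1 := hf_prob t htIcc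
    rw [W1_tree_eq hT hstep hp0.1 hp1.1 (by rw [hp0.2, hp1.2]), Finset.sum_div]
    refine Finset.sum_congr rfl fun x _ => ?_
    rw [abs_div]
  exact hsum_tendsto.congr' (Filter.EventuallyEq.symm hev)
end

section
/- Let G be a rooted tree, let q ≥ 1, and let (f, v, g) be any solution of the discrete transport equation on [0,1]. Then W1(f(0), f(1)) ≤ I_q(v, g). -/
open scoped BigOperators
open Set

section AuxCoupling

variable {V : Type*} [Fintype V] [DecidableEq V]

lemma glue_coupling (d : V → V → ℝ)
    (htri : ∀ x y z, d x z ≤ d x y + d y z)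
    {μ lam ν : V → ℝ} {π₁ π₂ : V → V → ℝ}
    (h1 : IsCoupling μ lam π₁) (h2 : IsCoupling lam ν π₂) :
    ∃ π : V → V → ℝ, IsCoupling μ ν π ∧
      ∑ x, ∑ z, d x z * π x z ≤
        (∑ x, ∑ z, d x z * π₁ x z) + (∑ x, ∑ z, d x z * π₂ x z) := by
  classical
  obtain ⟨h1n, h1r, h1c⟩ := h1
  obtain ⟨h2n, h2r, h2c⟩ := h2
  have hlam : ∀ y, 0 ≤ lam y := by
    intro y
    rw [← h1c y]
    exact Finset.sum_nonneg fun i _ => h1n i y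
  set e : V → V → V → ℝ := fun x y z => if lam y = 0 then 0 else π₁ x y * π₂ y z / lam y with he
  have hπ₁0 : ∀ x y, lam y = 0 → π₁ x y = 0 := by
    intro x y hy
    have h₁ : π₁ x y ≤ ∑ x', π₁ x' y :=
      Finset.single_le_sum (fun i _ => h1n i y) (Finset.mem_univ x)
    rw [h1c y, hy] at h₁
    linarith [h1n x y]
  have hπ₂0 : ∀ y z, lam y = 0 → π₂ y z = 0 := by
    intro y z hy
    have h₁ : π₂ y z ≤ ∑ z', π₂ y z' :=
      Finset.single_le_sum (fun i _ => h2n y i) (Finset.mem_univ z)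
    rw [h2r y, hy] at h₁
    linarith [h2n y z]
  have hen : ∀ x y z, 0 ≤ e x y z := by
    intro x y z
    by_cases hy : lam y = 0 <;> simp only [he, hy, if_true, if_false, le_refl]
    · exact div_nonneg (mul_nonneg (h1n x y) (h2n y z)) (hlam y)
  have hi : ∀ x y, ∑ z, e x y z = π₁ x y := by
    intro x y
    by_cases hy : lam y = 0
    · simp [he, hy, hπ₁0 x y hy]
    · simp only [he, hy, if_false]
      rw [← Finset.sum_div, ← Finset.mul_sum, h2r y, mul_div_assoc, div_self hy, mul_one]
  have hii : ∀ y z, ∑ x, e x y z = π₂ y z := by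
    intro y z
    by_cases hy : lam y = 0
    · simp [he, hy, hπ₂0 y z hy]
    · simp only [he, hy, if_false]
      rw [← Finset.sum_div, ← Finset.sum_mul, h1c y, mul_comm, mul_div_assoc, div_self hy, mul_one]
  refine ⟨fun x z => ∑ y, e x y z, ⟨?_, ?_, ?_⟩, ?_⟩
  · intro x z; exact Finset.sum_nonneg fun y _ => hen x y z
  · intro x
    rw [Finset.sum_comm]
    rw [← h1r x]
    exact Finset.sum_congr rfl fun y _ => hi x y
  · intro z
    rw [Finset.sum_comm]
    rw [← h2c z]
    exact Finset.sum_congr rfl fun y _ => hii y z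
  · calc ∑ x, ∑ z, d x z * ∑ y, e x y z
        = ∑ x, ∑ z, ∑ y, d x z * e x y z := by
          refine Finset.sum_congr rfl fun x _ => Finset.sum_congr rfl fun z _ => ?_
          rw [Finset.mul_sum]
      _ ≤ ∑ x, ∑ z, ∑ y, (d x y + d y z) * e x y z := by
          refine Finset.sum_le_sum fun x _ => Finset.sum_le_sum fun z _ =>
            Finset.sum_le_sum fun y _ => ?_
          exact mul_le_mul_of_nonneg_right (htri x y z) (hen x y z)
      _ = (∑ x, ∑ z, ∑ y, d x y * e x y z) + (∑ x, ∑ z, ∑ y, d y z * e x y z) := by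
          rw [← Finset.sum_add_distrib]
          refine Finset.sum_congr rfl fun x _ => ?_
          rw [← Finset.sum_add_distrib]
          refine Finset.sum_congr rfl fun z _ => ?_
          rw [← Finset.sum_add_distrib]
          refine Finset.sum_congr rfl fun y _ => ?_
          ring
      _ ≤ (∑ x, ∑ z, d x z * π₁ x z) + (∑ x, ∑ z, d x z * π₂ x z) := by
          apply add_le_add
          · apply le_of_eq
            refine Finset.sum_congr rfl fun x _ => ?_
            rw [Finset.sum_comm]
            refine Finset.sum_congr rfl fun y _ => ?_
            rw [← Finset.mul_sum, hi x y]
          · apply le_of_eq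
            calc ∑ x, ∑ z, ∑ y, d y z * e x y z
                = ∑ z, ∑ y, ∑ x, d y z * e x y z := by
                  rw [Finset.sum_comm]
                  exact Finset.sum_congr rfl fun z _ => Finset.sum_comm
              _ = ∑ z, ∑ y, d y z * π₂ y z := by
                  refine Finset.sum_congr rfl fun z _ => Finset.sum_congr rfl fun y _ => ?_
                  rw [← Finset.mul_sum, hii y z]
              _ = ∑ x, ∑ z, d x z * π₂ x z := Finset.sum_comm

lemma move_coupling (d : V → V → ℝ) (hd0 : ∀ x, d x x = 0)
    {μ : V → ℝ} (hμ : ∀ x, 0 ≤ μ x) {s t : V} (hst : s ≠ t)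
    {m : ℝ} (hm : 0 ≤ m) (hms : m ≤ μ s) :
    ∃ π : V → V → ℝ,
      IsCoupling μ (fun x => μ x + m * ((if t = x then 1 else 0) - (if s = x then 1 else 0))) π ∧
      ∑ x, ∑ z, d x z * π x z = m * d s t := by
  classical
  refine ⟨fun x z => (if x = z then μ x - (if x = s then m else 0) else 0)
      + (if x = s ∧ z = t then m else 0), ⟨?_, ?_, ?_⟩, ?_⟩
  · intro x z
    by_cases hxz : x = z
    · subst hxz
      by_cases hxs : x = s
      · subst hxs
        have : ¬ (x = t) := hst
        simp [this]
        linarith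
      · simp only [if_pos rfl, hxs, if_false, false_and, add_zero, sub_zero]
        exact hμ x
    · simp only [hxz, if_false, zero_add]
      by_cases h : x = s ∧ z = t <;> simp [h, hm]
  · intro x
    rw [Finset.sum_add_distrib]
    have h₁ : ∑ z, (if x = z then μ x - (if x = s then m else 0) else 0)
        = μ x - (if x = s then m else 0) := by
      rw [Finset.sum_ite_eq]
      simp
    have h₂ : ∑ z, (if x = s ∧ z = t then m else 0) = if x = s then m else 0 := by
      by_cases hxs : x = s <;> simp [hxs]
    rw [h₁, h₂]
    ring
  · intro z
    rw [Finset.sum_add_distrib]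
    have h₁ : ∑ x, (if x = z then μ x - (if x = s then m else 0) else 0)
        = μ z - (if z = s then m else 0) := by
      rw [Finset.sum_ite_eq']
      simp
    have h₂ : ∑ x, (if x = s ∧ z = t then m else 0) = if z = t then m else 0 := by
      by_cases hzt : z = t <;> simp [hzt]
    rw [h₁, h₂]
    have flip : ∀ (a b : V) (r : ℝ), (if a = b then r else 0) = r * (if b = a then 1 else 0) := by
      intro a b r
      by_cases h : a = b
      · rw [if_pos h, if_pos h.symm]; ring
      · rw [if_neg h, if_neg (fun hh : b = a => h hh.symm)]; ring
    rw [flip z s m, flip z t m]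
    ring
  · have key : ∀ x : V, ∑ z, d x z * ((if x = z then μ x - (if x = s then m else 0) else 0)
        + (if x = s ∧ z = t then m else 0))
        = (if x = s then d s t * m else 0) := by
      intro x
      have : ∀ z, d x z * ((if x = z then μ x - (if x = s then m else 0) else 0)
          + (if x = s ∧ z = t then m else 0))
          = (if x = z then d x z * (μ x - (if x = s then m else 0)) else 0)
            + (if x = s ∧ z = t then d x z * m else 0) := by
        intro z
        split_ifs <;> ring
      rw [Finset.sum_congr rfl fun z _ => this z, Finset.sum_add_distrib]
      have h₁ : ∑ z, (if x = z then d x z * (μ x - (if x = s then m else 0)) else 0) = 0 := by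
        rw [Finset.sum_ite_eq]
        simp [hd0 x]
      have h₂ : ∑ z, (if x = s ∧ z = t then d x z * m else 0)
          = if x = s then d s t * m else 0 := by
        by_cases hxs : x = s
        · subst hxs
          simp
        · simp [hxs]
      rw [h₁, h₂, zero_add]
    rw [Finset.sum_congr rfl fun x _ => key x, Finset.sum_ite_eq']
    simp [mul_comm]

lemma exec_coupling (d : V → V → ℝ) (hd0 : ∀ x, d x x = 0) (hdnn : ∀ x y, 0 ≤ d x y)
    (hsym : ∀ x y, d x y = d y x)
    (htri : ∀ x y z, d x z ≤ d x y + d y z)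
    (D : V → ℕ) (p : V → V) :
    ∀ (n : ℕ) (F : Finset V), F.card = n →
      (∀ y ∈ F, D y = D (p y) + 1) →
      ∀ (c : V → ℝ) (μ : V → ℝ), (∀ x, 0 ≤ μ x) →
      (∀ x, 0 ≤ μ x + ∑ y ∈ F, c y * ((if y = x then (1:ℝ) else 0) - (if p y = x then 1 else 0))) →
      ∃ π : V → V → ℝ,
        IsCoupling μ
          (fun x => μ x + ∑ y ∈ F,
            c y * ((if y = x then (1:ℝ) else 0) - (if p y = x then 1 else 0))) π ∧
        ∑ x, ∑ z, d x z * π x z ≤ ∑ y ∈ F, |c y| * d (p y) y := by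
  classical
  have diag : ∀ (F : Finset V) (c : V → ℝ) (μ : V → ℝ), (∀ x, 0 ≤ μ x) →
      (∀ y ∈ F, c y = 0) →
      ∃ π : V → V → ℝ,
        IsCoupling μ
          (fun x => μ x + ∑ y ∈ F,
            c y * ((if y = x then (1:ℝ) else 0) - (if p y = x then 1 else 0))) π ∧
        ∑ x, ∑ z, d x z * π x z ≤ ∑ y ∈ F, |c y| * d (p y) y := by
    intro F c μ hμ hc
    have hν : ∀ x, (μ x + ∑ y ∈ F,
        c y * ((if y = x then (1:ℝ) else 0) - (if p y = x then 1 else 0))) = μ x := by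
      intro x
      rw [Finset.sum_eq_zero fun y hy => by rw [hc y hy]; ring, add_zero]
    refine ⟨fun x z => if x = z then μ x else 0, ⟨?_, ?_, ?_⟩, ?_⟩
    · intro x z
      by_cases h : x = z
      · simp [h, hμ z]
      · simp [h]
    · intro x
      rw [Finset.sum_ite_eq]
      simp
    · intro z
      dsimp only
      rw [hν z, Finset.sum_ite_eq']
      simp
    · have : ∀ x : V, ∑ z, d x z * (if x = z then μ x else 0) = 0 := by
        intro x
        have : ∀ z, d x z * (if x = z then μ x else 0) = if x = z then d x z * μ x else 0 := by
          intro z; split_ifs <;> ring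
        rw [Finset.sum_congr rfl fun z _ => this z, Finset.sum_ite_eq]
        simp [hd0 x]
      rw [Finset.sum_congr rfl fun x _ => this x]
      rw [Finset.sum_const, smul_zero]
      exact Finset.sum_nonneg fun y _ => mul_nonneg (abs_nonneg _) (hdnn _ _)
  intro n
  induction n with
  | zero =>
      intro F hcard hD c μ hμ hν
      have hF : F = ∅ := Finset.card_eq_zero.mp hcard
      subst hF
      exact diag ∅ c μ hμ (by simp)
  | succ n IH =>
      intro F hcard hD c μ hμ hν
      by_cases hzero : ∀ y ∈ F, c y = 0
      · exact diag F c μ hμ hzero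
      push_neg at hzero
      obtain ⟨y₀, hy₀F, hy₀⟩ := hzero
      -- select the move to execute
      obtain ⟨ys, hysF, hcys, s, t, H3, H4, H5, H6⟩ :
          ∃ ys, ys ∈ F ∧ c ys ≠ 0 ∧ ∃ s t : V,
            (∀ y ∈ F.erase ys,
              c y * ((if y = s then (1:ℝ) else 0) - (if p y = s then 1 else 0)) ≤ 0) ∧
            (∀ x, c ys * ((if ys = x then (1:ℝ) else 0) - (if p ys = x then 1 else 0))
              = |c ys| * ((if t = x then (1:ℝ) else 0) - (if s = x then 1 else 0))) ∧
            s ≠ t ∧ d s t = d (p ys) ys := by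
        by_cases hneg : ∃ y ∈ F, c y < 0
        · obtain ⟨y₁, hy₁F, hy₁⟩ := hneg
          have hne : (F.filter (fun y => c y < 0)).Nonempty :=
            ⟨y₁, Finset.mem_filter.mpr ⟨hy₁F, hy₁⟩⟩
          obtain ⟨ys, hysmem, hmax⟩ := Finset.exists_max_image _ D hne
          obtain ⟨hysF, hcys⟩ := Finset.mem_filter.mp hysmem
          have hpys : p ys ≠ ys := by
            intro h
            have h1 := hD ys hysF
            rw [h] at h1
            omega
          refine ⟨ys, hysF, ne_of_lt hcys, ys, p ys, ?_, ?_, fun h => hpys h.symm, hsym _ _⟩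
          · intro y hy
            obtain ⟨hyne, hyF⟩ := Finset.mem_erase.mp hy
            rw [if_neg hyne]
            rcases le_or_gt 0 (c y) with h0 | h0
            · have : (0:ℝ) ≤ if p y = ys then (1:ℝ) else 0 := by positivity
              nlinarith
            · have hpy : p y ≠ ys := by
                intro h
                have h1 := hD y hyF
                have h2 := hmax y (Finset.mem_filter.mpr ⟨hyF, h0⟩)
                rw [h] at h1
                omega
              rw [if_neg hpy]
              ring_nf
              exact le_refl 0
          · intro x
            rw [abs_of_neg hcys]
            ring
        · push_neg at hneg
          have hcpos : 0 < c y₀ := lt_of_le_of_ne (hneg y₀ hy₀F) (Ne.symm hy₀)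
          have hne : (F.filter (fun y => 0 < c y)).Nonempty :=
            ⟨y₀, Finset.mem_filter.mpr ⟨hy₀F, hcpos⟩⟩
          obtain ⟨ys, hysmem, hmin⟩ := Finset.exists_min_image _ D hne
          obtain ⟨hysF, hcys⟩ := Finset.mem_filter.mp hysmem
          have hpys : p ys ≠ ys := by
            intro h
            have h1 := hD ys hysF
            rw [h] at h1
            omega
          refine ⟨ys, hysF, ne_of_gt hcys, p ys, ys, ?_, ?_, hpys, rfl⟩
          · intro y hy
            obtain ⟨hyne, hyF⟩ := Finset.mem_erase.mp hy
            rcases eq_or_lt_of_le (hneg y hyF) with h0 | h0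
            · rw [← h0]
              ring_nf
              exact le_refl 0
            · have hy' : y ≠ p ys := by
                intro h
                have h1 := hD ys hysF
                have h2 := hmin y (Finset.mem_filter.mpr ⟨hyF, h0⟩)
                rw [← h] at h1
                omega
              rw [if_neg hy']
              have : (0:ℝ) ≤ if p y = p ys then (1:ℝ) else 0 := by positivity
              nlinarith
          · intro x
            rw [abs_of_pos hcys]
      -- key bound : |c ys| ≤ μ s
      set m := |c ys| with hm
      have hm0 : 0 < m := abs_pos.mpr hcys
      have hsplit : ∀ x, ∑ y ∈ F, c y * ((if y = x then (1:ℝ) else 0) - (if p y = x then 1 else 0))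
          = c ys * ((if ys = x then (1:ℝ) else 0) - (if p ys = x then 1 else 0))
            + ∑ y ∈ F.erase ys,
              c y * ((if y = x then (1:ℝ) else 0) - (if p y = x then 1 else 0)) := by
        intro x
        exact (Finset.add_sum_erase F _ hysF).symm
      have key : m ≤ μ s := by
        have h0 := hν s
        rw [hsplit s] at h0
        have h1 : c ys * ((if ys = s then (1:ℝ) else 0) - (if p ys = s then 1 else 0)) = -m := by
          rw [H4 s, if_neg (fun h : t = s => H5 h.symm), if_pos rfl]
          ring
        have h2 : ∑ y ∈ F.erase ys,
            c y * ((if y = s then (1:ℝ) else 0) - (if p y = s then 1 else 0)) ≤ 0 :=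
          Finset.sum_nonpos H3
        linarith
      -- the single move
      obtain ⟨π₁, hcoup₁, hcost₁⟩ := move_coupling d hd0 hμ H5 (le_of_lt hm0) key
      have hμ₂eq : (fun x => μ x + m * ((if t = x then (1:ℝ) else 0) - (if s = x then 1 else 0)))
          = fun x => μ x + c ys * ((if ys = x then (1:ℝ) else 0) - (if p ys = x then 1 else 0)) := by
        funext x
        rw [H4 x]
      rw [hμ₂eq] at hcoup₁
      set μ₂ : V → ℝ :=
        fun x => μ x + c ys * ((if ys = x then (1:ℝ) else 0) - (if p ys = x then 1 else 0)) with hμ₂def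
      have hμ₂ : ∀ x, 0 ≤ μ₂ x := by
        intro x
        have : μ₂ x = μ x + m * ((if t = x then (1:ℝ) else 0) - (if s = x then 1 else 0)) := by
          rw [hμ₂def, ← H4 x]
        rw [this]
        by_cases hx : s = x
        · rw [if_pos hx, if_neg (fun h : t = x => H5 (hx.trans h.symm))]
          rw [← hx]
          linarith
        · rw [if_neg hx]
          have h1 : (0:ℝ) ≤ if t = x then (1:ℝ) else 0 := by positivity
          have h2 : 0 ≤ m * ((if t = x then (1:ℝ) else 0) - 0) := by nlinarith [le_of_lt hm0]
          linarith [hμ x]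
      -- apply IH on the erased set
      have hcard' : (F.erase ys).card = n := by
        rw [Finset.card_erase_of_mem hysF, hcard]
        omega
      have hD' : ∀ y ∈ F.erase ys, D y = D (p y) + 1 :=
        fun y hy => hD y (Finset.mem_of_mem_erase hy)
      have hsum₂ : ∀ x, μ₂ x + ∑ y ∈ F.erase ys,
          c y * ((if y = x then (1:ℝ) else 0) - (if p y = x then 1 else 0))
          = μ x + ∑ y ∈ F, c y * ((if y = x then (1:ℝ) else 0) - (if p y = x then 1 else 0)) := by
        intro x
        rw [hsplit x, hμ₂def]
        ring
      have hν₂ : ∀ x, 0 ≤ μ₂ x + ∑ y ∈ F.erase ys,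
          c y * ((if y = x then (1:ℝ) else 0) - (if p y = x then 1 else 0)) := by
        intro x
        rw [hsum₂ x]
        exact hν x
      obtain ⟨π₂, hcoup₂, hcost₂⟩ := IH (F.erase ys) hcard' hD' c μ₂ hμ₂ hν₂
      have hν₂eq : (fun x => μ₂ x + ∑ y ∈ F.erase ys,
          c y * ((if y = x then (1:ℝ) else 0) - (if p y = x then 1 else 0)))
          = fun x => μ x + ∑ y ∈ F,
            c y * ((if y = x then (1:ℝ) else 0) - (if p y = x then 1 else 0)) :=
        funext hsum₂
      rw [hν₂eq] at hcoup₂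
      obtain ⟨π, hcoup, hcost⟩ := glue_coupling d htri hcoup₁ hcoup₂
      refine ⟨π, hcoup, ?_⟩
      have hlast : ∑ y ∈ F, |c y| * d (p y) y
          = |c ys| * d (p ys) ys + ∑ y ∈ F.erase ys, |c y| * d (p y) y :=
        (Finset.add_sum_erase F _ hysF).symm
      rw [hlast, ← H6, ← hm]
      calc ∑ x, ∑ z, d x z * π x z
          ≤ (∑ x, ∑ z, d x z * π₁ x z) + (∑ x, ∑ z, d x z * π₂ x z) := hcost
        _ ≤ m * d s t + ∑ y ∈ F.erase ys, |c y| * d (p y) y := by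
            rw [hcost₁]
            exact add_le_add_right hcost₂ _
        _ = m * d s t + ∑ y ∈ F.erase ys, |c y| * d (p y) y := rfl
end AuxCoupling

section TreeLemmas

variable {V E : Type*}

lemma DiGraph.adj_tail_head (G : DiGraph V E) (k : E) :
    G.toSimpleGraph.Adj (G.tail k) (G.head k) :=
  ⟨G.ne k, k, Or.inl ⟨rfl, rfl⟩⟩

lemma DiGraph.unique_parent [DecidableEq V] (G : DiGraph V E) (r : V)
    (hG : G.IsRootedTree r) (j k : E)
    (hjk : G.head j = G.head k) : G.tail j = G.tail k := by
  classical
  have hconn : G.toSimpleGraph.Connected := hG.1.isConnected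
  by_contra hne
  have build : ∀ (e : E) (y : V), G.head e = y →
      ∃ P : G.toSimpleGraph.Walk r y, P.IsPath ∧ (G.tail e) ∈ P.support ∧
        ∀ z ∈ P.support, z = y ∨ z = G.tail e ∨
          G.toSimpleGraph.dist r z < G.toSimpleGraph.dist r (G.tail e) := by
    intro e y hy
    subst hy
    obtain ⟨pa, hpa, hlen⟩ := hconn.exists_path_of_dist r (G.tail e)
    have hdy : G.toSimpleGraph.dist r (G.head e) = G.toSimpleGraph.dist r (G.tail e) + 1 :=
      hG.2 e
    have hsupbound : ∀ z ∈ pa.support,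
        G.toSimpleGraph.dist r z ≤ G.toSimpleGraph.dist r (G.tail e) := by
      intro z hz
      calc G.toSimpleGraph.dist r z ≤ (pa.takeUntil z hz).length := SimpleGraph.dist_le _
        _ ≤ pa.length := SimpleGraph.Walk.length_takeUntil_le pa hz
        _ = G.toSimpleGraph.dist r (G.tail e) := hlen
    have hynot : G.head e ∉ pa.support := by
      intro hmem
      have := hsupbound _ hmem
      omega
    refine ⟨pa.concat (G.adj_tail_head e), ?_, ?_, ?_⟩
    · rw [SimpleGraph.Walk.isPath_def, SimpleGraph.Walk.support_concat,
        List.nodup_append]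
      exact ⟨hpa.support_nodup, List.nodup_singleton _,
        fun a ha b hb hab => hynot (by rw [← List.mem_singleton.mp hb, ← hab]; exact ha)⟩
    · rw [SimpleGraph.Walk.support_concat]
      exact List.mem_append_left _ (SimpleGraph.Walk.end_mem_support pa)
    · intro z hz
      rw [SimpleGraph.Walk.support_concat] at hz
      rcases List.mem_append.mp hz with hz | hz
      · -- z on the shortest path to the tail
        right
        have hlensplit : (pa.takeUntil z hz).length + (pa.dropUntil z hz).length = pa.length := by
          have := congrArg SimpleGraph.Walk.length (pa.take_spec hz)
          rwa [SimpleGraph.Walk.length_append] at this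
        by_cases h0 : (pa.dropUntil z hz).length = 0
        · left
          exact SimpleGraph.Walk.eq_of_length_eq_zero h0
        · right
          have h1 : G.toSimpleGraph.dist r z ≤ (pa.takeUntil z hz).length :=
            SimpleGraph.dist_le _
          omega
      · left
        simpa using hz
  obtain ⟨Pj, hPj, hTj, hBj⟩ := build j (G.head j) rfl
  obtain ⟨Pk, hPk, hTk, hBk⟩ := build k (G.head j) hjk.symm
  obtain ⟨P, hP, hPuniq⟩ := hG.1.existsUnique_path r (G.head j)
  have hPeq : Pj = Pk := (hPuniq Pj hPj).trans (hPuniq Pk hPk).symm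
  rw [hPeq] at hTj
  have hdepths : G.toSimpleGraph.dist r (G.tail j) = G.toSimpleGraph.dist r (G.tail k) := by
    have h1 := hG.2 j
    have h2 := hG.2 k
    rw [hjk] at h1
    omega
  rcases hBk _ hTj with h | h | h
  · exact G.ne j h
  · exact hne h
  · omega
end TreeLemmas

section Analysis

open MeasureTheory

lemma ftc_decomp {V E : Type*} [Fintype V] [Fintype E] [DecidableEq V]
    {G : DiGraph V E} (sol : TransportSolution G) (x : V) :
    sol.f 1 x - sol.f 0 x
      = ∑ k, G.incidence x k * ∫ t in (0:ℝ)..1, sol.v t k * sol.g t k := by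
  have hvk : ∀ k : E, ContinuousOn (fun t => sol.v t k) (Icc (0:ℝ) 1) :=
    fun k => (continuous_apply k).comp_continuousOn sol.v_cont
  have hgk : ∀ k : E, ContinuousOn (fun t => sol.g t k) (Icc (0:ℝ) 1) :=
    fun k => (continuous_apply k).comp_continuousOn sol.g_cont
  have hterm : ∀ k : E,
      ContinuousOn (fun t => G.incidence x k * sol.v t k * sol.g t k) (Icc (0:ℝ) 1) :=
    fun k => (continuousOn_const.mul (hvk k)).mul (hgk k)
  have hintk : ∀ k : E,
      IntervalIntegrable (fun t => G.incidence x k * sol.v t k * sol.g t k) volume 0 1 := by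
    intro k
    apply ContinuousOn.intervalIntegrable
    rw [Set.uIcc_of_le (by norm_num : (0:ℝ) ≤ 1)]
    exact hterm k
  have hφ : ContinuousOn (fun t => ∑ k, G.incidence x k * sol.v t k * sol.g t k)
      (Icc (0:ℝ) 1) := continuousOn_finset_sum _ fun k _ => hterm k
  have hint : IntervalIntegrable (fun t => ∑ k, G.incidence x k * sol.v t k * sol.g t k)
      volume 0 1 := by
    apply ContinuousOn.intervalIntegrable
    rwa [Set.uIcc_of_le (by norm_num : (0:ℝ) ≤ 1)]
  have hcontf : ContinuousOn (fun t => sol.f t x) (Icc (0:ℝ) 1) :=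
    fun t ht => (sol.transport x t ht).continuousWithinAt
  have hderiv : ∀ t ∈ Ioo (0:ℝ) 1, HasDerivWithinAt (fun s => sol.f s x)
      (∑ k, G.incidence x k * sol.v t k * sol.g t k) (Ioi t) t := by
    intro t ht
    have h1 := sol.transport x t (Ioo_subset_Icc_self ht)
    have h2 : Icc (0:ℝ) 1 ∈ nhds t := Icc_mem_nhds ht.1 ht.2
    exact (h1.hasDerivAt h2).hasDerivWithinAt
  have hFTC := intervalIntegral.integral_eq_sub_of_hasDeriv_right_of_le
    (by norm_num : (0:ℝ) ≤ 1) hcontf hderiv hint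
  rw [← hFTC, intervalIntegral.integral_finset_sum (fun k _ => hintk k)]
  refine Finset.sum_congr rfl fun k _ => ?_
  simp only [mul_assoc]
  exact intervalIntegral.integral_const_mul _ _

lemma sum_abs_integral_le_Iq {E : Type*} [Fintype E] {q : ℝ} (hq : 1 ≤ q)
    (v g : ℝ → E → ℝ)
    (hv : ContinuousOn (fun t => v t) (Icc (0:ℝ) 1))
    (hgcont : ContinuousOn (fun t => g t) (Icc (0:ℝ) 1))
    (hg : ∀ t ∈ Icc (0:ℝ) 1, IsProbDist (g t)) :
    ∑ k, |∫ t in (0:ℝ)..1, v t k * g t k| ≤ Iq q v g := by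
  have hq0 : 0 < q := lt_of_lt_of_le one_pos hq
  have hvk : ∀ k : E, ContinuousOn (fun t => v t k) (Icc (0:ℝ) 1) :=
    fun k => (continuous_apply k).comp_continuousOn hv
  have hgk : ∀ k : E, ContinuousOn (fun t => g t k) (Icc (0:ℝ) 1) :=
    fun k => (continuous_apply k).comp_continuousOn hgcont
  set h : ℝ → ℝ := fun t => ∑ k, g t k * |v t k| ^ q with hh
  have hhcont : ContinuousOn h (Icc (0:ℝ) 1) := by
    apply continuousOn_finset_sum
    intro k _
    exact (hgk k).mul (((hvk k).abs).rpow_const (fun t _ => Or.inr (le_of_lt hq0)))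
  have hh0 : ∀ t ∈ Icc (0:ℝ) 1, 0 ≤ h t := fun t ht =>
    Finset.sum_nonneg fun k _ => mul_nonneg ((hg t ht).1 k) (Real.rpow_nonneg (abs_nonneg _) q)
  have hpm : ∀ t ∈ Icc (0:ℝ) 1, ∑ k, g t k * |v t k| ≤ h t ^ (1/q) := by
    intro t ht
    exact Real.arith_mean_le_rpow_mean Finset.univ (g t) (fun k => |v t k|)
      (fun k _ => (hg t ht).1 k) (hg t ht).2 (fun k _ => abs_nonneg _) hq
  have hcont1 : ContinuousOn (fun t => ∑ k, g t k * |v t k|) (Icc (0:ℝ) 1) :=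
    continuousOn_finset_sum _ fun k _ => (hgk k).mul ((hvk k).abs)
  have hcont2 : ContinuousOn (fun t => h t ^ (1/q)) (Icc (0:ℝ) 1) :=
    hhcont.rpow_const (fun t _ => Or.inr (by positivity))
  have int1 : ∀ k : E, IntervalIntegrable (fun t => g t k * |v t k|) volume 0 1 := by
    intro k
    apply ContinuousOn.intervalIntegrable
    rw [Set.uIcc_of_le (by norm_num : (0:ℝ) ≤ 1)]
    exact (hgk k).mul ((hvk k).abs)
  have int_sum : IntervalIntegrable (fun t => ∑ k, g t k * |v t k|) volume 0 1 := by
    apply ContinuousOn.intervalIntegrable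
    rwa [Set.uIcc_of_le (by norm_num : (0:ℝ) ≤ 1)]
  have int_rpow : IntervalIntegrable (fun t => h t ^ (1/q)) volume 0 1 := by
    apply ContinuousOn.intervalIntegrable
    rwa [Set.uIcc_of_le (by norm_num : (0:ℝ) ≤ 1)]
  have step1 : ∀ k : E, |∫ t in (0:ℝ)..1, v t k * g t k|
      ≤ ∫ t in (0:ℝ)..1, g t k * |v t k| := by
    intro k
    calc |∫ t in (0:ℝ)..1, v t k * g t k| ≤ ∫ t in (0:ℝ)..1, |v t k * g t k| :=
        intervalIntegral.abs_integral_le_integral_abs (by norm_num)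
      _ = ∫ t in (0:ℝ)..1, g t k * |v t k| := by
        apply intervalIntegral.integral_congr
        intro t ht
        rw [Set.uIcc_of_le (by norm_num : (0:ℝ) ≤ 1)] at ht
        dsimp only
        rw [abs_mul, abs_of_nonneg ((hg t ht).1 k), mul_comm]
  have step2 : ∑ k, ∫ t in (0:ℝ)..1, g t k * |v t k|
      = ∫ t in (0:ℝ)..1, ∑ k, g t k * |v t k| :=
    (intervalIntegral.integral_finset_sum (fun k _ => int1 k)).symm
  have step3 : ∫ t in (0:ℝ)..1, ∑ k, g t k * |v t k| ≤ ∫ t in (0:ℝ)..1, h t ^ (1/q) :=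
    intervalIntegral.integral_mono_on (by norm_num) int_sum int_rpow hpm
  have step4 : ∫ t in (0:ℝ)..1, h t ^ (1/q) ≤ (∫ t in (0:ℝ)..1, h t) ^ (1/q) := by
    haveI : IsProbabilityMeasure (volume.restrict (Set.Ioc (0:ℝ) 1)) :=
      ⟨by simp [Real.volume_Ioc]⟩
    rw [intervalIntegral.integral_of_le (by norm_num : (0:ℝ) ≤ 1),
        intervalIntegral.integral_of_le (by norm_num : (0:ℝ) ≤ 1)]
    have hmono : Set.Ioc (0:ℝ) 1 ⊆ Set.Icc 0 1 := Set.Ioc_subset_Icc_self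
    have hint_h : IntegrableOn h (Set.Ioc (0:ℝ) 1) :=
      (hhcont.integrableOn_Icc).mono_set hmono
    have hint_hr : IntegrableOn (fun t => h t ^ (1/q)) (Set.Ioc (0:ℝ) 1) :=
      (hcont2.integrableOn_Icc).mono_set hmono
    have hae : ∀ᵐ t ∂(volume.restrict (Set.Ioc (0:ℝ) 1)), h t ∈ Set.Ici (0:ℝ) :=
      (ae_restrict_iff' measurableSet_Ioc).2
        (Filter.Eventually.of_forall fun t ht => hh0 t (hmono ht))
    exact ConcaveOn.le_map_integral
      (Real.concaveOn_rpow (by positivity) (by rw [div_le_one hq0]; exact hq))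
      (continuousOn_id.rpow_const fun x _ => Or.inr (by positivity)) isClosed_Ici
      hae hint_h hint_hr
  calc ∑ k, |∫ t in (0:ℝ)..1, v t k * g t k|
      ≤ ∑ k, ∫ t in (0:ℝ)..1, g t k * |v t k| := Finset.sum_le_sum fun k _ => step1 k
    _ = ∫ t in (0:ℝ)..1, ∑ k, g t k * |v t k| := step2
    _ ≤ ∫ t in (0:ℝ)..1, h t ^ (1/q) := step3
    _ ≤ (∫ t in (0:ℝ)..1, h t) ^ (1/q) := step4
    _ = Iq q v g := rfl

end Analysis

/-- on a rooted tree, `W1(f(0),f(1)) ≤ I_q(v,g)` for any solution. -/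
theorem statement5 {V E : Type*} [Fintype V] [Fintype E] [DecidableEq V]
    (G : DiGraph V E) (r : V) (hG : G.IsRootedTree r)
    (q : ℝ) (hq : 1 ≤ q) (sol : TransportSolution G) :
    W1 G.toSimpleGraph (sol.f 0) (sol.f 1) ≤ Iq q sol.v sol.g := by
  classical
  have hconn : G.toSimpleGraph.Connected := hG.1.isConnected
  set Φ : E → ℝ := fun k => ∫ t in (0:ℝ)..1, sol.v t k * sol.g t k with hΦ
  set p : V → V := fun y => if h : ∃ k, G.head k = y then G.tail h.choose else y with hp
  have hpk : ∀ k : E, p (G.head k) = G.tail k := by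
    intro k
    have hex : ∃ j, G.head j = G.head k := ⟨k, rfl⟩
    rw [hp]
    dsimp only
    rw [dif_pos hex]
    exact G.unique_parent r hG hex.choose k hex.choose_spec
  set F : Finset V := Finset.univ.image G.head with hF
  set c : V → ℝ := fun y => ∑ k ∈ Finset.univ.filter (fun k => G.head k = y), Φ k with hc
  -- flow decomposition of f 1 - f 0
  have hdecomp : ∀ x, sol.f 1 x = sol.f 0 x
      + ∑ y ∈ F, c y * ((if y = x then (1:ℝ) else 0) - (if p y = x then 1 else 0)) := by
    intro x
    have h1 := ftc_decomp sol x
    have h2 : ∀ k : E, G.incidence x k * Φ k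
        = Φ k * ((if G.head k = x then (1:ℝ) else 0) - (if G.tail k = x then 1 else 0)) := by
      intro k
      rw [DiGraph.incidence]
      by_cases hh : G.head k = x
      · rw [if_pos hh, if_pos hh, if_neg (fun h2 : G.tail k = x => G.ne k (h2.trans hh.symm))]
        ring
      · rw [if_neg hh, if_neg hh]
        by_cases h2 : G.tail k = x
        · rw [if_pos h2, if_pos h2]; ring
        · rw [if_neg h2, if_neg h2]; ring
    have h3 : ∑ y ∈ F, ∑ k ∈ Finset.univ.filter (fun k => G.head k = y),
        G.incidence x k * Φ k = ∑ k, G.incidence x k * Φ k :=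
      Finset.sum_fiberwise_of_maps_to
        (fun k _ => Finset.mem_image_of_mem G.head (Finset.mem_univ k)) _
    have h4 : ∀ y ∈ F, ∑ k ∈ Finset.univ.filter (fun k => G.head k = y),
        G.incidence x k * Φ k
        = c y * ((if y = x then (1:ℝ) else 0) - (if p y = x then 1 else 0)) := by
      intro y hy
      rw [hc]
      dsimp only
      rw [Finset.sum_mul]
      refine Finset.sum_congr rfl fun k hk => ?_
      have hk' : G.head k = y := (Finset.mem_filter.mp hk).2
      have htl : G.tail k = p y := by rw [← hk', hpk k]
      rw [h2 k, hk', htl]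
    rw [Finset.sum_congr rfl h4] at h3
    rw [← h3] at h1
    linarith
  -- depth and adjacency data
  have hDdef : ∀ y ∈ F, G.toSimpleGraph.dist r y = G.toSimpleGraph.dist r (p y) + 1 := by
    intro y hy
    obtain ⟨k, -, hk⟩ := Finset.mem_image.mp hy
    rw [← hk, hpk k]
    exact hG.2 k
  have hadj : ∀ y ∈ F, G.toSimpleGraph.Adj (p y) y := by
    intro y hy
    obtain ⟨k, -, hk⟩ := Finset.mem_image.mp hy
    rw [← hk, hpk k]
    exact G.adj_tail_head k
  -- probability facts
  have hμ0 : ∀ x, 0 ≤ sol.f 0 x := (sol.f_prob 0 ⟨le_refl 0, zero_le_one⟩).1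
  have hμ1 : ∀ x, 0 ≤ sol.f 1 x := (sol.f_prob 1 ⟨zero_le_one, le_refl 1⟩).1
  -- the transport coupling
  obtain ⟨π, hcoup, hcost⟩ :=
    exec_coupling (fun a b => ((G.toSimpleGraph.dist a b : ℕ) : ℝ))
      (fun x => by simp [SimpleGraph.dist_self])
      (fun x y => Nat.cast_nonneg _)
      (fun x y => by rw [SimpleGraph.dist_comm])
      (fun x y z => by exact_mod_cast hconn.dist_triangle)
      (G.toSimpleGraph.dist r) p F.card F rfl hDdef c (sol.f 0) hμ0
      (fun x => by rw [← hdecomp x]; exact hμ1 x)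
  have hν_eq : (fun x => sol.f 0 x
      + ∑ y ∈ F, c y * ((if y = x then (1:ℝ) else 0) - (if p y = x then 1 else 0)))
      = sol.f 1 := funext fun x => (hdecomp x).symm
  rw [hν_eq] at hcoup
  -- W1 is at most the cost of this coupling
  have hW1 : W1 G.toSimpleGraph (sol.f 0) (sol.f 1)
      ≤ ∑ x, ∑ z, ((G.toSimpleGraph.dist x z : ℕ) : ℝ) * π x z := by
    apply csInf_le
    · refine ⟨0, fun cst hcst => ?_⟩
      obtain ⟨π', hcoup', rfl⟩ := hcst
      exact Finset.sum_nonneg fun x _ => Finset.sum_nonneg fun z _ =>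
        mul_nonneg (Nat.cast_nonneg _) (hcoup'.1 x z)
    · exact ⟨π, hcoup, rfl⟩
  -- the cost is at most ∑ |Φ k|
  have hcostk : ∑ y ∈ F, |c y| * ((G.toSimpleGraph.dist (p y) y : ℕ) : ℝ) ≤ ∑ k, |Φ k| := by
    have hb : ∀ y ∈ F, |c y| * ((G.toSimpleGraph.dist (p y) y : ℕ) : ℝ)
        ≤ ∑ k ∈ Finset.univ.filter (fun k => G.head k = y), |Φ k| := by
      intro y hy
      have hd1 : G.toSimpleGraph.dist (p y) y = 1 :=
        SimpleGraph.dist_eq_one_iff_adj.mpr (hadj y hy)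
      rw [hd1]
      push_cast
      rw [mul_one, hc]
      exact Finset.abs_sum_le_sum_abs _ _
    calc ∑ y ∈ F, |c y| * ((G.toSimpleGraph.dist (p y) y : ℕ) : ℝ)
        ≤ ∑ y ∈ F, ∑ k ∈ Finset.univ.filter (fun k => G.head k = y), |Φ k| :=
          Finset.sum_le_sum hb
      _ = ∑ k, |Φ k| :=
          Finset.sum_fiberwise_of_maps_to
            (fun k _ => Finset.mem_image_of_mem G.head (Finset.mem_univ k)) _
  have hIq : ∑ k, |Φ k| ≤ Iq q sol.v sol.g :=
    sum_abs_integral_le_Iq hq sol.v sol.g sol.v_cont sol.g_cont sol.g_prob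
  calc W1 G.toSimpleGraph (sol.f 0) (sol.f 1)
      ≤ ∑ x, ∑ z, ((G.toSimpleGraph.dist x z : ℕ) : ℝ) * π x z := hW1
    _ ≤ ∑ y ∈ F, |c y| * ((G.toSimpleGraph.dist (p y) y : ℕ) : ℝ) := hcost
    _ ≤ ∑ k, |Φ k| := hcostk
    _ ≤ Iq q sol.v sol.g := hIq
end

section
/- Let E be a finite set, let q ≥ 1, and fix a vector w : E → ℝ with s := Σ_{k∈E} |w_k| > 0. Among all pairs (v, g) with v : [0,1] → (E → ℝ) continuous and g : [0,1] → (E → ℝ) a continuous path of probability distributions on E satisfying ∫_0^1 v(t)_k g(t)_k dt = w_k for every k ∈ E, the constant pair v(t)_k = sign(w_k) · s, g(t)_k = |w_k| / s minimizes I_q, and its value is I_q(v, g) = s; that is, every admissible pair (v', g') satisfies I_q(v', g') ≥ Σ_{k∈E} |w_k|. -/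
open scoped BigOperators
open Set

/-- the constant pair minimizes `I_q` among pairs with a fixed
time-integrated flow `w`, and its value is `Σ_k |w_k|`. -/
theorem statement8 {E : Type*} [Fintype E] (q : ℝ) (hq : 1 ≤ q)
    (w : E → ℝ) (hw : 0 < ∑ k, |w k|)
    (v g : ℝ → E → ℝ)
    (hv : ∀ t k, v t k = Real.sign (w k) * ∑ j, |w j|)
    (hg : ∀ t k, g t k = |w k| / ∑ j, |w j|) :
    (∀ t : ℝ, IsProbDist (g t)) ∧
    (∀ k, (∫ t in (0:ℝ)..1, v t k * g t k) = w k) ∧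
    Iq q v g = ∑ k, |w k| ∧
    (∀ v' g' : ℝ → E → ℝ,
      ContinuousOn (fun t => v' t) (Icc (0:ℝ) 1) →
      ContinuousOn (fun t => g' t) (Icc (0:ℝ) 1) →
      (∀ t ∈ Icc (0:ℝ) 1, IsProbDist (g' t)) →
      (∀ k, (∫ t in (0:ℝ)..1, v' t k * g' t k) = w k) →
      ∑ k, |w k| ≤ Iq q v' g') := by
  classical
  set s := ∑ k, |w k| with hs
  have hs0 : s ≠ 0 := ne_of_gt hw
  have hq0 : (0:ℝ) < q := lt_of_lt_of_le one_pos hq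
  have hsgnabs : ∀ x : ℝ, Real.sign x * |x| = x := by
    intro x
    rcases lt_trichotomy x 0 with h | h | h
    · rw [Real.sign_of_neg h, abs_of_neg h]; ring
    · simp [h]
    · rw [Real.sign_of_pos h, abs_of_pos h]; ring
  refine ⟨?_, ?_, ?_, ?_⟩
  · intro t
    constructor
    · intro k; rw [hg]; positivity
    · simp only [hg]; rw [← Finset.sum_div, ← hs, div_self hs0]
  · intro k
    have hconst : ∀ t, v t k * g t k = w k := by
      intro t
      rw [hv, hg]
      have hss : s * (|w k| / s) = |w k| := by field_simp
      calc Real.sign (w k) * s * (|w k| / s)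
          = Real.sign (w k) * (s * (|w k| / s)) := by ring
        _ = Real.sign (w k) * |w k| := by rw [hss]
        _ = w k := hsgnabs (w k)
    have hci : (∫ t in (0:ℝ)..1, v t k * g t k) = ∫ t in (0:ℝ)..1, w k :=
      intervalIntegral.integral_congr fun t _ => hconst t
    rw [hci, intervalIntegral.integral_const]
    simp
  · have key : ∀ (t : ℝ) (k : E), g t k * |v t k| ^ q = |w k| / s * s ^ q := by
      intro t k
      rw [hv, hg]
      rcases eq_or_ne (w k) 0 with h | h
      · simp [h, Real.sign_zero]
      · have hsgn : |Real.sign (w k)| = 1 := by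
          rcases h.lt_or_gt with hlt | hgt
          · simp [Real.sign_of_neg hlt]
          · simp [Real.sign_of_pos hgt]
        rw [abs_mul, hsgn, abs_of_pos hw, one_mul]
    have hsum : ∀ t : ℝ, ∑ k, g t k * |v t k| ^ q = s ^ q := by
      intro t
      simp only [key]
      rw [← Finset.sum_mul, ← Finset.sum_div, ← hs, div_self hs0, one_mul]
    rw [Iq]
    simp only [hsum]
    rw [intervalIntegral.integral_const]
    rw [sub_zero, one_smul, ← Real.rpow_mul hw.le, mul_one_div_cancel hq0.ne', Real.rpow_one]
  · intro v' g' hv' hg' hprob hint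
    set μ := MeasureTheory.volume.restrict (Ioc (0:ℝ) 1) with hμ
    haveI : MeasureTheory.IsProbabilityMeasure μ := by
      constructor
      rw [hμ, MeasureTheory.Measure.restrict_apply_univ, Real.volume_Ioc]
      norm_num
    have hvk : ∀ k, ContinuousOn (fun t => v' t k) (Icc (0:ℝ) 1) :=
      fun k => (continuous_apply k).comp_continuousOn hv'
    have hgk : ∀ k, ContinuousOn (fun t => g' t k) (Icc (0:ℝ) 1) :=
      fun k => (continuous_apply k).comp_continuousOn hg'
    set F : ℝ → ℝ := fun t => ∑ k, |v' t k * g' t k| with hF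
    set H : ℝ → ℝ := fun t => ∑ k, g' t k * |v' t k| ^ q with hH
    have hFcont : ContinuousOn F (Icc (0:ℝ) 1) := by
      apply continuousOn_finset_sum
      intro k _
      exact ((hvk k).mul (hgk k)).abs
    have hHcont : ContinuousOn H (Icc (0:ℝ) 1) := by
      apply continuousOn_finset_sum
      intro k _
      exact (hgk k).mul (((hvk k).abs).rpow_const (fun x _ => Or.inr hq0.le))
    have hFqcont : ContinuousOn (fun t => F t ^ q) (Icc (0:ℝ) 1) :=
      hFcont.rpow_const (fun x _ => Or.inr hq0.le)
    have hFint : MeasureTheory.Integrable F μ :=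
      (hFcont.integrableOn_Icc).mono_set Ioc_subset_Icc_self
    have hHint : MeasureTheory.Integrable H μ :=
      (hHcont.integrableOn_Icc).mono_set Ioc_subset_Icc_self
    have hFqint : MeasureTheory.Integrable (fun t => F t ^ q) μ :=
      (hFqcont.integrableOn_Icc).mono_set Ioc_subset_Icc_self
    have hFnonneg : ∀ t, 0 ≤ F t := by
      intro t; exact Finset.sum_nonneg fun k _ => abs_nonneg _
    -- Step A : s ≤ ∫ F
    have hA : s ≤ ∫ t, F t ∂μ := by
      have h1 : ∀ k, |w k| ≤ ∫ t, |v' t k * g' t k| ∂μ := by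
        intro k
        rw [← hint k, intervalIntegral.integral_of_le zero_le_one]
        have h := MeasureTheory.norm_integral_le_integral_norm (μ := μ)
          (fun t => v' t k * g' t k)
        simp only [Real.norm_eq_abs] at h
        exact h
      have h2 : ∀ k, MeasureTheory.Integrable (fun t => |v' t k * g' t k|) μ :=
        fun k => ((((hvk k).mul (hgk k)).abs).integrableOn_Icc).mono_set Ioc_subset_Icc_self
      calc s = ∑ k, |w k| := hs
        _ ≤ ∑ k, ∫ t, |v' t k * g' t k| ∂μ := Finset.sum_le_sum fun k _ => h1 k
        _ = ∫ t, F t ∂μ := (MeasureTheory.integral_finset_sum _ fun k _ => h2 k).symm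
    -- Step B : pointwise Jensen (finite sum)
    have hB : ∀ t ∈ Icc (0:ℝ) 1, F t ^ q ≤ H t := by
      intro t ht
      have hFt : F t = ∑ k, g' t k * |v' t k| := by
        apply Finset.sum_congr rfl
        intro k _
        rw [abs_mul, abs_of_nonneg ((hprob t ht).1 k), mul_comm]
      rw [hFt]
      exact Real.rpow_arith_mean_le_arith_mean_rpow Finset.univ (g' t) (fun k => |v' t k|)
        (fun k _ => (hprob t ht).1 k) (hprob t ht).2 (fun k _ => abs_nonneg _) hq
    -- Step C : Jensen for the integral
    have hC : (∫ t, F t ∂μ) ^ q ≤ ∫ t, F t ^ q ∂μ := by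
      have hconv : ConvexOn ℝ (Ici (0:ℝ)) (fun x : ℝ => x ^ q) := convexOn_rpow hq
      have hcont : ContinuousOn (fun x : ℝ => x ^ q) (Ici (0:ℝ)) :=
        fun x _ => (Real.continuousAt_rpow_const x q (Or.inr hq0.le)).continuousWithinAt
      exact hconv.map_integral_le hcont isClosed_Ici
        (Filter.Eventually.of_forall fun t => hFnonneg t) hFint hFqint
    -- Step D : ∫ F^q ≤ ∫ H
    have hD : ∫ t, F t ^ q ∂μ ≤ ∫ t, H t ∂μ := by
      apply MeasureTheory.integral_mono_ae hFqint hHint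
      rw [hμ]
      exact (MeasureTheory.ae_restrict_mem measurableSet_Ioc).mono
        (fun t ht => hB t (Ioc_subset_Icc_self ht))
    have hsq : s ^ q ≤ ∫ t, H t ∂μ := by
      calc s ^ q ≤ (∫ t, F t ∂μ) ^ q := Real.rpow_le_rpow hw.le hA hq0.le
        _ ≤ ∫ t, F t ^ q ∂μ := hC
        _ ≤ ∫ t, H t ∂μ := hD
    have hfinal : Iq q v' g' = (∫ t, H t ∂μ) ^ (1/q) := by
      rw [Iq, intervalIntegral.integral_of_le zero_le_one, hμ, hH]
    rw [hfinal]
    have : s = (s ^ q) ^ (1/q) := by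
      rw [← Real.rpow_mul hw.le, mul_one_div_cancel hq0.ne', Real.rpow_one]
    rw [this]
    exact Real.rpow_le_rpow (by positivity) hsq (by positivity)
end

section
/- Let G be a finite directed graph whose underlying undirected graph is connected, and let (f, v, g) be a solution of the discrete transport equation with endpoints f0 = f(0), f1 = f(1) such that I_1(v, g) = W1(f0, f1) (the pair achieves the Wasserstein-1 infimum) and |v(t)_k| = W1(f0, f1) for every t ∈ [0,1] and every edge k with g(t)_k > 0 (constant speed). Then the path f is a constant speed W1 geodesic: W1(f(s), f(t)) = |s−t| · W1(f0, f1) for all s, t ∈ [0,1]. -/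
open scoped BigOperators
open Set

section W1Basics
variable {V : Type*} [Fintype V] (T : SimpleGraph V)

def costSet (f0 f1 : V → ℝ) : Set ℝ :=
  {c : ℝ | ∃ π : V → V → ℝ, IsCoupling f0 f1 π ∧
    c = ∑ x, ∑ y, (T.dist x y : ℝ) * π x y}

lemma W1_eq_sInf (f0 f1 : V → ℝ) : W1 T f0 f1 = sInf (costSet T f0 f1) := rfl

lemma costSet_nonneg {f0 f1 : V → ℝ} {c : ℝ} (hc : c ∈ costSet T f0 f1) : 0 ≤ c := by
  obtain ⟨π, hπ, rfl⟩ := hc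
  refine Finset.sum_nonneg fun x _ => Finset.sum_nonneg fun y _ => ?_
  exact mul_nonneg (Nat.cast_nonneg _) (hπ.1 x y)

lemma costSet_bddBelow (f0 f1 : V → ℝ) : BddBelow (costSet T f0 f1) :=
  ⟨0, fun c hc => costSet_nonneg T hc⟩

lemma W1_nonneg (f0 f1 : V → ℝ) : 0 ≤ W1 T f0 f1 :=
  Real.sInf_nonneg fun _ hc => costSet_nonneg T hc

lemma W1_le_cost {f0 f1 : V → ℝ} {π : V → V → ℝ} (hπ : IsCoupling f0 f1 π) :
    W1 T f0 f1 ≤ ∑ x, ∑ y, (T.dist x y : ℝ) * π x y :=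
  csInf_le (costSet_bddBelow T f0 f1) ⟨π, hπ, rfl⟩

lemma isCoupling_prod {f0 f1 : V → ℝ} (h0 : IsProbDist f0) (h1 : IsProbDist f1) :
    IsCoupling f0 f1 (fun x y => f0 x * f1 y) := by
  refine ⟨fun x y => mul_nonneg (h0.1 x) (h1.1 y), fun x => ?_, fun y => ?_⟩
  · rw [← Finset.mul_sum, h1.2, mul_one]
  · rw [← Finset.sum_mul, h0.2, one_mul]

lemma costSet_nonempty {f0 f1 : V → ℝ} (h0 : IsProbDist f0) (h1 : IsProbDist f1) :
    (costSet T f0 f1).Nonempty :=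
  ⟨_, ⟨_, isCoupling_prod h0 h1, rfl⟩⟩

lemma W1_self {f : V → ℝ} (hf : ∀ x, 0 ≤ f x) : W1 T f f = 0 := by
  classical
  refine le_antisymm ?_ (W1_nonneg T f f)
  have hc : IsCoupling f f (fun x y => if x = y then f x else 0) :=
    ⟨fun x y => by dsimp only; split <;> simp [hf x],
     fun x => by simp, fun y => by simp⟩
  refine (W1_le_cost T hc).trans (le_of_eq ?_)
  simp [mul_ite, SimpleGraph.dist_self]

lemma isCoupling_symm {f0 f1 : V → ℝ} {π : V → V → ℝ} (hπ : IsCoupling f0 f1 π) :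
    IsCoupling f1 f0 (fun x y => π y x) :=
  ⟨fun x y => hπ.1 y x, fun x => hπ.2.2 x, fun y => hπ.2.1 y⟩

lemma W1_comm (f0 f1 : V → ℝ) : W1 T f0 f1 = W1 T f1 f0 := by
  have key : ∀ g0 g1 : V → ℝ, costSet T g0 g1 ⊆ costSet T g1 g0 := by
    rintro g0 g1 c ⟨π, hπ, rfl⟩
    refine ⟨fun x y => π y x, isCoupling_symm hπ, ?_⟩
    rw [Finset.sum_comm]
    exact Finset.sum_congr rfl fun x _ => Finset.sum_congr rfl fun y _ => by
      rw [SimpleGraph.dist_comm]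
  rw [W1_eq_sInf, W1_eq_sInf,
    le_antisymm (key f0 f1) (key f1 f0)]

lemma W1_triangle (hconn : T.Connected) {p q r : V → ℝ}
    (hp : IsProbDist p) (hq : IsProbDist q) (hr : IsProbDist r) :
    W1 T p r ≤ W1 T p q + W1 T q r := by
  classical
  have h1 : (costSet T p q).Nonempty := costSet_nonempty T hp hq
  have h2 : (costSet T q r).Nonempty := costSet_nonempty T hq hr
  have key : ∀ c1 ∈ costSet T p q, ∀ c2 ∈ costSet T q r, W1 T p r ≤ c1 + c2 := by
    rintro _ ⟨π1, hπ1, rfl⟩ _ ⟨π2, hπ2, rfl⟩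
    set tm : V → V → V → ℝ :=
      fun x y z => if q y = 0 then 0 else π1 x y * π2 y z / q y with htm
    set π13 : V → V → ℝ := fun x z => ∑ y, tm x y z with hπ13
    have hq0a : ∀ x y, q y = 0 → π1 x y = 0 := by
      intro x y hy
      have hs : ∑ x, π1 x y = 0 := by rw [hπ1.2.2 y, hy]
      exact (Finset.sum_eq_zero_iff_of_nonneg
        (fun i _ => hπ1.1 i y)).1 hs x (Finset.mem_univ x)
    have hq0b : ∀ y z, q y = 0 → π2 y z = 0 := by
      intro y z hy
      have hs : ∑ z, π2 y z = 0 := by rw [hπ2.2.1 y]; exact hy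
      exact (Finset.sum_eq_zero_iff_of_nonneg
        (fun i _ => hπ2.1 y i)).1 hs z (Finset.mem_univ z)
    have term_nonneg : ∀ x y z, 0 ≤ tm x y z := by
      intro x y z
      rw [htm]; dsimp only; split
      · exact le_rfl
      · exact div_nonneg (mul_nonneg (hπ1.1 x y) (hπ2.1 y z)) (hq.1 y)
    have rowy : ∀ x y, ∑ z, tm x y z = π1 x y := by
      intro x y
      by_cases h : q y = 0
      · simp [htm, h, hq0a x y h]
      · rw [htm]; dsimp only; simp only [if_neg h]
        rw [← Finset.sum_div, ← Finset.mul_sum, hπ2.2.1 y, mul_div_assoc,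
          div_self h, mul_one]
    have colx : ∀ y z, ∑ x, tm x y z = π2 y z := by
      intro y z
      by_cases h : q y = 0
      · simp [htm, h, hq0b y z h]
      · rw [htm]; dsimp only; simp only [if_neg h]
        rw [← Finset.sum_div, ← Finset.sum_mul, hπ1.2.2 y, mul_comm,
          mul_div_assoc, div_self h, mul_one]
    have hcoup : IsCoupling p r π13 := by
      refine ⟨fun x z => Finset.sum_nonneg fun y _ => term_nonneg x y z,
        fun x => ?_, fun z => ?_⟩
      · have : ∑ z, π13 x z = ∑ y, π1 x y := by
          rw [hπ13]; dsimp only; rw [Finset.sum_comm]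
          exact Finset.sum_congr rfl fun y _ => rowy x y
        rw [this, hπ1.2.1 x]
      · have : ∑ x, π13 x z = ∑ y, π2 y z := by
          rw [hπ13]; dsimp only; rw [Finset.sum_comm]
          exact Finset.sum_congr rfl fun y _ => colx y z
        rw [this, hπ2.2.2 z]
    have pointwise : ∀ x z, (T.dist x z : ℝ) * π13 x z ≤
        ∑ y, ((T.dist x y : ℝ) + (T.dist y z : ℝ)) * tm x y z := by
      intro x z
      rw [hπ13]; dsimp only; rw [Finset.mul_sum]
      refine Finset.sum_le_sum fun y _ => mul_le_mul_of_nonneg_right ?_ (term_nonneg x y z)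
      have h := hconn.dist_triangle (u := x) (v := y) (w := z)
      exact_mod_cast h
    have e1 : ∑ x, ∑ z, ∑ y, (T.dist x y : ℝ) * tm x y z
        = ∑ x, ∑ y, (T.dist x y : ℝ) * π1 x y := by
      refine Finset.sum_congr rfl fun x _ => ?_
      rw [Finset.sum_comm]
      refine Finset.sum_congr rfl fun y _ => ?_
      rw [← Finset.mul_sum, rowy x y]
    have e2 : ∑ x, ∑ z, ∑ y, (T.dist y z : ℝ) * tm x y z
        = ∑ x, ∑ y, (T.dist x y : ℝ) * π2 x y := by
      rw [Finset.sum_comm]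
      have hz : ∀ z, ∑ x, ∑ y, (T.dist y z : ℝ) * tm x y z
          = ∑ y, (T.dist y z : ℝ) * π2 y z := by
        intro z; rw [Finset.sum_comm]
        refine Finset.sum_congr rfl fun y _ => ?_
        rw [← Finset.mul_sum, colx y z]
      rw [Finset.sum_congr rfl fun z _ => hz z, Finset.sum_comm]
    calc W1 T p r ≤ ∑ x, ∑ z, (T.dist x z : ℝ) * π13 x z := W1_le_cost T hcoup
      _ ≤ ∑ x, ∑ z, ∑ y, ((T.dist x y : ℝ) + (T.dist y z : ℝ)) * tm x y z :=
          Finset.sum_le_sum fun x _ => Finset.sum_le_sum fun z _ => pointwise x z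
      _ = (∑ x, ∑ z, ∑ y, (T.dist x y : ℝ) * tm x y z)
          + (∑ x, ∑ z, ∑ y, (T.dist y z : ℝ) * tm x y z) := by
          simp only [add_mul, Finset.sum_add_distrib]
      _ = (∑ x, ∑ y, (T.dist x y : ℝ) * π1 x y)
          + (∑ x, ∑ y, (T.dist x y : ℝ) * π2 x y) := by rw [e1, e2]
  have step1 : ∀ c1 ∈ costSet T p q, W1 T p r - c1 ≤ sInf (costSet T q r) :=
    fun c1 hc1 => le_csInf h2 (fun c2 hc2 => by linarith [key c1 hc1 c2 hc2])
  have step2 : W1 T p r - sInf (costSet T q r) ≤ sInf (costSet T p q) :=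
    le_csInf h1 (fun c1 hc1 => by linarith [step1 c1 hc1])
  have : W1 T p r ≤ sInf (costSet T p q) + sInf (costSet T q r) := by linarith
  exact this

end W1Basics

section KF
variable {V E : Type*} [Fintype V] [Fintype E] [DecidableEq V]

omit [Fintype V] [Fintype E] in
lemma incidence_eq (G : DiGraph V E) (x : V) (k : E) :
    G.incidence x k = (if G.head k = x then (1:ℝ) else 0) - (if G.tail k = x then 1 else 0) := by
  unfold DiGraph.incidence
  split_ifs with h1 h2
  · exact absurd (h2.trans h1.symm) (G.ne k)
  · norm_num
  · norm_num
  · norm_num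

lemma sum_incidence (G : DiGraph V E) (k : E) : ∑ x, G.incidence x k = 0 := by
  simp [incidence_eq, Finset.sum_sub_distrib]

omit [Fintype V] [Fintype E] in
lemma incidence_pos {G : DiGraph V E} {x : V} {k : E} (h : 0 < G.incidence x k) :
    G.head k = x := by
  unfold DiGraph.incidence at h
  split_ifs at h with h1 h2
  · exact h1
  · norm_num at h
  · norm_num at h

omit [Fintype V] [Fintype E] in
lemma incidence_neg {G : DiGraph V E} {x : V} {k : E} (h : G.incidence x k < 0) :
    G.tail k = x ∧ G.head k ≠ x := by
  unfold DiGraph.incidence at h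
  split_ifs at h with h1 h2
  · norm_num at h
  · exact ⟨h2, h1⟩
  · norm_num at h

set_option maxHeartbeats 1000000 in
lemma keyflow_aux (G : DiGraph V E) (hconn : G.toSimpleGraph.Connected)
    (μ : V → ℝ) (hμ : ∀ x, 0 ≤ μ x) (S : E → ℝ) (ρ : V → ℕ)
    (hρpos : ∀ k, 0 < S k → ρ (G.tail k) < ρ (G.head k))
    (hρneg : ∀ k, S k < 0 → ρ (G.head k) < ρ (G.tail k)) :
    ∀ n : ℕ, ∀ (ν : V → ℝ) (J : E → ℝ),
      (∀ x, 0 ≤ ν x) →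
      (∀ x, ν x - μ x = ∑ k, G.incidence x k * J k) →
      (∀ k, 0 ≤ J k * S k) → (∀ k, J k ≠ 0 → S k ≠ 0) →
      (Finset.univ.filter (fun k => J k ≠ 0)).card * (∑ x, 4 ^ ρ x) +
        (∑ x ∈ Finset.univ.filter (fun x => μ x < ν x), 4 ^ ρ x) ≤ n →
      ∃ π : V → V → ℝ, IsCoupling μ ν π ∧
        ∑ x, ∑ y, (G.toSimpleGraph.dist x y : ℝ) * π x y ≤ ∑ k, |J k| := by
  intro n
  induction n using Nat.strong_induction_on with
  | _ n ih =>
  intro ν J hν hdiv hsgn hSne hm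
  classical
  have hsum0 : ∑ x, (ν x - μ x) = 0 := by
    have h1 : ∑ x, (ν x - μ x) = ∑ x, ∑ k, G.incidence x k * J k :=
      Finset.sum_congr rfl fun x _ => hdiv x
    rw [h1, Finset.sum_comm]
    refine Finset.sum_eq_zero fun k _ => ?_
    rw [← Finset.sum_mul, sum_incidence, zero_mul]
  by_cases hex : ∃ x0, μ x0 < ν x0
  swap
  · -- base case: ν = μ
    push_neg at hex
    have hEq : ∀ x, ν x = μ x := by
      intro x
      have h0 : ∑ x, (μ x - ν x) = 0 := by
        rw [Finset.sum_sub_distrib] at hsum0 ⊢; linarith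
      have := (Finset.sum_eq_zero_iff_of_nonneg
        (fun x _ => sub_nonneg.2 (hex x))).1 h0 x (Finset.mem_univ x)
      linarith
    refine ⟨fun x y => if x = y then μ x else 0, ⟨?_, ?_, ?_⟩, ?_⟩
    · intro x y; dsimp only; split
      · exact hμ x
      · exact le_rfl
    · intro x; simp
    · intro y
      rw [Finset.sum_ite_eq' Finset.univ y (fun x => μ x)]
      simp [hEq y]
    · have hz : ∀ x, ∑ y, (G.toSimpleGraph.dist x y : ℝ) * (if x = y then μ x else 0) = 0 := by
        intro x
        rw [Finset.sum_eq_zero]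
        intro y _
        by_cases h : x = y
        · subst h; simp [SimpleGraph.dist_self]
        · simp [h]
      rw [Finset.sum_eq_zero fun x _ => hz x]
      exact Finset.sum_nonneg fun k _ => abs_nonneg _
  · obtain ⟨x0, hx0⟩ := hex
    have hx0' : 0 < ∑ k, G.incidence x0 k * J k := by rw [← hdiv x0]; linarith
    have hk1ex : ∃ k1, 0 < G.incidence x0 k1 * J k1 := by
      by_contra h; push_neg at h
      exact absurd hx0' (not_lt.2 (Finset.sum_nonpos fun k _ => h k))
    obtain ⟨k1, hk1⟩ := hk1ex
    have hJk1 : J k1 ≠ 0 := by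
      rintro h; rw [h, mul_zero] at hk1; exact lt_irrefl _ hk1
    have hSk1 : S k1 ≠ 0 := hSne k1 hJk1
    set sgn : ℝ := if 0 < J k1 then 1 else -1 with hsgn_def
    set a : V := if 0 < J k1 then G.tail k1 else G.head k1 with ha_def
    set b : V := if 0 < J k1 then G.head k1 else G.tail k1 with hb_def
    have hfacts : b = x0 ∧ a ≠ b ∧ G.toSimpleGraph.Adj a b ∧ (|J k1| = sgn * J k1) ∧
        sgn * sgn = 1 ∧
        (∀ x, G.incidence x k1 * sgn = (if b = x then (1:ℝ) else 0) - (if a = x then 1 else 0)) ∧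
        ρ a < ρ b := by
      rcases lt_or_gt_of_ne hJk1 with hneg | hpos
      · have hs : sgn = -1 := by rw [hsgn_def, if_neg (not_lt.2 hneg.le)]
        have ha : a = G.head k1 := by rw [ha_def, if_neg (not_lt.2 hneg.le)]
        have hbb : b = G.tail k1 := by rw [hb_def, if_neg (not_lt.2 hneg.le)]
        have hincneg : G.incidence x0 k1 < 0 := by
          by_contra hcon; push_neg at hcon
          nlinarith
        obtain ⟨ht, hh⟩ := incidence_neg hincneg
        have hSneg : S k1 < 0 := by
          rcases lt_or_gt_of_ne hSk1 with h | h
          · exact h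
          · exfalso; nlinarith [hsgn k1]
        refine ⟨hbb.trans ht, ?_, ?_, ?_, by rw [hs]; ring, ?_, ?_⟩
        · rw [ha, hbb]; exact (G.ne k1).symm
        · rw [ha, hbb]; exact ⟨(G.ne k1).symm, k1, Or.inr ⟨rfl, rfl⟩⟩
        · rw [hs, abs_of_neg hneg]; ring
        · intro x; rw [hs, ha, hbb, incidence_eq]; ring
        · rw [ha, hbb]; exact hρneg k1 hSneg
      · have hs : sgn = 1 := by rw [hsgn_def, if_pos hpos]
        have ha : a = G.tail k1 := by rw [ha_def, if_pos hpos]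
        have hbb : b = G.head k1 := by rw [hb_def, if_pos hpos]
        have hincpos : 0 < G.incidence x0 k1 := by
          by_contra hcon; push_neg at hcon
          nlinarith
        have hh := incidence_pos hincpos
        have hSpos : 0 < S k1 := by
          rcases lt_or_gt_of_ne hSk1 with h | h
          · exfalso; nlinarith [hsgn k1]
          · exact h
        refine ⟨hbb.trans hh, ?_, ?_, ?_, by rw [hs]; ring, ?_, ?_⟩
        · rw [ha, hbb]; exact G.ne k1
        · rw [ha, hbb]; exact ⟨G.ne k1, k1, Or.inl ⟨rfl, rfl⟩⟩
        · rw [hs, abs_of_pos hpos]; ring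
        · intro x; rw [hs, ha, hbb, incidence_eq]; ring
        · rw [ha, hbb]; exact hρpos k1 hSpos
    obtain ⟨hb, hab, hadj, habs, hsgn2, hinc, hρab⟩ := hfacts
    have hbx : μ b < ν b := by rw [hb]; exact hx0
    set ε : ℝ := min (|J k1|) (ν b - μ b) with hε_def
    have hεpos : 0 < ε := lt_min (abs_pos.2 hJk1) (by linarith)
    have hεle : ε ≤ |J k1| := min_le_left _ _
    have hεle2 : ε ≤ ν b - μ b := min_le_right _ _
    set ν' : V → ℝ := fun x => ν x + (if a = x then ε else 0) - (if b = x then ε else 0)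
      with hν'_def
    set J' : E → ℝ := fun k => J k - (if k = k1 then sgn * ε else 0) with hJ'_def
    have hν'a : ν' a = ν a + ε := by
      simp [hν'_def, hab.symm]
    have hν'b : ν' b = ν b - ε := by
      simp [hν'_def, hab]
    have hν'other : ∀ x, a ≠ x → b ≠ x → ν' x = ν x := by
      intro x h1 h2; simp only [hν'_def, if_neg h1, if_neg h2]; ring
    have hν' : ∀ x, 0 ≤ ν' x := by
      intro x
      by_cases h2 : b = x
      · rw [← h2, hν'b]; have := hμ b; linarith
      by_cases h1 : a = x
      · rw [← h1, hν'a]; have := hν a; linarith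
      · rw [hν'other x h1 h2]; exact hν x
    have hJ'k1 : J' k1 = J k1 - sgn * ε := by simp [hJ'_def]
    have hJ'other : ∀ k, k ≠ k1 → J' k = J k := by
      intro k h; simp [hJ'_def, h]
    have habs_shift : ∀ ε' : ℝ, 0 ≤ ε' → ε' ≤ |J k1| → |J k1 - sgn * ε'| = |J k1| - ε' := by
      intro ε' h0 h1
      rcases lt_or_gt_of_ne hJk1 with hneg | hpos
      · have hs : sgn = -1 := by rw [hsgn_def, if_neg (not_lt.2 hneg.le)]
        rw [abs_of_neg hneg] at h1 ⊢
        rw [hs, show J k1 - -1 * ε' = J k1 + ε' by ring, abs_of_nonpos (by linarith)]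
        ring
      · have hs : sgn = 1 := by rw [hsgn_def, if_pos hpos]
        rw [abs_of_pos hpos] at h1 ⊢
        rw [hs, show J k1 - 1 * ε' = J k1 - ε' by ring, abs_of_nonneg (by linarith)]
    have hdiv' : ∀ x, ν' x - μ x = ∑ k, G.incidence x k * J' k := by
      intro x
      have hsplit : ∑ k, G.incidence x k * J' k
          = (∑ k, G.incidence x k * J k) - G.incidence x k1 * (sgn * ε) := by
        simp only [hJ'_def, mul_sub, Finset.sum_sub_distrib, mul_ite, mul_zero]
        rw [Finset.sum_ite_eq' Finset.univ k1 (fun k => G.incidence x k * (sgn * ε))]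
        simp
      have h2 : G.incidence x k1 * (sgn * ε)
          = ((if b = x then (1:ℝ) else 0) - (if a = x then 1 else 0)) * ε := by
        rw [← hinc x]; ring
      rw [hsplit, ← hdiv x, h2]
      simp only [hν'_def]
      split_ifs <;> ring
    have hsgn' : ∀ k, 0 ≤ J' k * S k := by
      intro k
      by_cases hk : k = k1
      · subst hk
        rw [hJ'k1]
        rcases lt_or_gt_of_ne hJk1 with hneg | hpos
        · have hs : sgn = -1 := by rw [hsgn_def, if_neg (not_lt.2 hneg.le)]
          have hSneg : S k ≤ 0 := by nlinarith [hsgn k]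
          rw [abs_of_neg hneg] at hεle
          rw [hs]
          nlinarith
        · have hs : sgn = 1 := by rw [hsgn_def, if_pos hpos]
          have hSpos : 0 ≤ S k := by nlinarith [hsgn k]
          rw [abs_of_pos hpos] at hεle
          rw [hs]
          nlinarith
      · rw [hJ'other k hk]; exact hsgn k
    have hSne' : ∀ k, J' k ≠ 0 → S k ≠ 0 := by
      intro k hk
      by_cases h : k = k1
      · subst h; exact hSk1
      · exact hSne k (by rwa [hJ'other k h] at hk)
    have hJ'sum : ∑ k, |J' k| = (∑ k, |J k|) - ε := by
      have : ∀ k, |J' k| = |J k| - (if k = k1 then ε else 0) := by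
        intro k
        by_cases h : k = k1
        · subst h; rw [hJ'k1, if_pos rfl, habs_shift ε hεpos.le hεle]
        · rw [hJ'other k h, if_neg h, sub_zero]
      rw [Finset.sum_congr rfl fun k _ => this k, Finset.sum_sub_distrib]
      congr 1
      rw [Finset.sum_ite_eq' Finset.univ k1 (fun _ => ε)]
      simp
    -- recursive call
    have hrec : ∃ π' : V → V → ℝ, IsCoupling μ ν' π' ∧
        ∑ x, ∑ y, (G.toSimpleGraph.dist x y : ℝ) * π' x y ≤ ∑ k, |J' k| := by
      have hM'le : (∑ x ∈ Finset.univ.filter (fun x => μ x < ν' x), 4 ^ ρ x)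
          ≤ ∑ x, 4 ^ ρ x :=
        Finset.sum_le_sum_of_subset (Finset.subset_univ _)
      have hbF : b ∈ Finset.univ.filter (fun x => μ x < ν x) := by
        simp [hbx]
      have hMpos : 1 ≤ ∑ x ∈ Finset.univ.filter (fun x => μ x < ν x), 4 ^ ρ x := by
        calc 1 ≤ 4 ^ ρ b := Nat.one_le_pow _ _ (by norm_num)
          _ ≤ _ := Finset.single_le_sum (f := fun x => 4 ^ ρ x) (fun i _ => Nat.zero_le _) hbF
      have hdec : (Finset.univ.filter (fun k => J' k ≠ 0)).card * (∑ x, 4 ^ ρ x) +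
          (∑ x ∈ Finset.univ.filter (fun x => μ x < ν' x), 4 ^ ρ x) <
          (Finset.univ.filter (fun k => J k ≠ 0)).card * (∑ x, 4 ^ ρ x) +
          (∑ x ∈ Finset.univ.filter (fun x => μ x < ν x), 4 ^ ρ x) := by
        rcases le_or_gt (|J k1|) (ν b - μ b) with hA | hB2
        · -- flow-limited: the support shrinks
          have hεeq : ε = |J k1| := min_eq_left hA
          have hJ'k1_0 : J' k1 = 0 := by
            rw [hJ'k1, hεeq, habs]
            rw [show sgn * (sgn * J k1) = (sgn * sgn) * J k1 by ring, hsgn2]; ring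
          have hsub : (Finset.univ.filter (fun k => J' k ≠ 0)) ⊆
              (Finset.univ.filter (fun k => J k ≠ 0)).erase k1 := by
            intro k hk
            simp only [Finset.mem_filter, Finset.mem_univ, true_and] at hk
            have hkne : k ≠ k1 := by rintro rfl; exact hk hJ'k1_0
            rw [Finset.mem_erase]
            refine ⟨hkne, ?_⟩
            simp only [Finset.mem_filter, Finset.mem_univ, true_and]
            rwa [← hJ'other k hkne]
          have hk1mem : k1 ∈ Finset.univ.filter (fun k => J k ≠ 0) := by
            simp [hJk1]
          have hcard : (Finset.univ.filter (fun k => J' k ≠ 0)).card <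
              (Finset.univ.filter (fun k => J k ≠ 0)).card :=
            lt_of_le_of_lt (Finset.card_le_card hsub) (Finset.card_erase_lt_of_mem hk1mem)
          calc (Finset.univ.filter (fun k => J' k ≠ 0)).card * (∑ x, 4 ^ ρ x) +
              (∑ x ∈ Finset.univ.filter (fun x => μ x < ν' x), 4 ^ ρ x)
              ≤ (Finset.univ.filter (fun k => J' k ≠ 0)).card * (∑ x, 4 ^ ρ x) +
                (∑ x, 4 ^ ρ x) := by omega
            _ = ((Finset.univ.filter (fun k => J' k ≠ 0)).card + 1) * (∑ x, 4 ^ ρ x) := by ring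
            _ ≤ (Finset.univ.filter (fun k => J k ≠ 0)).card * (∑ x, 4 ^ ρ x) :=
                Nat.mul_le_mul_right _ hcard
            _ < _ := by omega
        · -- discrepancy-limited: the support is unchanged, M decreases
          have hεeq : ε = ν b - μ b := min_eq_right hB2.le
          have hεlt : ε < |J k1| := by rw [hεeq]; exact hB2
          have hJ'k1ne : J' k1 ≠ 0 := by
            intro h
            have := habs_shift ε hεpos.le hεle
            rw [← hJ'k1, h, abs_zero] at this
            linarith
          have hspe : (Finset.univ.filter (fun k => J' k ≠ 0)) =
              (Finset.univ.filter (fun k => J k ≠ 0)) := by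
            ext k
            simp only [Finset.mem_filter, Finset.mem_univ, true_and]
            by_cases h : k = k1
            · subst h; simp [hJ'k1ne, hJk1]
            · rw [hJ'other k h]
          have hFsub : (Finset.univ.filter (fun x => μ x < ν' x)) ⊆
              insert a ((Finset.univ.filter (fun x => μ x < ν x)).erase b) := by
            intro x hx
            simp only [Finset.mem_filter, Finset.mem_univ, true_and] at hx
            have hxb : b ≠ x := by
              rintro rfl
              rw [hν'b, hεeq] at hx
              linarith
            by_cases hxa : a = x
            · rw [← hxa]; exact Finset.mem_insert_self _ _
            · refine Finset.mem_insert_of_mem ?_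
              rw [Finset.mem_erase]
              refine ⟨fun h => hxb h.symm, ?_⟩
              simp only [Finset.mem_filter, Finset.mem_univ, true_and]
              rwa [hν'other x hxa hxb] at hx
          have h1 : (∑ x ∈ Finset.univ.filter (fun x => μ x < ν' x), 4 ^ ρ x)
              ≤ ∑ x ∈ insert a ((Finset.univ.filter (fun x => μ x < ν x)).erase b), 4 ^ ρ x :=
            Finset.sum_le_sum_of_subset hFsub
          have h2 : (∑ x ∈ insert a ((Finset.univ.filter (fun x => μ x < ν x)).erase b), 4 ^ ρ x)
              ≤ 4 ^ ρ a + ∑ x ∈ (Finset.univ.filter (fun x => μ x < ν x)).erase b, 4 ^ ρ x := by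
            by_cases hmem : a ∈ (Finset.univ.filter (fun x => μ x < ν x)).erase b
            · rw [Finset.insert_eq_self.2 hmem]; exact Nat.le_add_left _ _
            · rw [Finset.sum_insert hmem]
          have h3 : 4 ^ ρ a < 4 ^ ρ b := Nat.pow_lt_pow_right (by norm_num) hρab
          have h4 : 4 ^ ρ b + ∑ x ∈ (Finset.univ.filter (fun x => μ x < ν x)).erase b, 4 ^ ρ x
              = ∑ x ∈ Finset.univ.filter (fun x => μ x < ν x), 4 ^ ρ x :=
            Finset.add_sum_erase _ (fun x => 4 ^ ρ x) hbF
          rw [hspe]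
          omega
      exact ih _ (lt_of_lt_of_le hdec hm) ν' J' hν' hdiv' hsgn' hSne' le_rfl
    obtain ⟨π', hc', hcost'⟩ := hrec
    have hν'a_pos : 0 < ν' a := by rw [hν'a]; have := hν a; linarith
    set w : V → ℝ := fun x => ε * π' x a / ν' a with hw_def
    have hwsum : ∑ x, w x = ε := by
      simp only [hw_def]
      rw [← Finset.sum_div, ← Finset.mul_sum, hc'.2.2 a, mul_div_assoc,
        div_self hν'a_pos.ne', mul_one]
    have hw_nonneg : ∀ x, 0 ≤ w x :=
      fun x => div_nonneg (mul_nonneg hεpos.le (hc'.1 x a)) hν'a_pos.le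
    have hw_le : ∀ x, w x ≤ π' x a := by
      intro x
      have hεν : ε ≤ ν' a := by rw [hν'a]; linarith [hν a]
      have h0 := hc'.1 x a
      simp only [hw_def]
      rw [div_le_iff₀ hν'a_pos]
      nlinarith
    set πf : V → V → ℝ :=
      fun x y => π' x y + (if b = y then w x else 0) - (if a = y then w x else 0) with hπf_def
    have hπf_nonneg : ∀ x y, 0 ≤ πf x y := by
      intro x y
      simp only [hπf_def]
      by_cases hby : b = y
      · rw [if_pos hby, if_neg (fun h => hab (h.trans hby.symm))]
        have := hc'.1 x y; have := hw_nonneg x; linarith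
      by_cases hay : a = y
      · subst hay
        rw [if_neg hby, if_pos rfl]
        have := hw_le x; linarith
      · rw [if_neg hby, if_neg hay]
        have := hc'.1 x y; linarith
    have hπf_row : ∀ x, ∑ y, πf x y = μ x := by
      intro x
      simp only [hπf_def]
      rw [Finset.sum_sub_distrib, Finset.sum_add_distrib, hc'.2.1 x,
        Finset.sum_ite_eq Finset.univ b (fun _ => w x),
        Finset.sum_ite_eq Finset.univ a (fun _ => w x)]
      simp
    have hπf_col : ∀ y, ∑ x, πf x y = ν y := by
      intro y
      have hsum : ∑ x, πf x y = ν' y + (if b = y then ε else 0) - (if a = y then ε else 0) := by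
        simp only [hπf_def]
        rw [Finset.sum_sub_distrib, Finset.sum_add_distrib, hc'.2.2 y]
        congr 1
        · congr 1
          by_cases hby : b = y
          · simp only [if_pos hby, hwsum]
          · simp only [if_neg hby, Finset.sum_const_zero]
        · by_cases hay : a = y
          · simp only [if_pos hay, hwsum]
          · simp only [if_neg hay, Finset.sum_const_zero]
      rw [hsum]
      by_cases hby : b = y
      · rw [← hby, if_pos rfl, if_neg hab, hν'b]; ring
      by_cases hay : a = y
      · rw [← hay, if_neg (fun h => hab h.symm), if_pos rfl, hν'a]; ring
      · rw [if_neg hby, if_neg hay, hν'other y hay hby]; ring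
    have hcost_row : ∀ x, ∑ y, (G.toSimpleGraph.dist x y : ℝ) * πf x y
        = (∑ y, (G.toSimpleGraph.dist x y : ℝ) * π' x y)
          + ((G.toSimpleGraph.dist x b : ℝ) * w x - (G.toSimpleGraph.dist x a : ℝ) * w x) := by
      intro x
      simp only [hπf_def, mul_add, mul_sub, Finset.sum_add_distrib, Finset.sum_sub_distrib,
        mul_ite, mul_zero]
      rw [Finset.sum_ite_eq Finset.univ b (fun y => (G.toSimpleGraph.dist x y : ℝ) * w x),
        Finset.sum_ite_eq Finset.univ a (fun y => (G.toSimpleGraph.dist x y : ℝ) * w x)]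
      simp
      ring
    have hd1 : G.toSimpleGraph.dist a b = 1 := SimpleGraph.dist_eq_one_iff_adj.2 hadj
    refine ⟨πf, ⟨hπf_nonneg, hπf_row, hπf_col⟩, ?_⟩
    have hstep : ∑ x, ∑ y, (G.toSimpleGraph.dist x y : ℝ) * πf x y
        = (∑ x, ∑ y, (G.toSimpleGraph.dist x y : ℝ) * π' x y)
          + ∑ x, ((G.toSimpleGraph.dist x b : ℝ) * w x
              - (G.toSimpleGraph.dist x a : ℝ) * w x) := by
      rw [Finset.sum_congr rfl fun x _ => hcost_row x, Finset.sum_add_distrib]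
    rw [hstep]
    have hb2 : ∑ x, ((G.toSimpleGraph.dist x b : ℝ) * w x
        - (G.toSimpleGraph.dist x a : ℝ) * w x) ≤ ∑ x, w x := by
      refine Finset.sum_le_sum fun x _ => ?_
      have h1 : G.toSimpleGraph.dist x b ≤ G.toSimpleGraph.dist x a + 1 := by
        have h := hconn.dist_triangle (u := x) (v := a) (w := b)
        rw [hd1] at h; exact h
      have h2 : (G.toSimpleGraph.dist x b : ℝ) ≤ (G.toSimpleGraph.dist x a : ℝ) + 1 := by
        exact_mod_cast h1
      have h3 := hw_nonneg x
      nlinarith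
    rw [hJ'sum] at hcost'
    rw [hwsum] at hb2
    linarith

set_option maxHeartbeats 1000000 in
lemma keyflow (G : DiGraph V E) (hconn : G.toSimpleGraph.Connected)
    (μ ν : V → ℝ) (hμ : ∀ x, 0 ≤ μ x) (hν : ∀ x, 0 ≤ ν x)
    (J : E → ℝ) (hdiv : ∀ x, ν x - μ x = ∑ k, G.incidence x k * J k) :
    ∃ π : V → V → ℝ, IsCoupling μ ν π ∧
      ∑ x, ∑ y, (G.toSimpleGraph.dist x y : ℝ) * π x y ≤ ∑ k, |J k| := by
  classical
  -- a flow of minimal total mass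
  set C : Set (E → ℝ) := {J' | (∀ x, ν x - μ x = ∑ k, G.incidence x k * J' k) ∧
      ∑ k, |J' k| ≤ ∑ k, |J k|} with hC
  have hJC : J ∈ C := ⟨hdiv, le_rfl⟩
  have hcont : Continuous (fun J' : E → ℝ => ∑ k, |J' k|) :=
    continuous_finset_sum _ fun k _ => (continuous_apply k).abs
  have hclosed : IsClosed C := by
    rw [hC, Set.setOf_and]
    refine IsClosed.inter ?_ (isClosed_le hcont continuous_const)
    rw [Set.setOf_forall]
    refine isClosed_iInter fun x => ?_
    exact isClosed_eq continuous_const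
      (continuous_finset_sum _ fun k _ => continuous_const.mul (continuous_apply k))
  have hRnn : (0:ℝ) ≤ ∑ k, |J k| := Finset.sum_nonneg fun k _ => abs_nonneg _
  have hbdd : Bornology.IsBounded C := by
    refine (Metric.isBounded_closedBall (x := (0 : E → ℝ)) (r := ∑ k, |J k|)).subset ?_
    intro J' hJ'
    rw [Metric.mem_closedBall, dist_zero_right]
    rw [pi_norm_le_iff_of_nonneg hRnn]
    intro k
    calc ‖J' k‖ = |J' k| := rfl
      _ ≤ ∑ k, |J' k| := Finset.single_le_sum (f := fun i => |J' i|) (fun i _ => abs_nonneg _) (Finset.mem_univ k)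
      _ ≤ ∑ k, |J k| := hJ'.2
  obtain ⟨K, hKC, hKmin⟩ := (Metric.isCompact_of_isClosed_isBounded hclosed hbdd).exists_isMinOn
    ⟨J, hJC⟩ hcont.continuousOn
  -- the flow digraph of K
  set D : V → V → Prop := fun u w => ∃ k, K k ≠ 0 ∧
      ((0 < K k ∧ G.tail k = u ∧ G.head k = w) ∨
       (K k < 0 ∧ G.head k = u ∧ G.tail k = w)) with hD
  have step_flow : ∀ u w, D u w → ∃ c : E → ℕ,
      (∀ k, c k ≠ 0 → K k ≠ 0) ∧
      (∀ x, ∑ k, G.incidence x k * ((if 0 < K k then (1:ℝ) else -1) * c k)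
          = (if w = x then 1 else 0) - (if u = x then 1 else 0)) ∧
      0 < ∑ k, c k := by
    rintro u w ⟨k, hKk, hk⟩
    refine ⟨fun k' => if k' = k then 1 else 0, ?_, ?_, ?_⟩
    · intro k' hk'
      by_cases h : k' = k
      · subst h; exact hKk
      · simp [h] at hk'
    · intro x
      have hterm : ∀ k', G.incidence x k' *
          ((if 0 < K k' then (1:ℝ) else -1) * ((if k' = k then 1 else 0 : ℕ) : ℝ))
          = if k' = k then G.incidence x k' * (if 0 < K k' then (1:ℝ) else -1) else 0 := by
        intro k'
        by_cases h : k' = k <;> simp [h]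
      rw [Finset.sum_congr rfl fun k' _ => hterm k']
      rw [Finset.sum_ite_eq' Finset.univ k
        (fun k' => G.incidence x k' * (if 0 < K k' then (1:ℝ) else -1))]
      simp only [Finset.mem_univ, if_true]
      rcases hk with ⟨hpos, htl, hhd⟩ | ⟨hneg, hhd, htl⟩
      · rw [if_pos hpos, incidence_eq, htl, hhd]; ring
      · rw [if_neg (not_lt.2 hneg.le), incidence_eq, hhd, htl]; ring
    · have hle : 1 ≤ ∑ k', if k' = k then (1:ℕ) else 0 := by
        rw [Finset.sum_ite_eq' Finset.univ k (fun _ => (1:ℕ))]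
        simp
      exact hle
  have circ : ∀ u w, Relation.TransGen D u w → ∃ c : E → ℕ,
      (∀ k, c k ≠ 0 → K k ≠ 0) ∧
      (∀ x, ∑ k, G.incidence x k * ((if 0 < K k then (1:ℝ) else -1) * c k)
          = (if w = x then 1 else 0) - (if u = x then 1 else 0)) ∧
      0 < ∑ k, c k := by
    intro u w h
    induction h with
    | single hstep => exact step_flow _ _ hstep
    | tail hmid hstep ihc =>
      obtain ⟨c1, hc1a, hc1b, hc1c⟩ := ihc
      obtain ⟨c2, hc2a, hc2b, hc2c⟩ := step_flow _ _ hstep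
      refine ⟨fun k => c1 k + c2 k, ?_, ?_, ?_⟩
      · intro k hk
        have hk' : c1 k + c2 k ≠ 0 := hk
        by_cases h1 : c1 k = 0
        · exact hc2a k (by omega)
        · exact hc1a k h1
      · intro x
        have hsplit : ∀ k, G.incidence x k *
            ((if 0 < K k then (1:ℝ) else -1) * ((c1 k + c2 k : ℕ) : ℝ))
            = G.incidence x k * ((if 0 < K k then (1:ℝ) else -1) * c1 k)
              + G.incidence x k * ((if 0 < K k then (1:ℝ) else -1) * c2 k) := by
          intro k; push_cast; ring
        rw [Finset.sum_congr rfl fun k _ => hsplit k, Finset.sum_add_distrib,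
          hc1b x, hc2b x]
        ring
      · show 0 < ∑ k, (c1 k + c2 k)
        rw [Finset.sum_add_distrib]
        omega
  have hirr : ∀ u, ¬ Relation.TransGen D u u := by
    intro u hcyc
    obtain ⟨c, hca, hcb, hcc⟩ := circ u u hcyc
    have hT0ne : (Finset.univ.filter (fun k => c k ≠ 0)).Nonempty := by
      obtain ⟨k, _, hk⟩ := Finset.exists_ne_zero_of_sum_ne_zero
        (s := (Finset.univ : Finset E)) (f := fun k => c k) hcc.ne'
      exact ⟨k, by simp [hk]⟩
    set t : ℝ := (Finset.univ.filter (fun k => c k ≠ 0)).inf' hT0ne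
      (fun k => |K k| / c k) with ht
    have htpos : 0 < t := by
      rw [ht, Finset.lt_inf'_iff]
      intro k hk
      have hk' : c k ≠ 0 := by simpa using (Finset.mem_filter.1 hk).2
      exact div_pos (abs_pos.2 (hca k hk'))
        (by exact_mod_cast Nat.pos_of_ne_zero hk')
    have htle : ∀ k, c k ≠ 0 → t * c k ≤ |K k| := by
      intro k hk
      have hmem : k ∈ Finset.univ.filter (fun k => c k ≠ 0) := by simp [hk]
      have h1 : t ≤ |K k| / c k := Finset.inf'_le _ hmem
      have hc : (0:ℝ) < c k := by exact_mod_cast Nat.pos_of_ne_zero hk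
      rw [le_div_iff₀ hc] at h1
      exact h1
    set K' : E → ℝ := fun k => K k - t * ((if 0 < K k then (1:ℝ) else -1) * c k) with hK'
    have hdivK' : ∀ x, ν x - μ x = ∑ k, G.incidence x k * K' k := by
      intro x
      have hstep : ∑ k, G.incidence x k * K' k
          = (∑ k, G.incidence x k * K k)
            - t * ∑ k, G.incidence x k * ((if 0 < K k then (1:ℝ) else -1) * c k) := by
        rw [Finset.mul_sum, ← Finset.sum_sub_distrib]
        refine Finset.sum_congr rfl fun k _ => ?_
        simp only [hK']; ring
      rw [hstep, hcb x, ← hKC.1 x]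
      ring
    have habsK' : ∀ k, |K' k| = |K k| - t * c k := by
      intro k
      by_cases hk : c k = 0
      · simp [hK', hk]
      · have h1 := htle k hk
        have hKk := hca k hk
        rcases lt_or_gt_of_ne hKk with hneg | hpos
        · rw [abs_of_neg hneg] at h1
          simp only [hK', if_neg (not_lt.2 hneg.le)]
          rw [show K k - t * (-1 * c k) = K k + t * c k by ring,
            abs_of_nonpos (by linarith), abs_of_neg hneg]
          ring
        · rw [abs_of_pos hpos] at h1
          simp only [hK', if_pos hpos]
          rw [show K k - t * (1 * c k) = K k - t * c k by ring,
            abs_of_nonneg (by linarith), abs_of_pos hpos]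
    have hsumlt : ∑ k, |K' k| < ∑ k, |K k| := by
      rw [Finset.sum_congr rfl fun k _ => habsK' k, Finset.sum_sub_distrib]
      have hpos2 : 0 < t * ∑ k, (c k : ℝ) := by
        refine mul_pos htpos ?_
        exact_mod_cast hcc
      rw [Finset.mul_sum] at hpos2
      linarith
    have hK'C : K' ∈ C := ⟨hdivK', by linarith [hKC.2]⟩
    have := isMinOn_iff.1 hKmin K' hK'C
    linarith
  -- the rank function
  set P : V → Set V := fun x => {y | Relation.TransGen D y x} with hP
  set ρ : V → ℕ := fun x => (P x).ncard with hρ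
  have hρmono : ∀ u w, D u w → ρ u < ρ w := by
    intro u w h
    have hsub : P u ⊆ P w := fun z hz => Relation.TransGen.tail hz h
    have hssub : P u ⊂ P w :=
      ⟨hsub, fun hback => hirr u (hback (Relation.TransGen.single h))⟩
    exact Set.ncard_lt_ncard hssub (Set.toFinite _)
  have hρpos : ∀ k, 0 < K k → ρ (G.tail k) < ρ (G.head k) := by
    intro k hk
    exact hρmono _ _ ⟨k, hk.ne', Or.inl ⟨hk, rfl, rfl⟩⟩
  have hρneg : ∀ k, K k < 0 → ρ (G.head k) < ρ (G.tail k) := by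
    intro k hk
    exact hρmono _ _ ⟨k, hk.ne, Or.inr ⟨hk, rfl, rfl⟩⟩
  obtain ⟨π, hπ, hcost⟩ := keyflow_aux G hconn μ hμ K ρ hρpos hρneg
    ((Finset.univ.filter (fun k => K k ≠ 0)).card * (∑ x, 4 ^ ρ x) +
      (∑ x ∈ Finset.univ.filter (fun x => μ x < ν x), 4 ^ ρ x))
    ν K hν hKC.1 (fun k => mul_self_nonneg _) (fun k hk => hk) le_rfl
  exact ⟨π, hπ, hcost.trans hKC.2⟩

end KF


section Analysis
variable {V E : Type*} [Fintype V] [Fintype E] [DecidableEq V] {G : DiGraph V E}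

lemma vg_contOn (sol : TransportSolution G) (k : E) :
    ContinuousOn (fun u => sol.v u k * sol.g u k) (Icc (0:ℝ) 1) :=
  ((continuous_apply k).comp_continuousOn sol.v_cont).mul
    ((continuous_apply k).comp_continuousOn sol.g_cont)

lemma speed_const (sol : TransportSolution G)
    (hconst : ∀ t ∈ Icc (0:ℝ) 1, ∀ k : E, 0 < sol.g t k →
      |sol.v t k| = W1 G.toSimpleGraph (sol.f 0) (sol.f 1)) :
    ∀ u ∈ Icc (0:ℝ) 1, ∑ k, sol.g u k * |sol.v u k|
      = W1 G.toSimpleGraph (sol.f 0) (sol.f 1) := by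
  intro u hu
  have hg := sol.g_prob u hu
  calc ∑ k, sol.g u k * |sol.v u k|
      = ∑ k, sol.g u k * W1 G.toSimpleGraph (sol.f 0) (sol.f 1) := by
        refine Finset.sum_congr rfl fun k _ => ?_
        rcases (hg.1 k).eq_or_lt with h | h
        · rw [← h, zero_mul, zero_mul]
        · rw [hconst u hu k h]
    _ = W1 G.toSimpleGraph (sol.f 0) (sol.f 1) := by
        rw [← Finset.sum_mul, hg.2, one_mul]

lemma ftc_transport (sol : TransportSolution G) {s t : ℝ}
    (hs : s ∈ Icc (0:ℝ) 1) (ht : t ∈ Icc (0:ℝ) 1) (hst : s ≤ t) (x : V) :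
    sol.f t x - sol.f s x
      = ∑ k, G.incidence x k * ∫ u in s..t, sol.v u k * sol.g u k := by
  have hsub : Icc s t ⊆ Icc (0:ℝ) 1 := Icc_subset_Icc hs.1 ht.2
  have hcont : ContinuousOn (fun u => sol.f u x) (Icc s t) := fun u hu =>
    ((sol.transport x u (hsub hu)).continuousWithinAt).mono hsub
  have hderiv : ∀ u ∈ Ioo s t, HasDerivWithinAt (fun u => sol.f u x)
      (∑ k, G.incidence x k * (sol.v u k * sol.g u k)) (Ioi u) u := by
    intro u hu
    have hu' : u ∈ Icc (0:ℝ) 1 := hsub (Ioo_subset_Icc_self hu)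
    have h := sol.transport x u hu'
    have heq : (∑ k, G.incidence x k * sol.v u k * sol.g u k)
        = ∑ k, G.incidence x k * (sol.v u k * sol.g u k) :=
      Finset.sum_congr rfl fun k _ => mul_assoc _ _ _
    rw [heq] at h
    refine h.mono_of_mem_nhdsWithin ?_
    exact Icc_mem_nhdsGT_of_mem ⟨hs.1.trans hu.1.le, lt_of_lt_of_le hu.2 ht.2⟩
  have hintg : ∀ k : E, IntervalIntegrable (fun u => sol.v u k * sol.g u k)
      MeasureTheory.volume s t := by
    intro k
    apply ContinuousOn.intervalIntegrable
    rw [uIcc_of_le hst]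
    exact (vg_contOn sol k).mono hsub
  have hint : IntervalIntegrable
      (fun u => ∑ k, G.incidence x k * (sol.v u k * sol.g u k))
      MeasureTheory.volume s t := by
    apply ContinuousOn.intervalIntegrable
    rw [uIcc_of_le hst]
    refine continuousOn_finset_sum _ fun k _ => ?_
    exact continuousOn_const.mul ((vg_contOn sol k).mono hsub)
  have h := intervalIntegral.integral_eq_sub_of_hasDeriv_right_of_le hst hcont hderiv hint
  rw [← h, intervalIntegral.integral_finset_sum
    (fun k _ => (hintg k).const_mul (G.incidence x k))]
  exact Finset.sum_congr rfl fun k _ => intervalIntegral.integral_const_mul _ _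

lemma flux_bound (sol : TransportSolution G)
    (hconst : ∀ t ∈ Icc (0:ℝ) 1, ∀ k : E, 0 < sol.g t k →
      |sol.v t k| = W1 G.toSimpleGraph (sol.f 0) (sol.f 1))
    {s t : ℝ} (hs : s ∈ Icc (0:ℝ) 1) (ht : t ∈ Icc (0:ℝ) 1) (hst : s ≤ t) :
    ∑ k, |∫ u in s..t, sol.v u k * sol.g u k|
      ≤ (t - s) * W1 G.toSimpleGraph (sol.f 0) (sol.f 1) := by
  have hsub : Icc s t ⊆ Icc (0:ℝ) 1 := Icc_subset_Icc hs.1 ht.2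
  have hintg : ∀ k : E, IntervalIntegrable (fun u => |sol.v u k * sol.g u k|)
      MeasureTheory.volume s t := by
    intro k
    apply ContinuousOn.intervalIntegrable
    rw [uIcc_of_le hst]
    exact ((vg_contOn sol k).mono hsub).abs
  calc ∑ k, |∫ u in s..t, sol.v u k * sol.g u k|
      ≤ ∑ k, ∫ u in s..t, |sol.v u k * sol.g u k| :=
        Finset.sum_le_sum fun k _ =>
          intervalIntegral.abs_integral_le_integral_abs hst
    _ = ∫ u in s..t, ∑ k, |sol.v u k * sol.g u k| :=
        (intervalIntegral.integral_finset_sum (fun k _ => hintg k)).symm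
    _ = ∫ u in s..t, (W1 G.toSimpleGraph (sol.f 0) (sol.f 1)) := by
        refine intervalIntegral.integral_congr ?_
        intro u hu
        rw [uIcc_of_le hst] at hu
        have hu' : u ∈ Icc (0:ℝ) 1 := hsub hu
        have hg := sol.g_prob u hu'
        have heq : ∀ k : E, |sol.v u k * sol.g u k| = sol.g u k * |sol.v u k| := by
          intro k
          rw [abs_mul, abs_of_nonneg (hg.1 k), mul_comm]
        show ∑ k, |sol.v u k * sol.g u k| = W1 G.toSimpleGraph (sol.f 0) (sol.f 1)
        rw [Finset.sum_congr rfl fun k _ => heq k]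
        exact speed_const sol hconst u hu'
    _ = (t - s) * W1 G.toSimpleGraph (sol.f 0) (sol.f 1) := by
        rw [intervalIntegral.integral_const, smul_eq_mul]

lemma W1_upper (hconn : G.toSimpleGraph.Connected) (sol : TransportSolution G)
    (hconst : ∀ t ∈ Icc (0:ℝ) 1, ∀ k : E, 0 < sol.g t k →
      |sol.v t k| = W1 G.toSimpleGraph (sol.f 0) (sol.f 1))
    {s t : ℝ} (hs : s ∈ Icc (0:ℝ) 1) (ht : t ∈ Icc (0:ℝ) 1) (hst : s ≤ t) :
    W1 G.toSimpleGraph (sol.f s) (sol.f t)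
      ≤ (t - s) * W1 G.toSimpleGraph (sol.f 0) (sol.f 1) := by
  obtain ⟨π, hπ, hπcost⟩ := keyflow G hconn (sol.f s) (sol.f t)
    ((sol.f_prob s hs).1) ((sol.f_prob t ht).1)
    (fun k => ∫ u in s..t, sol.v u k * sol.g u k)
    (fun x => ftc_transport sol hs ht hst x)
  exact (W1_le_cost _ hπ).trans (hπcost.trans (flux_bound sol hconst hs ht hst))

end Analysis

/-- a minimising constant speed solution induces a constant speed
`W1` geodesic. -/
theorem statement11 {V E : Type*} [Fintype V] [Fintype E] [DecidableEq V]
    (G : DiGraph V E) (hconn : G.toSimpleGraph.Connected)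
    (sol : TransportSolution G)
    (hmin : Iq 1 sol.v sol.g = W1 G.toSimpleGraph (sol.f 0) (sol.f 1))
    (hconst : ∀ t ∈ Icc (0:ℝ) 1, ∀ k : E, 0 < sol.g t k →
      |sol.v t k| = W1 G.toSimpleGraph (sol.f 0) (sol.f 1)) :
    ∀ s ∈ Icc (0:ℝ) 1, ∀ t ∈ Icc (0:ℝ) 1,
      W1 G.toSimpleGraph (sol.f s) (sol.f t) =
        |s - t| * W1 G.toSimpleGraph (sol.f 0) (sol.f 1) := by
  intro s hs t ht
  have main : ∀ s ∈ Icc (0:ℝ) 1, ∀ t ∈ Icc (0:ℝ) 1, s ≤ t →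
      W1 G.toSimpleGraph (sol.f s) (sol.f t)
        = (t - s) * W1 G.toSimpleGraph (sol.f 0) (sol.f 1) := by
    intro s hs t ht hst
    have h01 : (0:ℝ) ∈ Icc (0:ℝ) 1 := by norm_num
    have h11 : (1:ℝ) ∈ Icc (0:ℝ) 1 := by norm_num
    have hup := W1_upper hconn sol hconst hs ht hst
    have h0s := W1_upper hconn sol hconst h01 hs hs.1
    have ht1 := W1_upper hconn sol hconst ht h11 ht.2
    have tri1 : W1 G.toSimpleGraph (sol.f 0) (sol.f 1)
        ≤ W1 G.toSimpleGraph (sol.f 0) (sol.f s) + W1 G.toSimpleGraph (sol.f s) (sol.f 1) :=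
      W1_triangle _ hconn (sol.f_prob 0 h01) (sol.f_prob s hs) (sol.f_prob 1 h11)
    have tri2 : W1 G.toSimpleGraph (sol.f s) (sol.f 1)
        ≤ W1 G.toSimpleGraph (sol.f s) (sol.f t) + W1 G.toSimpleGraph (sol.f t) (sol.f 1) :=
      W1_triangle _ hconn (sol.f_prob s hs) (sol.f_prob t ht) (sol.f_prob 1 h11)
    linarith
  rcases le_total s t with h | h
  · rw [main s hs t ht h, abs_of_nonpos (by linarith : s - t ≤ 0)]
    ring_nf
  · rw [W1_comm, main t ht s hs h, abs_of_nonneg (by linarith : 0 ≤ s - t)]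
end
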